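/- arXiv:1702.05342 — 2 statements merged into one kernel-verified Lean document; each statement's English description precedes it below -/
import Mathlib

section
/- Let S be a finite set with operations · : S×S→S, τ,τ* : S→S, κ from nonempty subsets of S to S, let (T,γ) be an evaluation tree with respect to the extended map π₀^ over a nonempty countable word u : α → S, and let I be a nonempty convex subset of α. Then there exists γ_I : T|_I → S such that (T|_I, γ_I) is an evaluation tree with respect to π₀^ over the factor u|_I and γ_I(J) = γ(J) for every J ∈ T with J ⊆ I, where T|_I = {I ∩ J : J ∈ T, I ∩ J ≠ ∅}. -/
section Trees

variable {α : Type}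

/-- `I < J` pointwise, for subsets of a linear order. -/
def SetLT [LinearOrder α] (I J : Set α) : Prop := ∀ x ∈ I, ∀ y ∈ J, x < y

/-- `I` is a convex subset of the suborder induced on `R`. -/
def ConvexIn [LinearOrder α] (R I : Set α) : Prop :=
  ∀ x ∈ I, ∀ y ∈ I, ∀ z ∈ R, x < z → z < y → z ∈ I

/-- `T` is a condensation tree over the suborder induced on `R`:
a set of nonempty convex subsets of `R` containing the root `R`, pairwise
comparable-or-disjoint, such that the union of the members properly contained
in a given member is that member or empty, and all chains are finite. -/
structure IsCondTreeOn [LinearOrder α] (R : Set α) (T : Set (Set α)) : Prop where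
  root_mem : R ∈ T
  mem_subset : ∀ I ∈ T, I ⊆ R
  mem_nonempty : ∀ I ∈ T, I.Nonempty
  mem_convex : ∀ I ∈ T, ConvexIn R I
  comparable_or_disjoint : ∀ I ∈ T, ∀ J ∈ T, I ⊆ J ∨ J ⊆ I ∨ I ∩ J = ∅
  children_union : ∀ I ∈ T,
    ⋃₀ {J | J ∈ T ∧ J ⊂ I} = I ∨ ⋃₀ {J | J ∈ T ∧ J ⊂ I} = ∅
  chains_finite : ∀ C ⊆ T, IsChain (· ⊆ ·) C → C.Finite

/-- A leaf of `T`: a member minimal with respect to inclusion. -/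
def IsLeafOf (T : Set (Set α)) (I : Set α) : Prop :=
  I ∈ T ∧ ∀ J ∈ T, J ⊆ I → J = I

/-- `J` is a child of `I` in `T`: a maximal member of `T` properly contained in `I`. -/
def IsChildOf (T : Set (Set α)) (J I : Set α) : Prop :=
  J ∈ T ∧ J ⊂ I ∧ ∀ K ∈ T, J ⊂ K → I ⊆ K

end Trees
/-- The restriction to `D` of the labelled family `lab`, with positions ordered by the
strict ordering `r`, is an η-shuffle of the set of letters `P`: `D` is countable,
nonempty, without endpoints, every letter of `P` (and no other letter) occurs on
a dense subset of `D`. -/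
def IsEtaFamilyOn {S ι : Type} (r : ι → ι → Prop) (lab : ι → S) (D : Set ι)
    (P : Set S) : Prop :=
  D.Nonempty ∧ D.Countable ∧
  (∀ x ∈ D, ∃ y ∈ D, r x y) ∧ (∀ x ∈ D, ∃ y ∈ D, r y x) ∧
  (∀ x ∈ D, lab x ∈ P) ∧
  (∀ a ∈ P, ∀ x ∈ D, ∀ y ∈ D, r x y → ∃ z ∈ D, r x z ∧ r z y ∧ lab z = a) ∧
  (∀ a ∈ P, ∃ x ∈ D, lab x = a)
/-- The extended partial map `π₀^`, as a relation: the word given by the positions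
`ι` (ordered by the strict ordering `r`) with labels `lab` is in the domain of
`π₀^` with value `v`.  The clauses correspond to finite nonempty words
`a₁ ⋯ aₙ`, words `a b^ω`, words `b^{ω*} a`, and words `a P^η b` where either or
both of the end letters `a`, `b` may be absent. -/
def Pi0HatRel {S : Type} (mul : S → S → S) (tau taustar : S → S) (kappa : Set S → S)
    {ι : Type} (r : ι → ι → Prop) (lab : ι → S) (v : S) : Prop :=
  (∃ (n : ℕ) (g : Fin (n + 1) → ι),
      (∀ i j : Fin (n + 1), i < j → r (g i) (g j)) ∧ (∀ x : ι, ∃ i, g i = x) ∧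
      v = List.foldl mul (lab (g 0)) (List.ofFn fun i : Fin n => lab (g i.succ))) ∨
  (∃ g : ℕ → ι, (∀ m n : ℕ, m < n → r (g m) (g n)) ∧ (∀ x : ι, ∃ n, g n = x) ∧
      ∃ b : S, (∀ n : ℕ, 0 < n → lab (g n) = b) ∧ v = mul (lab (g 0)) (tau b)) ∨
  (∃ g : ℕ → ι, (∀ m n : ℕ, m < n → r (g n) (g m)) ∧ (∀ x : ι, ∃ n, g n = x) ∧
      ∃ b : S, (∀ n : ℕ, 0 < n → lab (g n) = b) ∧ v = mul (taustar b) (lab (g 0))) ∨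
  (∃ P : Set S, P.Nonempty ∧
    ((IsEtaFamilyOn r lab Set.univ P ∧ v = kappa P) ∨
     (∃ x₀ : ι, (∀ y : ι, y ≠ x₀ → r x₀ y) ∧ IsEtaFamilyOn r lab {y | y ≠ x₀} P ∧
        v = mul (lab x₀) (kappa P)) ∨
     (∃ x₁ : ι, (∀ y : ι, y ≠ x₁ → r y x₁) ∧ IsEtaFamilyOn r lab {y | y ≠ x₁} P ∧
        v = mul (kappa P) (lab x₁)) ∨
     (∃ x₀ x₁ : ι, x₀ ≠ x₁ ∧ (∀ y : ι, y ≠ x₀ → r x₀ y) ∧ (∀ y : ι, y ≠ x₁ → r y x₁) ∧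
        IsEtaFamilyOn r lab {y | y ≠ x₀ ∧ y ≠ x₁} P ∧
        v = mul (mul (lab x₀) (kappa P)) (lab x₁))))
/-- `(T, γ)` is an evaluation tree with respect to the extended map `π₀^` over
the word `u` restricted to the root `R`. -/
structure IsEvalTreeHat {S α : Type} [LinearOrder α] (mul : S → S → S)
    (tau taustar : S → S) (kappa : Set S → S) (u : α → S)
    (R : Set α) (T : Set (Set α)) (γ : Set α → S) : Prop where
  tree : IsCondTreeOn R T
  leaf_spec : ∀ I : Set α, IsLeafOf T I → ∃ x : α, I = {x} ∧ γ I = u x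
  node_spec : ∀ I ∈ T, ¬ IsLeafOf T I →
    Pi0HatRel mul tau taustar kappa
      (fun J K : {J : Set α // IsChildOf T J I} => SetLT J.1 K.1)
      (fun J : {J : Set α // IsChildOf T J I} => γ J.1) (γ I)
/-- The restriction `T|_I = {I ∩ J : J ∈ T, I ∩ J ≠ ∅}` of a condensation tree
to a convex subset `I`. -/
def restrictTree {α : Type} (T : Set (Set α)) (I : Set α) : Set (Set α) :=
  {K | ∃ J ∈ T, K = I ∩ J ∧ (I ∩ J).Nonempty}

namespace RestrictAux

open Classical in
/-- transfer of eta families along an equivalence -/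
theorem eta_transfer {S ι ι' : Type} {r : ι → ι → Prop} {r' : ι' → ι' → Prop}
    (e : ι ≃ ι') (hr : ∀ a b, r a b ↔ r' (e a) (e b))
    {lab : ι → S} {lab' : ι' → S} (hlab : ∀ a, lab a = lab' (e a))
    {D : Set ι} {P : Set S} (hD : IsEtaFamilyOn r lab D P) :
    IsEtaFamilyOn r' lab' (e '' D) P := by
  obtain ⟨h1, h2, h3, h4, h5, h6, h7⟩ := hD
  refine ⟨h1.image e, h2.image e, ?_, ?_, ?_, ?_, ?_⟩
  · rintro x ⟨a, ha, rfl⟩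
    obtain ⟨y, hy, hxy⟩ := h3 a ha
    exact ⟨e y, ⟨y, hy, rfl⟩, (hr a y).1 hxy⟩
  · rintro x ⟨a, ha, rfl⟩
    obtain ⟨y, hy, hxy⟩ := h4 a ha
    exact ⟨e y, ⟨y, hy, rfl⟩, (hr y a).1 hxy⟩
  · rintro x ⟨a, ha, rfl⟩; rw [← hlab]; exact h5 a ha
  · rintro s hs x ⟨a, ha, rfl⟩ y ⟨b, hb, rfl⟩ hxy
    obtain ⟨z, hz, h₁, h₂, h₃⟩ := h6 s hs a ha b hb ((hr a b).2 hxy)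
    exact ⟨e z, ⟨z, hz, rfl⟩, (hr a z).1 h₁, (hr z b).1 h₂, by rw [← hlab]; exact h₃⟩
  · intro s hs
    obtain ⟨x, hx, hl⟩ := h7 s hs
    exact ⟨e x, ⟨x, hx, rfl⟩, by rw [← hlab]; exact hl⟩

/-- transfer of Pi0HatRel along an equivalence -/
theorem pi0_transfer {S ι ι' : Type} (mul : S → S → S) (tau taustar : S → S)
    (kappa : Set S → S) {r : ι → ι → Prop} {r' : ι' → ι' → Prop}
    (e : ι ≃ ι') (hr : ∀ a b, r a b ↔ r' (e a) (e b))
    {lab : ι → S} {lab' : ι' → S} (hlab : ∀ a, lab a = lab' (e a)) {v : S}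
    (h : Pi0HatRel mul tau taustar kappa r lab v) :
    Pi0HatRel mul tau taustar kappa r' lab' v := by
  have himg : ∀ x₀ : ι, e '' {y | y ≠ x₀} = {y | y ≠ e x₀} := by
    intro x₀; ext y; constructor
    · rintro ⟨a, ha, rfl⟩; exact fun hh => ha (e.injective hh)
    · intro hy; exact ⟨e.symm y, fun hh => hy (by rw [← hh, e.apply_symm_apply]), e.apply_symm_apply y⟩
  have himg2 : ∀ x₀ x₁ : ι, e '' {y | y ≠ x₀ ∧ y ≠ x₁} = {y | y ≠ e x₀ ∧ y ≠ e x₁} := by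
    intro x₀ x₁; ext y; constructor
    · rintro ⟨a, ⟨h1, h2⟩, rfl⟩
      exact ⟨fun hh => h1 (e.injective hh), fun hh => h2 (e.injective hh)⟩
    · rintro ⟨h1, h2⟩
      refine ⟨e.symm y, ⟨?_, ?_⟩, e.apply_symm_apply y⟩
      · intro hh; exact h1 (by rw [← hh, e.apply_symm_apply])
      · intro hh; exact h2 (by rw [← hh, e.apply_symm_apply])
  have huniv : e '' (Set.univ : Set ι) = Set.univ := by
    ext y; simp [e.surjective.range_eq]
  rcases h with ⟨n, g, hg1, hg2, hg3⟩ | ⟨g, hg1, hg2, b, hb, hv⟩ | ⟨g, hg1, hg2, b, hb, hv⟩ |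
    ⟨P, hP, hcase⟩
  · refine Or.inl ⟨n, e ∘ g, fun i j hij => (hr _ _).1 (hg1 i j hij),
      fun x => (hg2 (e.symm x)).imp (fun i hi => by simp [Function.comp, hi]), ?_⟩
    simpa only [Function.comp, ← hlab] using hg3
  · refine Or.inr (Or.inl ⟨e ∘ g, fun m n hmn => (hr _ _).1 (hg1 m n hmn),
      fun x => (hg2 (e.symm x)).imp (fun i hi => by simp [Function.comp, hi]), b,
      fun n hn => by simp only [Function.comp, ← hlab]; exact hb n hn, ?_⟩)
    simpa only [Function.comp, ← hlab] using hv
  · refine Or.inr (Or.inr (Or.inl ⟨e ∘ g, fun m n hmn => (hr _ _).1 (hg1 m n hmn),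
      fun x => (hg2 (e.symm x)).imp (fun i hi => by simp [Function.comp, hi]), b,
      fun n hn => by simp only [Function.comp, ← hlab]; exact hb n hn, ?_⟩))
    simpa only [Function.comp, ← hlab] using hv
  · refine Or.inr (Or.inr (Or.inr ⟨P, hP, ?_⟩))
    rcases hcase with ⟨hfam, hv⟩ | ⟨x₀, hx₀, hfam, hv⟩ | ⟨x₁, hx₁, hfam, hv⟩ |
      ⟨x₀, x₁, hne, hx₀, hx₁, hfam, hv⟩
    · exact Or.inl ⟨huniv ▸ eta_transfer e hr hlab hfam, hv⟩
    · refine Or.inr (Or.inl ⟨e x₀, ?_, himg x₀ ▸ eta_transfer e hr hlab hfam, by rw [← hlab]; exact hv⟩)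
      intro y hy
      have := hx₀ (e.symm y) (fun hh => hy (by rw [← hh, e.apply_symm_apply]))
      have h2 := (hr x₀ (e.symm y)).1 this
      rwa [e.apply_symm_apply] at h2
    · refine Or.inr (Or.inr (Or.inl ⟨e x₁, ?_, himg x₁ ▸ eta_transfer e hr hlab hfam, by rw [← hlab]; exact hv⟩))
      intro y hy
      have := hx₁ (e.symm y) (fun hh => hy (by rw [← hh, e.apply_symm_apply]))
      have h2 := (hr (e.symm y) x₁).1 this
      rwa [e.apply_symm_apply] at h2
    · refine Or.inr (Or.inr (Or.inr ⟨e x₀, e x₁, fun hh => hne (e.injective hh), ?_, ?_,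
        himg2 x₀ x₁ ▸ eta_transfer e hr hlab hfam, by rw [← hlab, ← hlab]; exact hv⟩))
      · intro y hy
        have := hx₀ (e.symm y) (fun hh => hy (by rw [← hh, e.apply_symm_apply]))
        have h2 := (hr x₀ (e.symm y)).1 this
        rwa [e.apply_symm_apply] at h2
      · intro y hy
        have := hx₁ (e.symm y) (fun hh => hy (by rw [← hh, e.apply_symm_apply]))
        have h2 := (hr (e.symm y) x₁).1 this
        rwa [e.apply_symm_apply] at h2

end RestrictAux
namespace RestrictAux

theorem sto_subtype {ι : Type} (r : ι → ι → Prop) [IsStrictTotalOrder ι r] (M : Set ι) :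
    IsStrictTotalOrder ↥M (fun a b : ↥M => r a.1 b.1) where
  trichotomous a b := by
    intro hab hba
    rcases trichotomous_of r a.1 b.1 with h | h | h
    · exact absurd h hab
    · exact Subtype.ext h
    · exact absurd h hba
  irrefl a := irrefl_of r a.1
  trans a b c := trans_of r

theorem finite_case {S ι : Type} (mul : S → S → S) (tau taustar : S → S)
    (kappa : Set S → S) (r : ι → ι → Prop) [IsStrictTotalOrder ι r]
    [Finite ι] [Nonempty ι] (lab : ι → S) :
    ∃ v, Pi0HatRel mul tau taustar kappa r lab v := by
  classical
  letI : LinearOrder ι := linearOrderOfSTO r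
  letI : Fintype ι := Fintype.ofFinite ι
  have hc : 0 < Fintype.card ι := Fintype.card_pos
  obtain ⟨n, hn⟩ : ∃ n, Fintype.card ι = n + 1 :=
    ⟨Fintype.card ι - 1, (Nat.succ_pred_eq_of_pos hc).symm⟩
  set g := monoEquivOfFin ι hn with hg
  refine ⟨_, Or.inl ⟨n, g, ?_, fun x => ⟨g.symm x, g.apply_symm_apply x⟩, rfl⟩⟩
  intro i j hij
  exact g.strictMono hij

theorem eta_case {S ι : Type} (mul : S → S → S) (tau taustar : S → S)
    (kappa : Set S → S) (r : ι → ι → Prop) [IsStrictTotalOrder ι r]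
    {lab lab' : ι → S} {M : Set ι} (hMinf : M.Infinite)
    (hMconv : ∀ x ∈ M, ∀ y ∈ M, ∀ z : ι, r x z → r z y → z ∈ M)
    (hmid : ∀ z ∈ M, (∃ x ∈ M, r x z) → (∃ y ∈ M, r z y) → lab' z = lab z)
    {D : Set ι} {P : Set S} (hP : P.Nonempty) (hfam : IsEtaFamilyOn r lab D P)
    (hcompl : ∀ x, x ∉ D → (∀ y, y ≠ x → r x y) ∨ (∀ y, y ≠ x → r y x)) :
    ∃ v', Pi0HatRel mul tau taustar kappa (fun a b : ↥M => r a.1 b.1)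
      (fun a : ↥M => lab' a.1) v' := by
  classical
  obtain ⟨hD1, hD2, hD3, hD4, hD5, hD6, hD7⟩ := hfam
  have asym : ∀ {a b : ι}, r a b → ¬ r b a := fun hab hba => irrefl_of r _ (trans_of r hab hba)
  have rne : ∀ {a b : ι}, r a b → a ≠ b := fun hab he => irrefl_of r _ (he ▸ hab)
  have tri : ∀ x y : ↥M, x ≠ y → r x.1 y.1 ∨ r y.1 x.1 := by
    intro x y hxy
    rcases trichotomous_of r x.1 y.1 with h | h | h
    · exact Or.inl h
    · exact absurd (Subtype.ext h) hxy
    · exact Or.inr h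
  set Core : Set ↥M := {z : ↥M | (∃ x : ↥M, r x.1 z.1) ∧ (∃ y : ↥M, r z.1 y.1)} with hCore
  have hCoreD : ∀ z ∈ Core, z.1 ∈ D := by
    intro z hz
    by_contra hzD
    obtain ⟨⟨x, hx⟩, ⟨y, hy⟩⟩ := hz
    rcases hcompl z.1 hzD with hc | hc
    · exact asym hx (hc x.1 (rne hx))
    · exact asym hy (hc y.1 (rne hy).symm)
  have hCoreLab : ∀ z ∈ Core, lab' z.1 = lab z.1 := by
    intro z hz
    exact hmid z.1 z.2 ⟨hz.1.choose.1, hz.1.choose.2, hz.1.choose_spec⟩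
      ⟨hz.2.choose.1, hz.2.choose.2, hz.2.choose_spec⟩
  -- three distinct elements of M give a Core element
  have hCoreNe : Core.Nonempty := by
    obtain ⟨a, ha⟩ := hMinf.nonempty
    obtain ⟨b, hb, hab⟩ : ∃ b ∈ M, b ≠ a := by
      obtain ⟨b, hb⟩ := (hMinf.diff (Set.finite_singleton a)).nonempty
      exact ⟨b, hb.1, by simpa using hb.2⟩
    obtain ⟨c, hc, hca, hcb⟩ : ∃ c ∈ M, c ≠ a ∧ c ≠ b := by
      obtain ⟨c, hc⟩ := (hMinf.diff ((Set.finite_singleton a).insert b)).nonempty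
      refine ⟨c, hc.1, ?_, ?_⟩ <;> (have := hc.2; simp at this; tauto)
    set A : ↥M := ⟨a, ha⟩; set B : ↥M := ⟨b, hb⟩; set C : ↥M := ⟨c, hc⟩
    have hAB : A ≠ B := fun h => hab (congrArg Subtype.val h).symm
    have hBC : B ≠ C := fun h => hcb (congrArg Subtype.val h).symm
    have hAC : A ≠ C := fun h => hca (congrArg Subtype.val h).symm
    rcases tri A B hAB with h1 | h1 <;> rcases tri B C hBC with h2 | h2 <;>
      rcases tri A C hAC with h3 | h3
    · exact ⟨B, ⟨A, h1⟩, ⟨C, h2⟩⟩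
    · exact ⟨B, ⟨A, h1⟩, ⟨C, h2⟩⟩
    · exact ⟨C, ⟨A, h3⟩, ⟨B, h2⟩⟩
    · exact ⟨A, ⟨C, h3⟩, ⟨B, h1⟩⟩
    · exact ⟨A, ⟨B, h1⟩, ⟨C, h3⟩⟩
    · exact ⟨C, ⟨B, h2⟩, ⟨A, h3⟩⟩
    · exact ⟨A, ⟨B, h1⟩, ⟨C, h3⟩⟩
    · exact ⟨B, ⟨C, h2⟩, ⟨A, h1⟩⟩
  have hCoreNoMax : ∀ z ∈ Core, ∃ y ∈ Core, r z.1 y.1 := by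
    intro z hz
    obtain ⟨w, hw⟩ := hz.2
    have hzD := hCoreD z hz
    by_cases hwD : w.1 ∈ D
    · obtain ⟨p, hp⟩ := hP
      obtain ⟨d, hdD, hd1, hd2, _⟩ := hD6 p hp z.1 hzD w.1 hwD hw
      have hdM : d ∈ M := hMconv z.1 z.2 w.1 w.2 d hd1 hd2
      exact ⟨⟨d, hdM⟩, ⟨⟨z, hd1⟩, ⟨w, hd2⟩⟩, hd1⟩
    · have hwmax : ∀ y, y ≠ w.1 → r y w.1 := by
        rcases hcompl w.1 hwD with hc | hc
        · exact absurd hw (asym (hc z.1 (Ne.symm (rne hw)).symm))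
        · exact hc
      obtain ⟨d, hdD, hd1⟩ := hD3 z.1 hzD
      have hdw : r d w.1 := hwmax d (fun h => hwD (h ▸ hdD))
      have hdM : d ∈ M := hMconv z.1 z.2 w.1 w.2 d hd1 hdw
      exact ⟨⟨d, hdM⟩, ⟨⟨z, hd1⟩, ⟨w, hdw⟩⟩, hd1⟩
  have hCoreNoMin : ∀ z ∈ Core, ∃ y ∈ Core, r y.1 z.1 := by
    intro z hz
    obtain ⟨w, hw⟩ := hz.1
    have hzD := hCoreD z hz
    by_cases hwD : w.1 ∈ D
    · obtain ⟨p, hp⟩ := hP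
      obtain ⟨d, hdD, hd1, hd2, _⟩ := hD6 p hp w.1 hwD z.1 hzD hw
      have hdM : d ∈ M := hMconv w.1 w.2 z.1 z.2 d hd1 hd2
      exact ⟨⟨d, hdM⟩, ⟨⟨w, hd1⟩, ⟨z, hd2⟩⟩, hd2⟩
    · have hwmin : ∀ y, y ≠ w.1 → r w.1 y := by
        rcases hcompl w.1 hwD with hc | hc
        · exact hc
        · exact absurd hw (asym (hc z.1 (Ne.symm (rne hw))))
      obtain ⟨d, hdD, hd1⟩ := hD4 z.1 hzD
      have hdw : r w.1 d := hwmin d (fun h => hwD (h ▸ hdD))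
      have hdM : d ∈ M := hMconv w.1 w.2 z.1 z.2 d hdw hd1
      exact ⟨⟨d, hdM⟩, ⟨⟨w, hdw⟩, ⟨z, hd1⟩⟩, hd1⟩
  have hCoreDense : ∀ a ∈ P, ∀ x ∈ Core, ∀ y ∈ Core, r x.1 y.1 →
      ∃ z ∈ Core, r x.1 z.1 ∧ r z.1 y.1 ∧ lab' z.1 = a := by
    intro a ha x hx y hy hxy
    obtain ⟨d, hdD, hd1, hd2, hd3⟩ := hD6 a ha x.1 (hCoreD x hx) y.1 (hCoreD y hy) hxy
    have hdM : d ∈ M := hMconv x.1 x.2 y.1 y.2 d hd1 hd2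
    have hdCore : (⟨d, hdM⟩ : ↥M) ∈ Core := ⟨⟨x, hd1⟩, ⟨y, hd2⟩⟩
    refine ⟨⟨d, hdM⟩, hdCore, hd1, hd2, ?_⟩
    rw [hCoreLab _ hdCore]; exact hd3
  have hCoreP : ∀ z ∈ Core, lab' z.1 ∈ P := by
    intro z hz; rw [hCoreLab z hz]; exact hD5 z.1 (hCoreD z hz)
  have hCoreOcc : ∀ a ∈ P, ∃ z ∈ Core, lab' z.1 = a := by
    intro a ha
    obtain ⟨z, hz⟩ := hCoreNe
    obtain ⟨y, hy, hzy⟩ := hCoreNoMax z hz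
    obtain ⟨d, hd, _, _, hlab⟩ := hCoreDense a ha z hz y hy hzy
    exact ⟨d, hd, hlab⟩
  have hCoreCount : Core.Countable := by
    have h1 : (Subtype.val ⁻¹' D : Set ↥M).Countable :=
      hD2.preimage Subtype.val_injective
    exact h1.mono (fun z hz => hCoreD z hz)
  have hCoreFam : IsEtaFamilyOn (fun a b : ↥M => r a.1 b.1) (fun a : ↥M => lab' a.1) Core P :=
    ⟨hCoreNe, hCoreCount, hCoreNoMax, hCoreNoMin, hCoreP, hCoreDense, hCoreOcc⟩
  by_cases hmin : ∃ m : ↥M, ∀ z : ↥M, z ≠ m → r m.1 z.1 <;>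
    by_cases hmax : ∃ m : ↥M, ∀ z : ↥M, z ≠ m → r z.1 m.1
  · -- both endpoints
    obtain ⟨m, hm⟩ := hmin
    obtain ⟨m', hm'⟩ := hmax
    have hmm' : m ≠ m' := by
      intro he
      subst he
      have hsub : ∀ z : ↥M, z = m := by
        intro z
        by_contra hz
        exact asym (hm z hz) (hm' z hz)
      have : M ⊆ {m.1} := fun x hx => by
        have := hsub ⟨x, hx⟩; simpa using congrArg Subtype.val this
      exact hMinf (Set.Finite.subset (Set.finite_singleton _) this)
    have hset : {y : ↥M | y ≠ m ∧ y ≠ m'} = Core := by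
      ext z
      constructor
      · rintro ⟨h1, h2⟩; exact ⟨⟨m, hm z h1⟩, ⟨m', hm' z h2⟩⟩
      · rintro ⟨⟨x, hx⟩, ⟨y, hy⟩⟩
        constructor
        · rintro rfl
          have hxz : x ≠ z := fun h => irrefl_of r _ (h ▸ hx)
          exact asym hx (hm x hxz)
        · rintro rfl
          have hyz : y ≠ z := fun h => irrefl_of r _ (h ▸ hy)
          exact asym hy (hm' y hyz)
    refine ⟨_, Or.inr (Or.inr (Or.inr ⟨P, hP, Or.inr (Or.inr (Or.inr
      ⟨m, m', hmm', hm, hm', ?_, rfl⟩))⟩))⟩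
    rw [hset]; exact hCoreFam
  · -- min only
    obtain ⟨m, hm⟩ := hmin
    have hnomax : ∀ z : ↥M, ∃ y : ↥M, r z.1 y.1 := by
      intro z
      by_contra hz
      push_neg at hz
      refine hmax ⟨z, fun y hy => ?_⟩
      rcases tri y z hy with h | h
      · exact h
      · exact absurd h (hz y)
    have hset : {y : ↥M | y ≠ m} = Core := by
      ext z
      constructor
      · intro h1; exact ⟨⟨m, hm z h1⟩, hnomax z⟩
      · rintro ⟨⟨x, hx⟩, -⟩
        rintro rfl
        have hxz : x ≠ z := fun h => irrefl_of r _ (h ▸ hx)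
        exact asym hx (hm x hxz)
    refine ⟨_, Or.inr (Or.inr (Or.inr ⟨P, hP, Or.inr (Or.inl ⟨m, hm, ?_, rfl⟩)⟩))⟩
    rw [hset]; exact hCoreFam
  · -- max only
    obtain ⟨m', hm'⟩ := hmax
    have hnomin : ∀ z : ↥M, ∃ y : ↥M, r y.1 z.1 := by
      intro z
      by_contra hz
      push_neg at hz
      refine hmin ⟨z, fun y hy => ?_⟩
      rcases tri z y (Ne.symm hy) with h | h
      · exact h
      · exact absurd h (hz y)
    have hset : {y : ↥M | y ≠ m'} = Core := by
      ext z
      constructor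
      · intro h1; exact ⟨hnomin z, ⟨m', hm' z h1⟩⟩
      · rintro ⟨-, ⟨y, hy⟩⟩
        rintro rfl
        have hyz : y ≠ z := fun h => irrefl_of r _ (h ▸ hy)
        exact asym hy (hm' y hyz)
    refine ⟨_, Or.inr (Or.inr (Or.inr ⟨P, hP, Or.inr (Or.inr (Or.inl ⟨m', hm', ?_, rfl⟩))⟩))⟩
    rw [hset]; exact hCoreFam
  · -- no endpoints
    have hnomax : ∀ z : ↥M, ∃ y : ↥M, r z.1 y.1 := by
      intro z
      by_contra hz
      push_neg at hz
      refine hmax ⟨z, fun y hy => ?_⟩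
      rcases tri y z hy with h | h
      · exact h
      · exact absurd h (hz y)
    have hnomin : ∀ z : ↥M, ∃ y : ↥M, r y.1 z.1 := by
      intro z
      by_contra hz
      push_neg at hz
      refine hmin ⟨z, fun y hy => ?_⟩
      rcases tri z y (Ne.symm hy) with h | h
      · exact h
      · exact absurd h (hz y)
    have hset : (Set.univ : Set ↥M) = Core := by
      ext z
      simp only [Set.mem_univ, true_iff]
      exact ⟨hnomin z, hnomax z⟩
    refine ⟨_, Or.inr (Or.inr (Or.inr ⟨P, hP, Or.inl ⟨?_, rfl⟩⟩))⟩
    rw [hset]; exact hCoreFam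

end RestrictAux
namespace RestrictAux

theorem restrict_pi0 {S ι : Type} (mul : S → S → S) (tau taustar : S → S)
    (kappa : Set S → S) (r : ι → ι → Prop) [IsStrictTotalOrder ι r]
    {lab lab' : ι → S} {M : Set ι} (hMne : M.Nonempty)
    (hMconv : ∀ x ∈ M, ∀ y ∈ M, ∀ z : ι, r x z → r z y → z ∈ M)
    (hmid : ∀ z ∈ M, (∃ x ∈ M, r x z) → (∃ y ∈ M, r z y) → lab' z = lab z)
    {v : S} (h : Pi0HatRel mul tau taustar kappa r lab v) :
    ∃ v', Pi0HatRel mul tau taustar kappa (fun a b : ↥M => r a.1 b.1)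
      (fun a : ↥M => lab' a.1) v' := by
  classical
  haveI := sto_subtype r M
  by_cases hfin : M.Finite
  · haveI : Finite ↥M := hfin
    haveI : Nonempty ↥M := hMne.to_subtype
    exact finite_case mul tau taustar kappa _ _
  have hMinf : M.Infinite := hfin
  have ginj : ∀ (g : ℕ → ι), (∀ m n : ℕ, m < n → r (g m) (g n)) → Function.Injective g := by
    intro g hg m n hmn
    by_contra hne
    rcases Nat.lt_or_ge m n with h' | h'
    · exact irrefl_of r _ (hmn ▸ hg m n h')
    · exact irrefl_of r _ (hmn ▸ hg n m (lt_of_le_of_ne h' (Ne.symm hne)))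
  rcases h with ⟨n, g, hg1, hg2, _⟩ | ⟨g, hg1, hg2, b, hb, _⟩ | ⟨g, hg1, hg2, b, hb, _⟩ |
    ⟨P, hP, hcase⟩
  · -- finite word: ι finite, contradiction with M infinite
    have : Finite ι := Finite.of_surjective g (fun x => hg2 x)
    exact absurd M.toFinite hfin
  · -- ω word
    set N : Set ℕ := {n | g n ∈ M} with hN
    have hNne : N.Nonempty := by
      obtain ⟨x, hx⟩ := hMne
      obtain ⟨n, hn⟩ := hg2 x
      exact ⟨n, by simp [hN, hn, hx]⟩
    have hNconv : ∀ m ∈ N, ∀ n ∈ N, ∀ k, m < k → k < n → k ∈ N := by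
      intro m hm n hn k h1 h2
      exact hMconv (g m) hm (g n) hn (g k) (hg1 m k h1) (hg1 k n h2)
    have hNinf : N.Infinite := by
      intro hNfin
      refine hfin (Set.Finite.subset (hNfin.image g) ?_)
      rintro x hx
      obtain ⟨n, rfl⟩ := hg2 x
      exact ⟨n, hx, rfl⟩
    have hNne' : ∃ n, n ∈ N := hNne
    set p := Nat.find hNne' with hpdef
    have hp : p ∈ N := Nat.find_spec hNne'
    have hpmin : ∀ q ∈ N, p ≤ q := fun q hq => Nat.find_min' hNne' hq
    have hup : ∀ n, p ≤ n → n ∈ N := by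
      intro n hn
      obtain ⟨m, hm, hnm⟩ := hNinf.exists_gt n
      rcases Nat.eq_or_lt_of_le hn with rfl | h'
      · exact hp
      · exact hNconv p hp m hm n h' hnm
    set g₂ : ℕ → ↥M := fun n => ⟨g (p + n), hup (p + n) (Nat.le_add_right p n)⟩ with hg₂
    refine ⟨_, Or.inr (Or.inl ⟨g₂, ?_, ?_, b, ?_, rfl⟩)⟩
    · intro m n hmn
      exact hg1 (p + m) (p + n) (by omega)
    · rintro ⟨x, hx⟩
      obtain ⟨n, rfl⟩ := hg2 x
      have hn : p ≤ n := hpmin n hx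
      exact ⟨n - p, Subtype.ext (by simp [hg₂]; congr 1; omega)⟩
    · intro n hn
      have h1 : lab' (g (p + n)) = lab (g (p + n)) := by
        refine hmid _ (hup _ (by omega)) ⟨g p, hp, hg1 p (p + n) (by omega)⟩
          ⟨g (p + n + 1), hup _ (by omega), hg1 (p + n) (p + n + 1) (by omega)⟩
      simp only [hg₂, h1]
      exact hb (p + n) (by omega)
  · -- ω* word
    set N : Set ℕ := {n | g n ∈ M} with hN
    have hNne : N.Nonempty := by
      obtain ⟨x, hx⟩ := hMne
      obtain ⟨n, hn⟩ := hg2 x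
      exact ⟨n, by simp [hN, hn, hx]⟩
    have hNconv : ∀ m ∈ N, ∀ n ∈ N, ∀ k, m < k → k < n → k ∈ N := by
      intro m hm n hn k h1 h2
      exact hMconv (g n) hn (g m) hm (g k) (hg1 k n h2) (hg1 m k h1)
    have hNinf : N.Infinite := by
      intro hNfin
      refine hfin (Set.Finite.subset (hNfin.image g) ?_)
      rintro x hx
      obtain ⟨n, rfl⟩ := hg2 x
      exact ⟨n, hx, rfl⟩
    have hNne' : ∃ n, n ∈ N := hNne
    set p := Nat.find hNne' with hpdef
    have hp : p ∈ N := Nat.find_spec hNne'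
    have hpmin : ∀ q ∈ N, p ≤ q := fun q hq => Nat.find_min' hNne' hq
    have hup : ∀ n, p ≤ n → n ∈ N := by
      intro n hn
      obtain ⟨m, hm, hnm⟩ := hNinf.exists_gt n
      rcases Nat.eq_or_lt_of_le hn with rfl | h'
      · exact hp
      · exact hNconv p hp m hm n h' hnm
    set g₂ : ℕ → ↥M := fun n => ⟨g (p + n), hup (p + n) (Nat.le_add_right p n)⟩ with hg₂
    refine ⟨_, Or.inr (Or.inr (Or.inl ⟨g₂, ?_, ?_, b, ?_, rfl⟩))⟩
    · intro m n hmn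
      exact hg1 (p + m) (p + n) (by omega)
    · rintro ⟨x, hx⟩
      obtain ⟨n, rfl⟩ := hg2 x
      have hn : p ≤ n := hpmin n hx
      exact ⟨n - p, Subtype.ext (by simp [hg₂]; congr 1; omega)⟩
    · intro n hn
      have h1 : lab' (g (p + n)) = lab (g (p + n)) := by
        refine hmid _ (hup _ (by omega)) ⟨g (p + n + 1), hup _ (by omega),
          hg1 (p + n) (p + n + 1) (by omega)⟩ ⟨g p, hp, hg1 p (p + n) (by omega)⟩
      simp only [hg₂, h1]
      exact hb (p + n) (by omega)
  · -- shuffle word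
    rcases hcase with ⟨hfam, _⟩ | ⟨x₀, hx₀, hfam, _⟩ | ⟨x₁, hx₁, hfam, _⟩ |
      ⟨x₀, x₁, hne01, hx₀, hx₁, hfam, _⟩
    · refine eta_case mul tau taustar kappa r hMinf hMconv hmid hP hfam ?_
      intro x hx; exact absurd (Set.mem_univ x) hx
    · refine eta_case mul tau taustar kappa r hMinf hMconv hmid hP hfam ?_
      intro x hx
      have : x = x₀ := by simpa using hx
      exact Or.inl (this ▸ hx₀)
    · refine eta_case mul tau taustar kappa r hMinf hMconv hmid hP hfam ?_
      intro x hx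
      have : x = x₁ := by simpa using hx
      exact Or.inr (this ▸ hx₁)
    · refine eta_case mul tau taustar kappa r hMinf hMconv hmid hP hfam ?_
      intro x hx
      have : x = x₀ ∨ x = x₁ := by
        by_contra h'
        push_neg at h'
        exact hx ⟨h'.1, h'.2⟩
      rcases this with rfl | rfl
      · exact Or.inl hx₀
      · exact Or.inr hx₁

end RestrictAux
namespace RestrictAux

section Trees

variable {α : Type} [LinearOrder α] {T : Set (Set α)} {I : Set α}

theorem setlt_or {A B : Set α} (hAc : ConvexIn Set.univ A) (hBc : ConvexIn Set.univ B)
    (hd : A ∩ B = ∅) : SetLT A B ∨ SetLT B A := by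
  by_contra hcon
  push_neg at hcon
  obtain ⟨h1, h2⟩ := hcon
  simp only [SetLT, not_forall] at h1 h2
  obtain ⟨x, hx, y, hy, hxy⟩ := h1
  obtain ⟨x', hx', y', hy', hxy'⟩ := h2
  -- x ∈ A, y ∈ B, ¬ x < y ; x' ∈ B, y' ∈ A, ¬ x' < y'
  have hd' : ∀ a ∈ A, ∀ b ∈ B, a ≠ b := by
    rintro a ha b hb rfl
    exact absurd (Set.mem_inter ha hb) (by rw [hd]; exact Set.notMem_empty a)
  have hyx : y < x := lt_of_le_of_ne (not_lt.1 hxy) (fun h => hd' x hx y hy h.symm)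
  have hyx' : y' < x' := lt_of_le_of_ne (not_lt.1 hxy') (fun h => hd' y' hy' x' hx' h)
  have hxx' : x < x' := by
    rcases lt_trichotomy x x' with h | h | h
    · exact h
    · exact absurd h (hd' x hx x' hx')
    · have : x' ∈ A := hAc y' hy' x hx x' (Set.mem_univ _) hyx' h
      exact absurd rfl (hd' x' this x' hx')
  have : x ∈ B := hBc y hy x' hx' x (Set.mem_univ _) hyx hxx'
  exact absurd rfl (hd' x hx x this)

theorem children_disjoint (hT : IsCondTreeOn (Set.univ : Set α) T) {C C' J : Set α}
    (hC : IsChildOf T C J) (hC' : IsChildOf T C' J) (hne : C ≠ C') : C ∩ C' = ∅ := by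
  rcases hT.comparable_or_disjoint C hC.1 C' hC'.1 with h | h | h
  · have hss : C ⊂ C' := ssubset_of_subset_of_ne h hne
    exact absurd (hC.2.2 C' hC'.1 hss) hC'.2.1.2
  · have hss : C' ⊂ C := ssubset_of_subset_of_ne h (Ne.symm hne)
    exact absurd (hC'.2.2 C hC.1 hss) hC.2.1.2
  · exact h

theorem exists_child_between (hT : IsCondTreeOn (Set.univ : Set α) T) {J'' J : Set α}
    (hJ'' : J'' ∈ T) (hJ : J ∈ T) (hss : J'' ⊂ J) :
    ∃ C, IsChildOf T C J ∧ J'' ⊆ C := by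
  set A : Set (Set α) := {K | K ∈ T ∧ J'' ⊆ K ∧ K ⊂ J} with hA
  have hchain : IsChain (· ⊆ ·) A := by
    intro K hK K' hK' hne
    rcases hT.comparable_or_disjoint K hK.1 K' hK'.1 with h | h | h
    · exact Or.inl h
    · exact Or.inr h
    · obtain ⟨x, hx⟩ := hT.mem_nonempty J'' hJ''
      exact absurd (Set.mem_inter (hK.2.1 hx) (hK'.2.1 hx)) (by rw [h]; exact Set.notMem_empty x)
  have hfin : A.Finite := hT.chains_finite A (fun K hK => hK.1) hchain
  have hne : A.Nonempty := ⟨J'', hJ'', subset_refl _, hss⟩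
  obtain ⟨C, hC, hCmax⟩ := Set.Finite.exists_maximalFor id A hfin hne
  refine ⟨C, ⟨hC.1, hC.2.2, ?_⟩, hC.2.1⟩
  intro K hK hCK
  rcases hT.comparable_or_disjoint K hK J hJ with h | h | h
  · rcases eq_or_ne K J with rfl | hKJ
    · exact subset_refl _
    · have : K ∈ A := ⟨hK, hC.2.1.trans hCK.1, ssubset_of_subset_of_ne h hKJ⟩
      exact absurd (Set.Subset.antisymm hCK.1 (hCmax this hCK.1)) (ne_of_ssubset hCK)
  · exact h
  · obtain ⟨x, hx⟩ := hT.mem_nonempty C hC.1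
    exact absurd (Set.mem_inter (hCK.1 hx) (hC.2.2.1 hx)) (by rw [h]; exact Set.notMem_empty x)

theorem exists_origin (hT : IsCondTreeOn (Set.univ : Set α) T) {K : Set α}
    (hK : K ∈ restrictTree T I) :
    ∃ J ∈ T, I ∩ J = K ∧ ∀ J' ∈ T, I ∩ J' = K → J ⊆ J' := by
  obtain ⟨J₀, hJ₀, hKJ₀, hKne₀⟩ := hK
  have hKne : K.Nonempty := hKJ₀ ▸ hKne₀
  set A : Set (Set α) := {J | J ∈ T ∧ I ∩ J = K} with hA
  have hchain : IsChain (· ⊆ ·) A := by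
    intro J hJ J' hJ' hne
    rcases hT.comparable_or_disjoint J hJ.1 J' hJ'.1 with h | h | h
    · exact Or.inl h
    · exact Or.inr h
    · obtain ⟨x, hx⟩ := hKne
      have hx1 : x ∈ J := by rw [← hJ.2] at hx; exact hx.2
      have hx2 : x ∈ J' := by rw [← hJ'.2] at hx; exact hx.2
      exact absurd (Set.mem_inter hx1 hx2) (by rw [h]; exact Set.notMem_empty x)
  have hfin : A.Finite := hT.chains_finite A (fun J hJ => hJ.1) hchain
  have hne : A.Nonempty := ⟨J₀, hJ₀, hKJ₀.symm⟩
  obtain ⟨J, hJ, hJmin⟩ := Set.Finite.exists_minimalFor id A hfin hne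
  refine ⟨J, hJ.1, hJ.2, ?_⟩
  intro J' hJ' hKJ'
  have hJ'A : J' ∈ A := ⟨hJ', hKJ'⟩
  rcases eq_or_ne J J' with rfl | hne'
  · exact subset_refl _
  rcases hchain hJ hJ'A hne' with h | h
  · exact h
  · exact hJmin hJ'A h

end Trees

end RestrictAux
namespace RestrictAux

section Trees2

variable {α : Type} [LinearOrder α] {T : Set (Set α)} {I : Set α}

theorem mem_restrict_of_subset (hT : IsCondTreeOn (Set.univ : Set α) T) {J : Set α}
    (hJ : J ∈ T) (hJI : J ⊆ I) : J ∈ restrictTree T I := by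
  have h1 : I ∩ J = J := Set.inter_eq_self_of_subset_right hJI
  exact ⟨J, hJ, h1.symm, h1.symm ▸ hT.mem_nonempty J hJ⟩

theorem restrict_nonempty {K : Set α} (hK : K ∈ restrictTree T I) : K.Nonempty := by
  obtain ⟨J, _, rfl, hne⟩ := hK; exact hne

theorem restrict_subset {K : Set α} (hK : K ∈ restrictTree T I) : K ⊆ I := by
  obtain ⟨J, _, rfl, _⟩ := hK; exact Set.inter_subset_left

/-- properties of a minimal origin -/
theorem origin_eq_of_typeA (hT : IsCondTreeOn (Set.univ : Set α) T) {K J : Set α}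
    (hJ : J ∈ T) (hIJ : I ∩ J = K) (hmin : ∀ J' ∈ T, I ∩ J' = K → J ⊆ J')
    (hKT : K ∈ T) (hKI : K ⊆ I) : J = K := by
  have h1 : I ∩ K = K := Set.inter_eq_self_of_subset_right hKI
  have h2 : J ⊆ K := hmin K hKT h1
  have h3 : K ⊆ J := by rw [← hIJ]; exact Set.inter_subset_right
  exact Set.Subset.antisymm h2 h3

theorem typeA_of_origin_subset {K J : Set α} (hJ : J ∈ T) (hIJ : I ∩ J = K)
    (hJI : J ⊆ I) : K ∈ T ∧ K ⊆ I := by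
  have : K = J := by rw [← hIJ]; exact Set.inter_eq_self_of_subset_right hJI
  exact this ▸ ⟨hJ, hJI⟩

theorem restrict_isCondTree (hT : IsCondTreeOn (Set.univ : Set α) T)
    (hne : I.Nonempty) (hconv : ConvexIn Set.univ I) :
    IsCondTreeOn I (restrictTree T I) := by
  constructor
  · refine ⟨Set.univ, hT.root_mem, ?_, ?_⟩ <;> simp [hne]
  · intro K hK; exact restrict_subset hK
  · intro K hK; exact restrict_nonempty hK
  · rintro K ⟨J, hJ, rfl, hne'⟩
    intro x hx y hy z hz h1 h2
    exact ⟨hz, hT.mem_convex J hJ x hx.2 y hy.2 z (Set.mem_univ z) h1 h2⟩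
  · rintro K ⟨J, hJ, rfl, hne1⟩ K' ⟨J', hJ', rfl, hne2⟩
    rcases hT.comparable_or_disjoint J hJ J' hJ' with h | h | h
    · exact Or.inl (Set.inter_subset_inter_right I h)
    · exact Or.inr (Or.inl (Set.inter_subset_inter_right I h))
    · refine Or.inr (Or.inr ?_)
      rw [Set.eq_empty_iff_forall_notMem]
      rintro x ⟨⟨-, hx1⟩, ⟨-, hx2⟩⟩
      exact absurd (Set.mem_inter hx1 hx2) (by rw [h]; exact Set.notMem_empty x)
  · intro K hK
    obtain ⟨J, hJ, hIJ, hmin⟩ := exists_origin hT hK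
    by_cases hleaf : IsLeafOf T J
    · right
      rw [Set.eq_empty_iff_forall_notMem]
      rintro x ⟨K', ⟨hK', hss⟩, hx⟩
      obtain ⟨J', hJ', hIJ', hmin'⟩ := exists_origin hT hK'
      have hJJ' : J' ∩ J ≠ ∅ := by
        intro hcon
        obtain ⟨y, hy⟩ := restrict_nonempty hK'
        have hy1 : y ∈ J' := by rw [← hIJ'] at hy; exact hy.2
        have hy2 : y ∈ J := by
          have := hss.1 hy
          rw [← hIJ] at this; exact this.2
        exact absurd (Set.mem_inter hy1 hy2) (by rw [hcon]; exact Set.notMem_empty y)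
      rcases hT.comparable_or_disjoint J' hJ' J hJ with h | h | h
      · have := hleaf.2 J' hJ' h
        rw [this] at hIJ'
        rw [hIJ] at hIJ'
        exact absurd hIJ' (Ne.symm (ne_of_ssubset hss))
      · have : K ⊆ K' := by rw [← hIJ, ← hIJ']; exact Set.inter_subset_inter_right I h
        exact absurd this hss.2
      · exact hJJ' h
    · left
      apply Set.Subset.antisymm
      · rintro x ⟨K', ⟨hK', hss⟩, hx⟩
        exact hss.1 hx
      · intro x hx
        have hxJ : x ∈ J := by rw [← hIJ] at hx; exact hx.2
        have hxI : x ∈ I := by rw [← hIJ] at hx; exact hx.1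
        have hJU : ⋃₀ {J'' | J'' ∈ T ∧ J'' ⊂ J} = J := by
          rcases hT.children_union J hJ with h | h
          · exact h
          · exfalso
            simp only [IsLeafOf, not_and, not_forall] at hleaf
            obtain ⟨J'', hJ'', hsub, hne''⟩ := hleaf hJ
            obtain ⟨y, hy⟩ := hT.mem_nonempty J'' hJ''
            have hyy : y ∈ ⋃₀ {K'' | K'' ∈ T ∧ K'' ⊂ J} :=
              ⟨J'', ⟨hJ'', ssubset_of_subset_of_ne hsub hne''⟩, hy⟩
            rw [h] at hyy
            exact hyy
        rw [← hJU] at hxJ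
        obtain ⟨J'', ⟨hJ'', hss''⟩, hxJ''⟩ := hxJ
        refine ⟨I ∩ J'', ⟨⟨J'', hJ'', rfl, ⟨x, hxI, hxJ''⟩⟩, ?_⟩, hxI, hxJ''⟩
        constructor
        · rw [← hIJ]; exact Set.inter_subset_inter_right I hss''.1
        · intro hcon
          have : I ∩ J'' = K := Set.Subset.antisymm
            (by rw [← hIJ]; exact Set.inter_subset_inter_right I hss''.1) hcon
          exact absurd (hmin J'' hJ'' this) hss''.2
  · intro C hsub hchain
    classical
    choose! f hf1 hf2 hf3 using fun K (hK : K ∈ restrictTree T I) => exists_origin hT hK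
    have hinj : Set.InjOn f C := by
      intro K hK K' hK' he
      rw [← hf2 K (hsub hK), ← hf2 K' (hsub hK'), he]
    have hAsub : f '' C ⊆ T := by
      rintro J ⟨K, hK, rfl⟩
      exact hf1 K (hsub hK)
    have hAchain : IsChain (· ⊆ ·) (f '' C) := by
      rintro J ⟨K, hK, rfl⟩ J' ⟨K', hK', rfl⟩ hne'
      have hKne : K ≠ K' := fun h => hne' (by rw [h])
      have hxKK' : ∃ x, x ∈ K ∧ x ∈ K' := by
        rcases hchain hK hK' hKne with h | h
        · obtain ⟨x, hx⟩ := restrict_nonempty (hsub hK)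
          exact ⟨x, hx, h hx⟩
        · obtain ⟨x, hx⟩ := restrict_nonempty (hsub hK')
          exact ⟨x, h hx, hx⟩
      obtain ⟨x, hxK, hxK'⟩ := hxKK'
      have hx1 : x ∈ f K := by
        have hh : x ∈ I ∩ f K := by rw [hf2 K (hsub hK)]; exact hxK
        exact hh.2
      have hx2 : x ∈ f K' := by
        have hh : x ∈ I ∩ f K' := by rw [hf2 K' (hsub hK')]; exact hxK'
        exact hh.2
      rcases hT.comparable_or_disjoint (f K) (hf1 K (hsub hK)) (f K') (hf1 K' (hsub hK')) with
        h | h | h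
      · exact Or.inl h
      · exact Or.inr h
      · exact absurd (Set.mem_inter hx1 hx2) (by rw [h]; exact Set.notMem_empty x)
    exact Set.Finite.of_finite_image (hT.chains_finite (f '' C) hAsub hAchain) hinj

end Trees2

end RestrictAux
namespace RestrictAux

section Trees3

variable {α : Type} [LinearOrder α] {T : Set (Set α)} {I : Set α}

/-- if the origin of `K` is a leaf, then `K` is a leaf of the restricted tree -/
theorem leaf_restrict (hT : IsCondTreeOn (Set.univ : Set α) T) {K J : Set α}
    (hK : K ∈ restrictTree T I) (hJ : J ∈ T) (hIJ : I ∩ J = K)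
    (hmin : ∀ J' ∈ T, I ∩ J' = K → J ⊆ J') (hleaf : IsLeafOf T J) :
    IsLeafOf (restrictTree T I) K := by
  refine ⟨hK, ?_⟩
  intro K' hK' hss
  by_contra hne
  have hss' : K' ⊂ K := ssubset_of_subset_of_ne hss hne
  obtain ⟨J', hJ', hIJ', hmin'⟩ := exists_origin hT hK'
  obtain ⟨y, hy⟩ := restrict_nonempty hK'
  have hy1 : y ∈ J' := by rw [← hIJ'] at hy; exact hy.2
  have hy2 : y ∈ J := by
    have := hss hy
    rw [← hIJ] at this; exact this.2
  rcases hT.comparable_or_disjoint J' hJ' J hJ with h | h | h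
  · have := hleaf.2 J' hJ' h
    rw [this, hIJ] at hIJ'
    exact hne hIJ'.symm
  · have : K ⊆ K' := by rw [← hIJ, ← hIJ']; exact Set.inter_subset_inter_right I h
    exact absurd this hss'.2
  · exact absurd (Set.mem_inter hy1 hy2) (by rw [h]; exact Set.notMem_empty y)

/-- if the origin of `K` is not a leaf, `K` has a proper subnode through every point -/
theorem exists_meeting_child (hT : IsCondTreeOn (Set.univ : Set α) T) {J : Set α}
    (hJ : J ∈ T) (hleaf : ¬ IsLeafOf T J) {x : α} (hx : x ∈ J) :
    ∃ C, IsChildOf T C J ∧ x ∈ C := by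
  have hJU : ⋃₀ {J'' | J'' ∈ T ∧ J'' ⊂ J} = J := by
    rcases hT.children_union J hJ with h | h
    · exact h
    · exfalso
      simp only [IsLeafOf, not_and, not_forall] at hleaf
      obtain ⟨J'', hJ'', hsub, hne''⟩ := hleaf hJ
      obtain ⟨y, hy⟩ := hT.mem_nonempty J'' hJ''
      have hyy : y ∈ ⋃₀ {K'' | K'' ∈ T ∧ K'' ⊂ J} :=
        ⟨J'', ⟨hJ'', ssubset_of_subset_of_ne hsub hne''⟩, hy⟩
      rw [h] at hyy
      exact hyy
  rw [← hJU] at hx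
  obtain ⟨J'', ⟨hJ'', hss''⟩, hxJ''⟩ := hx
  obtain ⟨C, hC, hsub⟩ := exists_child_between hT hJ'' hJ hss''
  exact ⟨C, hC, hsub hxJ''⟩

/-- type A children: when `K ∈ T` and `K ⊆ I` -/
theorem childA (hT : IsCondTreeOn (Set.univ : Set α) T) {K : Set α}
    (hKT : K ∈ T) (hKI : K ⊆ I) (C : Set α) :
    IsChildOf (restrictTree T I) C K ↔ IsChildOf T C K := by
  constructor
  · rintro ⟨hC, hss, hmax⟩
    obtain ⟨L, hL, hIL, hLmin⟩ := exists_origin hT hC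
    have hCL : C ⊆ L := by rw [← hIL]; exact Set.inter_subset_right
    have hCne : C.Nonempty := restrict_nonempty hC
    have hLK : L ⊂ K := by
      rcases hT.comparable_or_disjoint L hL K hKT with h | h | h
      · refine ssubset_of_subset_of_ne h ?_
        rintro rfl
        rw [Set.inter_eq_self_of_subset_right hKI] at hIL
        exact hss.2 hIL.subset
      · exfalso
        have : K ⊆ C := by
          rw [← hIL]
          exact fun x hx => ⟨hKI hx, h hx⟩
        exact hss.2 this
      · exfalso
        obtain ⟨x, hx⟩ := hCne
        exact absurd (Set.mem_inter (hCL hx) (hss.1 hx)) (by rw [h]; exact Set.notMem_empty x)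
    have hLI : L ⊆ I := hLK.1.trans hKI
    have hCL' : C = L := by rw [← hIL]; exact Set.inter_eq_self_of_subset_right hLI
    subst hCL'
    refine ⟨hL, hss, ?_⟩
    intro K'' hK'' hCK''
    rcases hT.comparable_or_disjoint K'' hK'' K hKT with h | h | h
    · rcases eq_or_ne K'' K with rfl | hne
      · exact subset_refl _
      · have hK''I : K'' ⊆ I := h.trans hKI
        exact hmax K'' (mem_restrict_of_subset hT hK'' hK''I) hCK''
    · exact h
    · exfalso
      obtain ⟨x, hx⟩ := hCne
      exact absurd (Set.mem_inter (hCK''.1 hx) (hss.1 hx))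
        (by rw [h]; exact Set.notMem_empty x)
  · rintro ⟨hC, hss, hmax⟩
    have hCI : C ⊆ I := hss.1.trans hKI
    refine ⟨mem_restrict_of_subset hT hC hCI, hss, ?_⟩
    intro K'' hK'' hCK''
    obtain ⟨J'', hJ'', hIJ'', hmin''⟩ := exists_origin hT hK''
    have hCJ'' : C ⊆ J'' := by
      refine hCK''.1.trans ?_
      rw [← hIJ'']; exact Set.inter_subset_right
    rcases eq_or_ne C J'' with rfl | hne
    · exfalso
      rw [Set.inter_eq_self_of_subset_right hCI] at hIJ''
      exact hCK''.2 (hIJ'' ▸ subset_refl C)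
    · have hKJ'' : K ⊆ J'' := hmax J'' hJ'' (ssubset_of_subset_of_ne hCJ'' hne)
      rw [← hIJ'']
      exact fun x hx => ⟨hKI hx, hKJ'' hx⟩

end Trees3

end RestrictAux
namespace RestrictAux

section Trees4

variable {α : Type} [LinearOrder α] {T : Set (Set α)} {I : Set α}

/-- type B children: each child of `K` in the restricted tree is the trace of a child
of the origin `J`. -/
theorem childB (hT : IsCondTreeOn (Set.univ : Set α) T) {K J : Set α}
    (hK : K ∈ restrictTree T I) (hJ : J ∈ T) (hIJ : I ∩ J = K)
    (hmin : ∀ J' ∈ T, I ∩ J' = K → J ⊆ J') (C' : Set α) :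
    IsChildOf (restrictTree T I) C' K ↔
      ∃ C, IsChildOf T C J ∧ (I ∩ C).Nonempty ∧ C' = I ∩ C := by
  have htrace : ∀ C, IsChildOf T C J → (I ∩ C).Nonempty → I ∩ C ⊂ K := by
    intro C hC hne
    constructor
    · rw [← hIJ]; exact Set.inter_subset_inter_right I hC.2.1.1
    · intro hcon
      have heq : I ∩ C = K := Set.Subset.antisymm
        (by rw [← hIJ]; exact Set.inter_subset_inter_right I hC.2.1.1) hcon
      exact hC.2.1.2 (hmin C hC.1 heq)
  constructor
  · rintro ⟨hC', hss, hmax⟩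
    obtain ⟨L, hL, hIL, hLmin⟩ := exists_origin hT hC'
    have hC'ne : C'.Nonempty := restrict_nonempty hC'
    have hC'L : C' ⊆ L := by rw [← hIL]; exact Set.inter_subset_right
    have hC'J : C' ⊆ J := by
      refine hss.1.trans ?_
      rw [← hIJ]; exact Set.inter_subset_right
    have hLJ : L ⊂ J := by
      rcases hT.comparable_or_disjoint L hL J hJ with h | h | h
      · refine ssubset_of_subset_of_ne h ?_
        rintro rfl
        exact hss.2 (by rw [← hIL, hIJ])
      · exfalso
        have : K ⊆ C' := by
          rw [← hIJ, ← hIL]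
          exact fun x hx => ⟨hx.1, h hx.2⟩
        exact hss.2 this
      · exfalso
        obtain ⟨x, hx⟩ := hC'ne
        exact absurd (Set.mem_inter (hC'L hx) (hC'J hx))
          (by rw [h]; exact Set.notMem_empty x)
    obtain ⟨C, hC, hLC⟩ := exists_child_between hT hL hJ hLJ
    have hICne : (I ∩ C).Nonempty := by
      obtain ⟨x, hx⟩ := hC'ne
      exact ⟨x, (hss.1.trans (by rw [← hIJ]; exact Set.inter_subset_left)) hx, hLC (hC'L hx)⟩
    refine ⟨C, hC, hICne, ?_⟩
    have hsub : C' ⊆ I ∩ C := by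
      rw [← hIL]
      exact fun x hx => ⟨hx.1, hLC hx.2⟩
    rcases eq_or_ne C' (I ∩ C) with he | hne
    · exact he
    · exfalso
      have hIC : I ∩ C ∈ restrictTree T I := ⟨C, hC.1, rfl, hICne⟩
      have := hmax (I ∩ C) hIC (ssubset_of_subset_of_ne hsub hne)
      exact (htrace C hC hICne).2 this
  · rintro ⟨C, hC, hICne, rfl⟩
    refine ⟨⟨C, hC.1, rfl, hICne⟩, htrace C hC hICne, ?_⟩
    intro K'' hK'' hssK''
    obtain ⟨J'', hJ'', hIJ'', hmin''⟩ := exists_origin hT hK''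
    have hICJ'' : I ∩ C ⊆ J'' := by
      refine hssK''.1.trans ?_
      rw [← hIJ'']; exact Set.inter_subset_right
    rcases hT.comparable_or_disjoint J'' hJ'' C hC.1 with h | h | h
    · exfalso
      have : K'' ⊆ I ∩ C := by
        rw [← hIJ'']
        exact fun x hx => ⟨hx.1, h hx.2⟩
      exact hssK''.2 this
    · rcases eq_or_ne C J'' with rfl | hne
      · exfalso
        exact hssK''.2 (by rw [← hIJ''])
      · have hJJ'' : J ⊆ J'' := hC.2.2 J'' hJ'' (ssubset_of_subset_of_ne h hne)
        rw [← hIJ, ← hIJ'']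
        exact Set.inter_subset_inter_right I hJJ''
    · exfalso
      obtain ⟨x, hx⟩ := hICne
      exact absurd (Set.mem_inter (hICJ'' ⟨hx.1, hx.2⟩) hx.2)
        (by rw [h]; exact Set.notMem_empty x)

/-- order correspondence for traces of children -/
theorem trace_setLT (hT : IsCondTreeOn (Set.univ : Set α) T) {J C C₂ : Set α}
    (hC : IsChildOf T C J) (hC₂ : IsChildOf T C₂ J)
    (h1 : (I ∩ C).Nonempty) (h2 : (I ∩ C₂).Nonempty) :
    SetLT (I ∩ C) (I ∩ C₂) ↔ SetLT C C₂ := by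
  constructor
  · intro h
    rcases eq_or_ne C C₂ with rfl | hne
    · exfalso
      obtain ⟨x, hx⟩ := h1
      exact lt_irrefl x (h x hx x hx)
    · rcases setlt_or (hT.mem_convex C hC.1) (hT.mem_convex C₂ hC₂.1)
        (children_disjoint hT hC hC₂ hne) with h' | h'
      · exact h'
      · exfalso
        obtain ⟨x, hx⟩ := h1
        obtain ⟨y, hy⟩ := h2
        exact lt_irrefl x ((h x hx y hy).trans (h' y hy.2 x hx.2))
  · intro h x hx y hy
    exact h x hx.2 y hy.2

/-- a child of the origin with meeting children on both sides is contained in `I` -/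
theorem mid_child_subset (hconv : ConvexIn Set.univ I) {C C₁ C₂ : Set α}
    (h1 : (I ∩ C₁).Nonempty) (h2 : (I ∩ C₂).Nonempty)
    (hlt1 : SetLT C₁ C) (hlt2 : SetLT C C₂) : C ⊆ I := by
  obtain ⟨x, hx⟩ := h1
  obtain ⟨y, hy⟩ := h2
  intro z hz
  exact hconv x hx.1 y hy.1 z (Set.mem_univ z) (hlt1 x hx.2 z hz) (hlt2 z hz y hy.2)

/-- the strict total order on children -/
theorem sto_children (hT : IsCondTreeOn (Set.univ : Set α) T) (J : Set α) :
    IsStrictTotalOrder {C : Set α // IsChildOf T C J}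
      (fun A B : {C : Set α // IsChildOf T C J} => SetLT A.1 B.1) where
  trichotomous A B := by
    intro hab hba
    rcases eq_or_ne A B with rfl | hne
    · rfl
    · have hne' : A.1 ≠ B.1 := fun h => hne (Subtype.ext h)
      rcases setlt_or (hT.mem_convex A.1 A.2.1) (hT.mem_convex B.1 B.2.1)
        (children_disjoint hT A.2 B.2 hne') with h | h
      · exact absurd h hab
      · exact absurd h hba
  irrefl A := by
    obtain ⟨x, hx⟩ := hT.mem_nonempty A.1 A.2.1
    exact fun h => lt_irrefl x (h x hx x hx)
  trans A B C := by
    intro h1 h2 x hx y hy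
    obtain ⟨z, hz⟩ := hT.mem_nonempty B.1 B.2.1
    exact (h1 x hx z hz).trans (h2 z hz y hy)

end Trees4

end RestrictAux
namespace RestrictAux

section Gamma

variable {S α : Type} [Nonempty S] [LinearOrder α]

theorem wf_restrict {T : Set (Set α)} {I : Set α}
    (hT : IsCondTreeOn (Set.univ : Set α) T) (hne : I.Nonempty)
    (hconv : ConvexIn Set.univ I) :
    WellFounded (fun K' K : Set α =>
      K' ∈ restrictTree T I ∧ K ∈ restrictTree T I ∧ K' ⊂ K) := by
  have hT' := restrict_isCondTree hT hne hconv
  haveI : IsStrictOrder (Set α) (fun K' K : Set α =>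
      K' ∈ restrictTree T I ∧ K ∈ restrictTree T I ∧ K' ⊂ K) := by
    haveI : IsIrrefl (Set α) (fun K' K : Set α =>
        K' ∈ restrictTree T I ∧ K ∈ restrictTree T I ∧ K' ⊂ K) :=
      ⟨fun K h => h.2.2.2 (subset_refl K)⟩
    haveI : IsTrans (Set α) (fun K' K : Set α =>
        K' ∈ restrictTree T I ∧ K ∈ restrictTree T I ∧ K' ⊂ K) :=
      ⟨fun A B C hab hbc => ⟨hab.1, hbc.2.1, hab.2.2.trans hbc.2.2⟩⟩
    exact ⟨⟩
  rw [RelEmbedding.wellFounded_iff_isEmpty]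
  constructor
  intro f
  have hmem : ∀ n, f n ∈ restrictTree T I := fun n =>
    (f.map_rel_iff.2 (show n + 1 > n by omega)).2.1
  have hss : ∀ m n : ℕ, n < m → f m ⊂ f n := fun m n h => (f.map_rel_iff.2 h).2.2
  have hinj : Function.Injective f := by
    intro a b hab
    rcases lt_trichotomy a b with h | h | h
    · exact absurd (hab ▸ subset_refl (f b)) (hss b a h).2
    · exact h
    · exact absurd (hab ▸ subset_refl (f b)) (hss a b h).2
  have hchain : IsChain (· ⊆ ·) (Set.range f) := by
    rintro _ ⟨m, rfl⟩ _ ⟨n, rfl⟩ hne'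
    rcases lt_trichotomy m n with h | h | h
    · exact Or.inr (hss n m h).1
    · exact absurd (congrArg f h) hne'
    · exact Or.inl (hss m n h).1
  have hfin : (Set.range f).Finite :=
    hT'.chains_finite (Set.range f) (by rintro _ ⟨n, rfl⟩; exact hmem n) hchain
  exact Set.infinite_range_of_injective hinj hfin

open Classical in
noncomputable def gammaAux (mul : S → S → S) (tau taustar : S → S) (kappa : Set S → S)
    (T : Set (Set α)) (γ : Set α → S) (I : Set α) (v₀ : S)
    (hwf : WellFounded (fun K' K : Set α =>
      K' ∈ restrictTree T I ∧ K ∈ restrictTree T I ∧ K' ⊂ K)) : Set α → S :=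
  hwf.fix fun K rec =>
    if K ∈ T ∧ K ⊆ I then γ K
    else Classical.epsilon fun v => Pi0HatRel mul tau taustar kappa
      (fun A B : {C : Set α // IsChildOf (restrictTree T I) C K} => SetLT A.1 B.1)
      (fun A => if hA : A.1 ∈ restrictTree T I ∧ K ∈ restrictTree T I ∧ A.1 ⊂ K
        then rec A.1 hA else v₀) v

theorem gammaAux_eqA {mul : S → S → S} {tau taustar : S → S} {kappa : Set S → S}
    {T : Set (Set α)} {γ : Set α → S} {I : Set α} {v₀ : S} {hwf : WellFounded (fun K' K : Set α =>
      K' ∈ restrictTree T I ∧ K ∈ restrictTree T I ∧ K' ⊂ K)}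
    {K : Set α} (hK : K ∈ T ∧ K ⊆ I) :
    gammaAux mul tau taustar kappa T γ I v₀ hwf K = γ K := by
  unfold gammaAux
  rw [WellFounded.fix_eq]
  simp only [hK, if_pos, and_self]

theorem gammaAux_eqB {mul : S → S → S} {tau taustar : S → S} {kappa : Set S → S}
    {T : Set (Set α)} {γ : Set α → S} {I : Set α} {v₀ : S} {hwf : WellFounded (fun K' K : Set α =>
      K' ∈ restrictTree T I ∧ K ∈ restrictTree T I ∧ K' ⊂ K)}
    {K : Set α} (hK : K ∈ restrictTree T I) (hKB : ¬(K ∈ T ∧ K ⊆ I)) :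
    gammaAux mul tau taustar kappa T γ I v₀ hwf K = Classical.epsilon fun v =>
      Pi0HatRel mul tau taustar kappa
        (fun A B : {C : Set α // IsChildOf (restrictTree T I) C K} => SetLT A.1 B.1)
        (fun A => gammaAux mul tau taustar kappa T γ I v₀ hwf A.1) v := by
  conv_lhs => unfold gammaAux
  rw [WellFounded.fix_eq]
  rw [if_neg hKB]
  congr 1
  funext v
  congr 1
  funext A
  rw [dif_pos ⟨A.2.1, hK, A.2.2.1⟩]
  conv_rhs => unfold gammaAux

end Gamma

end RestrictAux

/-- restriction of evaluation trees.  Let `S` be a finite set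
with operations `·, τ, τ*, κ`, let `(T, γ)` be an evaluation tree with respect
to the extended map `π₀^` over a nonempty countable word `u : α → S`, and let
`I` be a nonempty convex subset of `α`.  Then there is `γI` such that
`(T|_I, γI)` is an evaluation tree with respect to `π₀^` over the factor
`u|_I` and `γI` agrees with `γ` on every `J ∈ T` with `J ⊆ I`. -/
theorem restrict_evaluation_tree {S α : Type} [Finite S] [LinearOrder α]
    [Countable α] [Nonempty α] (mul : S → S → S) (tau taustar : S → S)
    (kappa : Set S → S) (u : α → S) (T : Set (Set α)) (γ : Set α → S)
    (h : IsEvalTreeHat mul tau taustar kappa u Set.univ T γ)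
    (I : Set α) (hne : I.Nonempty) (hconv : ConvexIn Set.univ I) :
    ∃ γI : Set α → S,
      IsEvalTreeHat mul tau taustar kappa u I (restrictTree T I) γI ∧
      ∀ J ∈ T, J ⊆ I → γI J = γ J := by
  classical
  obtain ⟨hT, hleafspec, hnodespec⟩ := h
  haveI : Nonempty S := ⟨u (Classical.arbitrary α)⟩
  have hwf := RestrictAux.wf_restrict hT hne hconv
  set v₀ : S := Classical.arbitrary S with hv₀
  have hagree : ∀ J ∈ T, J ⊆ I →
      RestrictAux.gammaAux mul tau taustar kappa T γ I v₀ hwf J = γ J :=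
    fun J hJ hJI => RestrictAux.gammaAux_eqA ⟨hJ, hJI⟩
  refine ⟨RestrictAux.gammaAux mul tau taustar kappa T γ I v₀ hwf,
    ⟨RestrictAux.restrict_isCondTree hT hne hconv, ?_, ?_⟩, hagree⟩
  · -- leaf_spec
    intro K hKleaf
    have hK := hKleaf.1
    obtain ⟨J, hJ, hIJ, hmin⟩ := RestrictAux.exists_origin hT hK
    have hJleaf : IsLeafOf T J := by
      by_contra hJn
      obtain ⟨x, hx⟩ := RestrictAux.restrict_nonempty hK
      have hxI : x ∈ I := RestrictAux.restrict_subset hK hx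
      have hxJ : x ∈ J := by rw [← hIJ] at hx; exact hx.2
      obtain ⟨C, hC, hxC⟩ := RestrictAux.exists_meeting_child hT hJ hJn hxJ
      have hICne : (I ∩ C).Nonempty := ⟨x, hxI, hxC⟩
      have hsub : I ∩ C ⊆ K := by
        rw [← hIJ]; exact Set.inter_subset_inter_right I hC.2.1.1
      have hICK : I ∩ C ⊂ K := by
        refine ssubset_of_subset_of_ne hsub ?_
        intro hcon
        exact hC.2.1.2 (hmin C hC.1 hcon)
      have := hKleaf.2 (I ∩ C) ⟨C, hC.1, rfl, hICne⟩ hICK.1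
      exact hICK.2 (this ▸ subset_refl K)
    obtain ⟨x, hJx, hγJ⟩ := hleafspec J hJleaf
    obtain ⟨y, hy⟩ := RestrictAux.restrict_nonempty hK
    have hyK : y ∈ I ∩ J := by rw [hIJ]; exact hy
    have hyx : y = x := by rw [hJx] at hyK; exact hyK.2
    subst hyx
    have hyI : y ∈ I := hyK.1
    have hKy : K = {y} := by
      apply Set.Subset.antisymm
      · intro z hz
        have hz' : z ∈ I ∩ J := by rw [hIJ]; exact hz
        rw [hJx] at hz'; exact hz'.2
      · intro z hz
        rw [Set.mem_singleton_iff] at hz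
        subst hz
        rw [← hIJ]
        exact ⟨hyI, by rw [hJx]; exact Set.mem_singleton z⟩
    refine ⟨y, hKy, ?_⟩
    have hKJ : K = J := by rw [hKy, hJx]
    rw [hKJ, hagree J hJ (by rw [hJx]; exact Set.singleton_subset_iff.2 hyI)]
    exact hγJ
  · -- node_spec
    intro K hK hKleaf
    obtain ⟨J, hJ, hIJ, hmin⟩ := RestrictAux.exists_origin hT hK
    have hJn : ¬ IsLeafOf T J := fun hJl =>
      hKleaf (RestrictAux.leaf_restrict hT hK hJ hIJ hmin hJl)
    have hPi := hnodespec J hJ hJn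
    by_cases hA : K ∈ T ∧ K ⊆ I
    · have hJK : J = K := RestrictAux.origin_eq_of_typeA hT hJ hIJ hmin hA.1 hA.2
      subst hJK
      rw [RestrictAux.gammaAux_eqA hA]
      refine RestrictAux.pi0_transfer mul tau taustar kappa
        (Equiv.subtypeEquivRight (fun C => (RestrictAux.childA hT hA.1 hA.2 C).symm))
        (fun a b => Iff.rfl) ?_ hPi
      intro a
      exact (hagree a.1 a.2.1 (a.2.2.1.1.trans hA.2)).symm
    · rw [RestrictAux.gammaAux_eqB hK hA]
      refine Classical.epsilon_spec (p := fun v => Pi0HatRel mul tau taustar kappa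
        (fun A B : {C : Set α // IsChildOf (restrictTree T I) C K} => SetLT A.1 B.1)
        (fun A => RestrictAux.gammaAux mul tau taustar kappa T γ I v₀ hwf A.1) v) ?_
      haveI := RestrictAux.sto_children hT J
      have hMne : {C : {C : Set α // IsChildOf T C J} | (I ∩ C.1).Nonempty}.Nonempty := by
        obtain ⟨x, hx⟩ := RestrictAux.restrict_nonempty hK
        have hxI : x ∈ I := RestrictAux.restrict_subset hK hx
        have hxJ : x ∈ J := by rw [← hIJ] at hx; exact hx.2
        obtain ⟨C, hC, hxC⟩ := RestrictAux.exists_meeting_child hT hJ hJn hxJ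
        exact ⟨⟨C, hC⟩, ⟨x, hxI, hxC⟩⟩
      have hMconv : ∀ x ∈ {C : {C : Set α // IsChildOf T C J} | (I ∩ C.1).Nonempty},
          ∀ y ∈ {C : {C : Set α // IsChildOf T C J} | (I ∩ C.1).Nonempty},
          ∀ z : {C : Set α // IsChildOf T C J}, SetLT x.1 z.1 → SetLT z.1 y.1 →
          z ∈ {C : {C : Set α // IsChildOf T C J} | (I ∩ C.1).Nonempty} := by
        intro x hx y hy z h1 h2
        have hzI : z.1 ⊆ I := RestrictAux.mid_child_subset hconv hx hy h1 h2
        obtain ⟨w, hw⟩ := hT.mem_nonempty z.1 z.2.1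
        exact ⟨w, hzI hw, hw⟩
      have hmid : ∀ z ∈ {C : {C : Set α // IsChildOf T C J} | (I ∩ C.1).Nonempty},
          (∃ x ∈ {C : {C : Set α // IsChildOf T C J} | (I ∩ C.1).Nonempty}, SetLT x.1 z.1) →
          (∃ y ∈ {C : {C : Set α // IsChildOf T C J} | (I ∩ C.1).Nonempty}, SetLT z.1 y.1) →
          RestrictAux.gammaAux mul tau taustar kappa T γ I v₀ hwf (I ∩ z.1) = γ z.1 := by
        intro z hz hpred hsucc
        obtain ⟨x, hx, hx2⟩ := hpred
        obtain ⟨y, hy, hy2⟩ := hsucc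
        have hzI : z.1 ⊆ I := RestrictAux.mid_child_subset hconv hx hy hx2 hy2
        rw [Set.inter_eq_self_of_subset_right hzI]
        exact hagree z.1 z.2.1 hzI
      obtain ⟨v', hv'⟩ := RestrictAux.restrict_pi0 mul tau taustar kappa
        (fun A B : {C : Set α // IsChildOf T C J} => SetLT A.1 B.1)
        (lab := fun C => γ C.1)
        (lab' := fun C => RestrictAux.gammaAux mul tau taustar kappa T γ I v₀ hwf (I ∩ C.1))
        hMne hMconv hmid hPi
      have hbij : Function.Bijective (fun A : ↥{C : {C : Set α // IsChildOf T C J} | (I ∩ C.1).Nonempty} =>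
          (⟨I ∩ A.1.1, (RestrictAux.childB hT hK hJ hIJ hmin _).2 ⟨A.1.1, A.1.2, A.2, rfl⟩⟩ :
            {C : Set α // IsChildOf (restrictTree T I) C K})) := by
        constructor
        · intro A B hAB
          have h1 : I ∩ A.1.1 = I ∩ B.1.1 := congrArg Subtype.val hAB
          rcases eq_or_ne A.1.1 B.1.1 with he | hne'
          · exact Subtype.ext (Subtype.ext he)
          · exfalso
            have hd := RestrictAux.children_disjoint hT A.1.2 B.1.2 hne'
            obtain ⟨x, hx⟩ := A.2
            have hx2 : x ∈ I ∩ B.1.1 := h1 ▸ hx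
            exact absurd (Set.mem_inter hx.2 hx2.2) (by rw [hd]; exact Set.notMem_empty x)
        · intro C'
          obtain ⟨C, hC, hne', heq⟩ := (RestrictAux.childB hT hK hJ hIJ hmin C'.1).1 C'.2
          exact ⟨⟨⟨C, hC⟩, hne'⟩, Subtype.ext heq.symm⟩
      refine ⟨v', RestrictAux.pi0_transfer mul tau taustar kappa (Equiv.ofBijective _ hbij)
        ?_ (fun a => rfl) hv'⟩
      intro a b
      exact (RestrictAux.trace_setLT hT a.1.2 b.1.2 a.2 b.2).symm
end

section
/- Let (S,·,τ,τ*,κ) be a finite ⊕-algebra and let u be a nonempty countable word over S with domain α such that π₀^(u) is defined. Then every evaluation tree (T,γ) with respect to π₀^ over u satisfies γ(α) = π₀^(u). -/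
/-- `sPow mul a n = a^(n+1)`: iterated product of `a` with itself. -/
def sPow {S : Type} (mul : S → S → S) (a : S) : ℕ → S
  | 0 => a
  | n + 1 => mul a (sPow mul a n)

/-- Axioms (A1)–(A4) of a ⊕-algebra `(S, ·, τ, τ*, κ)`. -/
def PlusAlgAxioms {S : Type} (mul : S → S → S) (tau taustar : S → S)
    (kappa : Set S → S) : Prop :=
  -- (A1) associativity
  (∀ a b c : S, mul (mul a b) c = mul a (mul b c)) ∧
  -- (A2) τ is compatible to the right
  (∀ a b : S, tau (mul a b) = mul a (tau (mul b a))) ∧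
  (∀ (a : S) (n : ℕ), tau (sPow mul a n) = tau a) ∧
  -- (A3) τ* is compatible to the left
  (∀ a b : S, taustar (mul b a) = mul (taustar (mul a b)) a) ∧
  (∀ (a : S) (n : ℕ), taustar (sPow mul a n) = taustar a) ∧
  -- (A4) κ is compatible with shuffles
  ∀ P : Set S, P.Nonempty → ∀ c ∈ P, ∀ P' ⊆ P, ∀ P'' : Set S, P''.Nonempty →
    P'' ⊆ {x | x = kappa P ∨ (∃ a ∈ P, x = mul a (kappa P)) ∨
                (∃ b ∈ P, x = mul (kappa P) b) ∨
                (∃ a ∈ P, ∃ b ∈ P, x = mul (mul a (kappa P)) b)} →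
      kappa P = mul (kappa P) (kappa P) ∧
      kappa P = mul (kappa P) (mul c (kappa P)) ∧
      kappa P = tau (kappa P) ∧
      kappa P = tau (mul (kappa P) c) ∧
      kappa P = taustar (kappa P) ∧
      kappa P = taustar (mul c (kappa P)) ∧
      kappa P = kappa (P' ∪ P'')

/-- Axioms (A1)–(A5) of a ◦-algebra `(S, 1, ·, τ, τ*, κ)`. -/
def OAlgAxioms {S : Type} (one : S) (mul : S → S → S) (tau taustar : S → S)
    (kappa : Set S → S) : Prop :=
  PlusAlgAxioms mul tau taustar kappa ∧
  -- (A5)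
  (∀ x : S, mul x one = x) ∧ (∀ x : S, mul one x = x) ∧
  tau one = one ∧ taustar one = one ∧ kappa {one} = one ∧
  ∀ P : Set S, P.Nonempty → kappa (P ∪ {one}) = kappa P
namespace EvalPf13

open Set

variable {S α : Type}

/-! ### Fold and algebra lemmas -/

lemma foldl_cons_assoc (mul : S → S → S)
    (hA : ∀ a b c, mul (mul a b) c = mul a (mul b c)) :
    ∀ (l : List S) (x y : S), List.foldl mul (mul x y) l = mul x (List.foldl mul y l) := by
  intro l
  induction l with
  | nil => intro x y; rfl
  | cons z t ih =>
    intro x y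
    simp only [List.foldl_cons]
    rw [hA, ih]

section Alg

variable {mul : S → S → S} {tau taustar : S → S} {kappa : Set S → S}

lemma tau_bb (hax : PlusAlgAxioms mul tau taustar kappa) (b : S) :
    mul b (tau b) = tau b := by
  have h2 : tau (mul b b) = tau b := by
    have h := hax.2.2.1 b 1
    simpa [sPow] using h
  have h1 := hax.2.1 b b
  rw [h2] at h1
  exact h1.symm

lemma ts_bb (hax : PlusAlgAxioms mul tau taustar kappa) (b : S) :
    mul (taustar b) b = taustar b := by
  have h2 : taustar (mul b b) = taustar b := by
    have h := hax.2.2.2.2.1 b 1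
    simpa [sPow] using h
  have h1 := hax.2.2.2.1 b b
  rw [h2] at h1
  exact h1.symm

lemma sPow_tau (hax : PlusAlgAxioms mul tau taustar kappa) (b : S) :
    ∀ k, mul (sPow mul b k) (tau b) = tau b := by
  intro k
  induction k with
  | zero => exact tau_bb hax b
  | succ k ih =>
    show mul (mul b (sPow mul b k)) (tau b) = tau b
    rw [hax.1, ih, tau_bb hax b]

lemma ts_sPow (hax : PlusAlgAxioms mul tau taustar kappa) (b : S) :
    ∀ k, mul (taustar b) (sPow mul b k) = taustar b := by
  intro k
  induction k with
  | zero => exact ts_bb hax b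
  | succ k ih =>
    show mul (taustar b) (mul b (sPow mul b k)) = taustar b
    rw [← hax.1, ts_bb hax b, ih]

/-- The set of values of the four shapes `κP`, `aκP`, `κPb`, `aκPb`. -/
def Kforms (mul : S → S → S) (kappa : Set S → S) (P : Set S) : Set S :=
  {x | x = kappa P ∨ (∃ a ∈ P, x = mul a (kappa P)) ∨
              (∃ b ∈ P, x = mul (kappa P) b) ∨
              (∃ a ∈ P, ∃ b ∈ P, x = mul (mul a (kappa P)) b)}

section Kap

variable (hax : PlusAlgAxioms mul tau taustar kappa) (P : Set S) (hP : P.Nonempty)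

include hax hP

lemma kpack {c : S} (hc : c ∈ P) :
    kappa P = mul (kappa P) (kappa P) ∧
      kappa P = mul (kappa P) (mul c (kappa P)) ∧
      kappa P = tau (kappa P) ∧
      kappa P = tau (mul (kappa P) c) ∧
      kappa P = taustar (kappa P) ∧
      kappa P = taustar (mul c (kappa P)) ∧
      kappa P = kappa (∅ ∪ {kappa P}) := by
  refine hax.2.2.2.2.2 P hP c hc ∅ (empty_subset P) {kappa P} (singleton_nonempty _) ?_
  intro x hx
  rcases hx with rfl
  exact Or.inl rfl

lemma k_kk : mul (kappa P) (kappa P) = kappa P :=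
  ((kpack hax P hP hP.choose_spec).1).symm

lemma k_ck {c : S} (hc : c ∈ P) : mul (kappa P) (mul c (kappa P)) = kappa P :=
  ((kpack hax P hP hc).2.1).symm

lemma k_tau : tau (kappa P) = kappa P :=
  ((kpack hax P hP hP.choose_spec).2.2.1).symm

lemma k_tauc {c : S} (hc : c ∈ P) : tau (mul (kappa P) c) = kappa P :=
  ((kpack hax P hP hc).2.2.2.1).symm

lemma k_ts : taustar (kappa P) = kappa P :=
  ((kpack hax P hP hP.choose_spec).2.2.2.2.1).symm

lemma k_tsc {c : S} (hc : c ∈ P) : taustar (mul c (kappa P)) = kappa P :=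
  ((kpack hax P hP hc).2.2.2.2.2.1).symm

lemma k_ext {P' P'' : Set S} (h1 : P' ⊆ P) (h2 : P''.Nonempty)
    (h3 : P'' ⊆ Kforms mul kappa P) : kappa (P' ∪ P'') = kappa P :=
  ((hax.2.2.2.2.2 P hP _ hP.choose_spec P' h1 P'' h2 h3).2.2.2.2.2.2).symm

lemma tau_cK {c : S} (hc : c ∈ P) :
    tau (mul c (kappa P)) = mul c (kappa P) := by
  rw [hax.2.1 c (kappa P), k_tauc hax P hP hc]

lemma ts_Kc {c : S} (hc : c ∈ P) :
    taustar (mul (kappa P) c) = mul (kappa P) c := by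
  rw [hax.2.2.2.1 c (kappa P), k_tsc hax P hP hc]

lemma algKK : ∀ Z, mul (kappa P) (mul (kappa P) Z) = mul (kappa P) Z := by
  intro Z
  rw [← hax.1, k_kk hax P hP]

lemma algKcK {c : S} (hc : c ∈ P) :
    ∀ Z, mul (kappa P) (mul c (mul (kappa P) Z)) = mul (kappa P) Z := by
  intro Z
  rw [← hax.1 c (kappa P) Z, ← hax.1, k_ck hax P hP hc]

end Kap

end Alg

/-! ### SetLT and convexity -/

section Ord

variable [LinearOrder α]

lemma setLT_irrefl {I : Set α} (hI : I.Nonempty) : ¬ SetLT I I := by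
  intro h
  obtain ⟨x, hx⟩ := hI
  exact lt_irrefl x (h x hx x hx)

lemma setLT_trans {I J K : Set α} (hJ : J.Nonempty) (h1 : SetLT I J) (h2 : SetLT J K) :
    SetLT I K := by
  intro x hx y hy
  obtain ⟨z, hz⟩ := hJ
  exact lt_trans (h1 x hx z hz) (h2 z hz y hy)

lemma setLT_asymm {I J : Set α} (hI : I.Nonempty) (hJ : J.Nonempty) (h1 : SetLT I J) :
    ¬ SetLT J I := by
  intro h2
  obtain ⟨x, hx⟩ := hI
  obtain ⟨y, hy⟩ := hJ
  exact absurd (lt_trans (h1 x hx y hy) (h2 y hy x hx)) (lt_irrefl x)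

/-- plain convexity (relative to the whole order) -/
def Cvx (I : Set α) : Prop := ∀ ⦃x y z : α⦄, x ∈ I → y ∈ I → x < z → z < y → z ∈ I

lemma cvx_singleton (x : α) : Cvx ({x} : Set α) := by
  intro a b z ha hb h1 h2
  rcases ha with rfl
  rcases hb with rfl
  exact absurd (lt_trans h1 h2) (lt_irrefl _)

end Ord

end EvalPf13
namespace EvalPf13

open Set

variable {S α : Type}

/-! ### Tree lemmas -/

section Tree

variable [LinearOrder α] {T : Set (Set α)}

lemma cvx_of_mem (hT : IsCondTreeOn (Set.univ : Set α) T) {I : Set α} (hI : I ∈ T) :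
    Cvx I := by
  intro x y z hx hy h1 h2
  exact hT.mem_convex I hI x hx y hy z (mem_univ z) h1 h2

lemma tree_wf (hT : IsCondTreeOn (Set.univ : Set α) T) :
    WellFounded (fun J I : {I : Set α // I ∈ T} => J.1 ⊂ I.1) := by
  haveI : IsIrrefl {I : Set α // I ∈ T} (fun J I => J.1 ⊂ I.1) :=
    ⟨fun a => ssubset_irrefl a.1⟩
  haveI : IsTrans {I : Set α // I ∈ T} (fun J I => J.1 ⊂ I.1) :=
    ⟨fun _ _ _ h1 h2 => h1.trans h2⟩
  haveI : IsStrictOrder {I : Set α // I ∈ T} (fun J I => J.1 ⊂ I.1) := ⟨⟩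
  rw [RelEmbedding.wellFounded_iff_isEmpty]
  constructor
  intro f
  have hmono : ∀ {m n : ℕ}, n < m → (f m).1 ⊂ (f n).1 := fun {m n} h => f.map_rel_iff.2 h
  have hinj : Function.Injective (fun n => (f n).1) := by
    intro m n hmn
    by_contra hne
    rcases lt_trichotomy m n with h | h | h
    · exact (hmono h).ne (by simpa using hmn.symm)
    · exact hne h
    · exact (hmono h).ne (by simpa using hmn)
  have hchain : IsChain (· ⊆ ·) (Set.range fun n => (f n).1) := by
    rintro _ ⟨m, rfl⟩ _ ⟨n, rfl⟩ hne
    rcases lt_trichotomy m n with h | h | h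
    · exact Or.inr (hmono h).subset
    · exact (hne (by rw [h])).elim
    · exact Or.inl (hmono h).subset
  have hfin := hT.chains_finite _ (by rintro _ ⟨n, rfl⟩; exact (f n).2) hchain
  exact Set.infinite_range_of_injective hinj hfin

lemma exists_child_superset (hT : IsCondTreeOn (Set.univ : Set α) T) {I J : Set α}
    (hI : I ∈ T) (hJ : J ∈ T) (hJI : J ⊂ I) : ∃ C, IsChildOf T C I ∧ J ⊆ C := by
  classical
  set Ch : Set (Set α) := {K | K ∈ T ∧ J ⊆ K ∧ K ⊂ I} with hCh
  have hchain : IsChain (· ⊆ ·) Ch := by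
    rintro K ⟨hK, hJK, _⟩ K' ⟨hK', hJK', _⟩ hne
    rcases hT.comparable_or_disjoint K hK K' hK' with h | h | h
    · exact Or.inl h
    · exact Or.inr h
    · obtain ⟨x, hx⟩ := hT.mem_nonempty J hJ
      have : x ∈ K ∩ K' := ⟨hJK hx, hJK' hx⟩
      rw [h] at this
      exact this.elim
  have hfin : Ch.Finite := hT.chains_finite Ch (fun K hK => hK.1) hchain
  have hne : Ch.Nonempty := ⟨J, hJ, le_refl _, hJI⟩
  obtain ⟨M, hM, hmax⟩ := Set.Finite.exists_maximalFor id Ch hfin hne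
  refine ⟨M, ⟨hM.1, hM.2.2, ?_⟩, hM.2.1⟩
  intro K hK hMK
  rcases hT.comparable_or_disjoint K hK I hI with h | h | h
  · rcases eq_or_ne K I with rfl | hKI
    · exact le_refl _
    · have hKCh : K ∈ Ch := ⟨hK, le_trans hM.2.1 hMK.subset, ⟨h, fun hIK => hKI (le_antisymm h hIK)⟩⟩
      exact absurd (le_antisymm hMK.subset (hmax hKCh hMK.subset)) hMK.ne
  · exact h
  · obtain ⟨x, hx⟩ := hT.mem_nonempty M hM.1
    have : x ∈ K ∩ I := ⟨hMK.subset hx, hM.2.2.subset hx⟩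
    rw [h] at this
    exact this.elim

lemma not_leaf_iff (hT : IsCondTreeOn (Set.univ : Set α) T) {I : Set α} (hI : I ∈ T) :
    ¬ IsLeafOf T I ↔ ∃ J ∈ T, J ⊂ I := by
  constructor
  · intro h
    by_contra hn
    push_neg at hn
    exact h ⟨hI, fun J hJ hJI => by
      by_contra hne
      exact hn J hJ ⟨hJI, fun hIJ => hne (le_antisymm hJI hIJ)⟩⟩
  · rintro ⟨J, hJ, hJI⟩ ⟨_, hleaf⟩
    exact hJI.ne (hleaf J hJ hJI.subset)

lemma children_cover (hT : IsCondTreeOn (Set.univ : Set α) T) {I : Set α}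
    (hI : I ∈ T) (hnl : ¬ IsLeafOf T I) : ∀ x ∈ I, ∃ C, IsChildOf T C I ∧ x ∈ C := by
  obtain ⟨J, hJ, hJI⟩ := (not_leaf_iff hT hI).1 hnl
  have hU : ⋃₀ {J | J ∈ T ∧ J ⊂ I} = I := by
    rcases hT.children_union I hI with h | h
    · exact h
    · obtain ⟨x, hx⟩ := hT.mem_nonempty J hJ
      have : x ∈ ⋃₀ {J | J ∈ T ∧ J ⊂ I} := ⟨J, ⟨hJ, hJI⟩, hx⟩
      rw [h] at this
      exact this.elim
  intro x hx
  rw [← hU] at hx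
  obtain ⟨K, ⟨hK, hKI⟩, hxK⟩ := hx
  obtain ⟨C, hC, hKC⟩ := exists_child_superset hT hI hK hKI
  exact ⟨C, hC, hKC hxK⟩

lemma child_disjoint (hT : IsCondTreeOn (Set.univ : Set α) T) {I C C' : Set α}
    (h1 : IsChildOf T C I) (h2 : IsChildOf T C' I) (hne : C ≠ C') : C ∩ C' = ∅ := by
  rcases hT.comparable_or_disjoint C h1.1 C' h2.1 with h | h | h
  · have : C ⊂ C' := ⟨h, fun h' => hne (le_antisymm h h')⟩
    exact absurd (h1.2.2 C' h2.1 this) (fun hsub => h2.2.1.ne (le_antisymm h2.2.1.subset hsub))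
  · have : C' ⊂ C := ⟨h, fun h' => hne.symm (le_antisymm h h')⟩
    exact absurd (h2.2.2 C h1.1 this) (fun hsub => h1.2.1.ne (le_antisymm h1.2.1.subset hsub))
  · exact h

lemma child_lt_or_gt (hT : IsCondTreeOn (Set.univ : Set α) T) {I C C' : Set α}
    (h1 : IsChildOf T C I) (h2 : IsChildOf T C' I) (hne : C ≠ C') :
    SetLT C C' ∨ SetLT C' C := by
  have hdis := child_disjoint hT h1 h2 hne
  have hCvx := cvx_of_mem hT h1.1
  have hCvx' := cvx_of_mem hT h2.1
  have hmem : ∀ z, z ∈ C → z ∈ C' → False := by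
    intro z hz hz'
    have : z ∈ C ∩ C' := ⟨hz, hz'⟩
    rw [hdis] at this
    exact this
  obtain ⟨c, hc⟩ := hT.mem_nonempty C h1.1
  obtain ⟨c', hc'⟩ := hT.mem_nonempty C' h2.1
  -- a key step: if some element of A is below some element of B, then all are
  have key : ∀ (A B : Set α), Cvx A → Cvx B → (∀ z, z ∈ A → z ∈ B → False) →
      ∀ x ∈ A, ∀ y ∈ B, x < y → SetLT A B := by
    intro A B hA hB hAB x hx y hy hxy x' hx' y' hy'
    by_contra hle
    push_neg at hle
    have hxy' : y' < x' := lt_of_le_of_ne hle (fun h => hAB x' hx' (h ▸ hy'))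
    rcases lt_trichotomy x' y with h | h | h
    · exact hAB x' hx' (hB hy' hy hxy' h)
    · exact hAB x' hx' (h ▸ hy)
    · exact hAB y (hA hx hx' hxy h) hy
  rcases lt_trichotomy c c' with h | h | h
  · exact Or.inl (key C C' hCvx hCvx' hmem c hc c' hc' h)
  · exact absurd (h ▸ hc') (fun h' => hmem c hc h')
  · exact Or.inr (key C' C hCvx' hCvx (fun z h1 h2 => hmem z h2 h1) c' hc' c hc h)

end Tree

/-! ### sequences -/

lemma nat_no_desc (F : ℕ → ℕ) (h : ∀ n, F (n + 1) < F n) : False := by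
  have key : ∀ n, F n + n ≤ F 0 := by
    intro n
    induction n with
    | zero => simp
    | succ k ih => have := h k; omega
  have := key (F 0 + 1)
  omega

lemma seq_of_succ {ι : Type} (r : ι → ι → Prop) (D : Set ι) (hne : D.Nonempty)
    (hstep : ∀ x ∈ D, ∃ y ∈ D, r x y) :
    ∃ f : ℕ → ι, (∀ n, f n ∈ D) ∧ ∀ n, r (f n) (f (n + 1)) := by
  classical
  choose F hF1 hF2 using hstep
  let f : ℕ → {x // x ∈ D} := fun n =>
    Nat.rec ⟨hne.choose, hne.choose_spec⟩ (fun _ p => ⟨F p.1 p.2, hF1 p.1 p.2⟩) n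
  exact ⟨fun n => (f n).1, fun n => (f n).2, fun n => hF2 (f n).1 (f n).2⟩

end EvalPf13
namespace EvalPf13

open Set

variable {S α : Type}

/-! ### The master induction -/

section Master

variable [LinearOrder α] {mul : S → S → S} {tau taustar : S → S} {kappa : Set S → S}
  {u : α → S} {T : Set (Set α)} {γ : Set α → S}

lemma eval_eq (h : IsEvalTreeHat mul tau taustar kappa u Set.univ T γ)
    (ν : Set α → S)
    (hsing : ∀ x : α, ν {x} = u x)
    (hcomp : ∀ I, I ∈ T → ¬ IsLeafOf T I → ∀ v : S,
      Pi0HatRel mul tau taustar kappa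
        (fun J K : {J : Set α // IsChildOf T J I} => SetLT J.1 K.1)
        (fun J : {J : Set α // IsChildOf T J I} => ν J.1) v → v = ν I) :
    ∀ I, I ∈ T → γ I = ν I := by
  intro I hI
  refine (tree_wf h.tree).induction (C := fun p => γ p.1 = ν p.1) (a := ⟨I, hI⟩) ?_
  rintro ⟨J, hJ⟩ IH
  by_cases hl : IsLeafOf T J
  · obtain ⟨x, hx, hγ⟩ := h.leaf_spec J hl
    show γ J = ν J
    subst hx
    rw [hγ, hsing]
  · have hrel := h.node_spec J hJ hl
    have hlab : (fun C : {C : Set α // IsChildOf T C J} => γ C.1) =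
        (fun C : {C : Set α // IsChildOf T C J} => ν C.1) := by
      funext C
      exact IH ⟨C.1, C.2.1⟩ C.2.2.1
    rw [hlab] at hrel
    exact hcomp J hJ hl (γ J) hrel

end Master

/-! ### Generic folding along finitely many blocks -/

section FoldJoin

variable [LinearOrder α] {mul : S → S → S}

lemma fold_join (ν : Set α → S)
    (join : ∀ A B : Set α, A.Nonempty → B.Nonempty → Cvx A → Cvx B → SetLT A B →
      (¬ ∃ z, (∀ x ∈ A, x < z) ∧ (∀ y ∈ B, z < y)) → Cvx (A ∪ B) →
      mul (ν A) (ν B) = ν (A ∪ B)) :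
    ∀ (n : ℕ) (g : Fin (n + 1) → Set α),
      (∀ i, (g i).Nonempty) → (∀ i, Cvx (g i)) →
      (∀ i j, i < j → SetLT (g i) (g j)) →
      (∀ x y z : α, x ∈ (⋃ i, g i) → y ∈ (⋃ i, g i) → x < z → z < y → z ∈ ⋃ i, g i) →
      List.foldl mul (ν (g 0)) (List.ofFn fun i : Fin n => ν (g i.succ)) = ν (⋃ i, g i) := by
  intro n
  induction n with
  | zero =>
    intro g hne hcvx hmono hbet
    have h0 : (⋃ i, g i) = g 0 := by
      apply Set.Subset.antisymm
      · intro x hx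
        obtain ⟨i, hi⟩ := mem_iUnion.1 hx
        have : i = 0 := Fin.eq_zero i
        rwa [this] at hi
      · exact subset_iUnion g 0
    rw [h0]
    rfl
  | succ n IH =>
    intro g hne hcvx hmono hbet
    set g' : Fin (n + 1) → Set α := fun i => g i.castSucc with hg'
    have hUsub : (⋃ i, g' i) ⊆ ⋃ i, g i := by
      intro x hx
      obtain ⟨i, hi⟩ := mem_iUnion.1 hx
      exact mem_iUnion.2 ⟨i.castSucc, hi⟩
    have hUeq : (⋃ i, g i) = (⋃ i, g' i) ∪ g (Fin.last (n + 1)) := by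
      apply Set.Subset.antisymm
      · intro x hx
        obtain ⟨i, hi⟩ := mem_iUnion.1 hx
        rcases eq_or_ne i (Fin.last (n + 1)) with rfl | hne'
        · exact Or.inr hi
        · obtain ⟨j, rfl⟩ := Fin.exists_castSucc_eq.2 hne'
          exact Or.inl (mem_iUnion.2 ⟨j, hi⟩)
      · rintro x (hx | hx)
        · exact hUsub hx
        · exact mem_iUnion.2 ⟨Fin.last (n + 1), hx⟩
    have hbet' : ∀ x y z : α, x ∈ (⋃ i, g' i) → y ∈ (⋃ i, g' i) → x < z → z < y →
        z ∈ ⋃ i, g' i := by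
      intro x y z hx hy h1 h2
      have hz : z ∈ ⋃ i, g i := hbet x y z (hUsub hx) (hUsub hy) h1 h2
      obtain ⟨c, hc⟩ := mem_iUnion.1 hz
      rcases eq_or_ne c (Fin.last (n + 1)) with rfl | hne'
      · obtain ⟨j, hj⟩ := mem_iUnion.1 hy
        have hlt : SetLT (g j.castSucc) (g (Fin.last (n + 1))) :=
          hmono _ _ (Fin.castSucc_lt_last j)
        exact absurd h2 (not_lt.2 (hlt y hj z hc).le)
      · obtain ⟨j, rfl⟩ := Fin.exists_castSucc_eq.2 hne'
        exact mem_iUnion.2 ⟨j, hc⟩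
    have hIH := IH g' (fun i => hne _) (fun i => hcvx _)
      (fun i j hij => hmono _ _ (by simpa using hij)) hbet'
    have hfe : (fun i : Fin n => ν (g i.castSucc.succ)) =
        (fun i : Fin n => ν (g' i.succ)) := by
      funext i
      show ν (g i.castSucc.succ) = ν (g i.succ.castSucc)
      rw [Fin.succ_castSucc]
    have hlist : (List.ofFn fun i : Fin (n + 1) => ν (g i.succ)) =
        (List.ofFn fun i : Fin n => ν (g' i.succ)).concat (ν (g (Fin.last (n + 1)))) := by
      rw [List.ofFn_succ', ← hfe, Fin.succ_last]
    have hg0 : g 0 = g' 0 := by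
      show g 0 = g (Fin.castSucc 0)
      congr 1
    have hUne : (⋃ i, g' i).Nonempty := by
      obtain ⟨x, hx⟩ := hne (Fin.castSucc 0)
      exact ⟨x, mem_iUnion.2 ⟨0, hx⟩⟩
    have hUlt : SetLT (⋃ i, g' i) (g (Fin.last (n + 1))) := by
      intro x hx y hy
      obtain ⟨i, hi⟩ := mem_iUnion.1 hx
      exact hmono _ _ (Fin.castSucc_lt_last i) x hi y hy
    have hadj : ¬ ∃ z, (∀ x ∈ ⋃ i, g' i, x < z) ∧ (∀ y ∈ g (Fin.last (n + 1)), z < y) := by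
      rintro ⟨z, hz1, hz2⟩
      obtain ⟨x0, hx0⟩ := hUne
      obtain ⟨y0, hy0⟩ := hne (Fin.last (n + 1))
      have hz : z ∈ ⋃ i, g i := hbet x0 y0 z (hUsub hx0) (mem_iUnion.2 ⟨_, hy0⟩)
        (hz1 x0 hx0) (hz2 y0 hy0)
      obtain ⟨c, hc⟩ := mem_iUnion.1 hz
      rcases eq_or_ne c (Fin.last (n + 1)) with rfl | hne'
      · exact lt_irrefl z (hz2 z hc)
      · obtain ⟨j, rfl⟩ := Fin.exists_castSucc_eq.2 hne'
        exact lt_irrefl z (hz1 z (mem_iUnion.2 ⟨j, hc⟩))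
    have hCvxU : Cvx ((⋃ i, g' i) ∪ g (Fin.last (n + 1))) := by
      rw [← hUeq]
      intro x y z hx hy h1 h2
      exact hbet x y z hx hy h1 h2
    have hCvxU' : Cvx (⋃ i, g' i) := by
      intro x y z hx hy h1 h2
      exact hbet' x y z hx hy h1 h2
    rw [hlist, List.concat_eq_append, List.foldl_append]
    simp only [List.foldl_cons, List.foldl_nil]
    rw [hg0, hIH, hUeq]
    exact join _ _ hUne (hne _) hCvxU' (hcvx _) hUlt hadj hCvxU

end FoldJoin

end EvalPf13
namespace EvalPf13

open Set

variable {S α : Type}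

/-! ### Products over finite sets -/

section ProdW

variable [LinearOrder α]

noncomputable def listOf (I : Set α) : List α := by
  classical exact if h : I.Finite then h.toFinset.sort (· ≤ ·) else []

lemma mem_listOf {I : Set α} (hI : I.Finite) {x : α} : x ∈ listOf I ↔ x ∈ I := by
  classical
  rw [listOf]
  simp only [hI, dif_pos]
  rw [Finset.mem_sort, Set.Finite.mem_toFinset]

lemma listOf_sorted (I : Set α) : List.Pairwise (· ≤ ·) (listOf I) := by
  classical
  rw [listOf]
  split
  · exact Finset.pairwise_sort _ _
  · exact List.Pairwise.nil

lemma listOf_nodup (I : Set α) : (listOf I).Nodup := by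
  classical
  rw [listOf]
  split
  · exact Finset.sort_nodup _ _
  · exact List.nodup_nil

lemma listOf_ne_nil {I : Set α} (hI : I.Finite) (hne : I.Nonempty) : listOf I ≠ [] :=
  List.ne_nil_of_mem ((mem_listOf hI).2 hne.choose_spec)

lemma listOf_singleton (x : α) : listOf ({x} : Set α) = [x] := by
  classical
  rw [listOf]
  simp only [Set.finite_singleton, dif_pos]
  rw [Set.Finite.toFinset_singleton, Finset.sort_singleton]

lemma listOf_union {A B : Set α} (hA : A.Finite) (hB : B.Finite) (hlt : SetLT A B) :
    listOf (A ∪ B) = listOf A ++ listOf B := by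
  classical
  have hAB : (A ∪ B).Finite := hA.union hB
  have hdisj : ∀ x ∈ listOf A, ∀ y ∈ listOf B, x ≠ y := by
    intro x hx y hy
    exact ne_of_lt (hlt x ((mem_listOf hA).1 hx) y ((mem_listOf hB).1 hy))
  refine (fun hp hs => List.Perm.eq_of_pairwise' (listOf_sorted _) hs hp) ?_ ?_
  · refine List.perm_of_nodup_nodup_toFinset_eq (listOf_nodup _) ?_ ?_
    · rw [List.nodup_append]
      exact ⟨listOf_nodup _, listOf_nodup _, hdisj⟩
    · ext y
      simp only [List.mem_toFinset, List.mem_append]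
      rw [mem_listOf hAB, mem_listOf hA, mem_listOf hB]
      exact Set.mem_union y A B
  · rw [List.pairwise_append]
    exact ⟨listOf_sorted _, listOf_sorted _, fun x hx y hy =>
      le_of_lt (hlt x ((mem_listOf hA).1 hx) y ((mem_listOf hB).1 hy))⟩

noncomputable def prodl (mul : S → S → S) (j : S) : List S → S
  | [] => j
  | x :: t => List.foldl mul x t

noncomputable def prodW [Nonempty α] (mul : S → S → S) (u : α → S) (I : Set α) : S :=
  prodl mul (u (Classical.arbitrary α)) ((listOf I).map u)

lemma prodl_append {mul : S → S → S} (hA : ∀ a b c, mul (mul a b) c = mul a (mul b c))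
    (j : S) {l1 l2 : List S} (h1 : l1 ≠ []) (h2 : l2 ≠ []) :
    prodl mul j (l1 ++ l2) = mul (prodl mul j l1) (prodl mul j l2) := by
  obtain ⟨x, t, rfl⟩ := List.exists_cons_of_ne_nil h1
  obtain ⟨y, t2, rfl⟩ := List.exists_cons_of_ne_nil h2
  show List.foldl mul x (t ++ y :: t2) = mul (List.foldl mul x t) (List.foldl mul y t2)
  rw [List.foldl_append]
  show List.foldl mul (mul (List.foldl mul x t) y) t2 = _
  rw [foldl_cons_assoc mul hA]

lemma foldl_allb {mul : S → S → S} (hA : ∀ a b c, mul (mul a b) c = mul a (mul b c))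
    (b : S) : ∀ l : List S, (∀ y ∈ l, y = b) → List.foldl mul b l = sPow mul b l.length := by
  intro l
  induction l with
  | nil => intro _; rfl
  | cons y t ih =>
    intro hall
    have hy : y = b := hall y (List.mem_cons_self)
    subst hy
    show List.foldl mul (mul y y) t = sPow mul y (t.length + 1)
    rw [foldl_cons_assoc mul hA, ih (fun z hz => hall z (List.mem_cons_of_mem _ hz))]
    rfl

variable [Nonempty α] {mul : S → S → S} {u : α → S}

lemma prodW_singleton (mul : S → S → S) (u : α → S) (x : α) :
    prodW mul u ({x} : Set α) = u x := by
  rw [prodW, listOf_singleton]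
  rfl

lemma prodW_union (hA : ∀ a b c, mul (mul a b) c = mul a (mul b c))
    {A B : Set α} (hAf : A.Finite) (hBf : B.Finite) (hAne : A.Nonempty)
    (hBne : B.Nonempty) (hlt : SetLT A B) :
    prodW mul u (A ∪ B) = mul (prodW mul u A) (prodW mul u B) := by
  rw [prodW, prodW, prodW, listOf_union hAf hBf hlt, List.map_append]
  exact prodl_append hA _ (by simpa using listOf_ne_nil hAf hAne)
    (by simpa using listOf_ne_nil hBf hBne)

lemma prodW_allb {A : Set α} (hA : ∀ a b c, mul (mul a b) c = mul a (mul b c))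
    (hAf : A.Finite) (hAne : A.Nonempty) {b : S} (hall : ∀ x ∈ A, u x = b) :
    ∃ k, prodW mul u A = sPow mul b k := by
  obtain ⟨x, t, ht⟩ := List.exists_cons_of_ne_nil (listOf_ne_nil hAf hAne)
  have hx : u x = b := hall x ((mem_listOf hAf).1 (ht ▸ List.mem_cons_self))
  refine ⟨(t.map u).length, ?_⟩
  rw [prodW, ht]
  show List.foldl mul (u x) (t.map u) = _
  rw [hx]
  refine foldl_allb hA b _ ?_
  intro y hy
  obtain ⟨z, hz, rfl⟩ := List.mem_map.1 hy
  exact hall z ((mem_listOf hAf).1 (ht ▸ List.mem_cons_of_mem _ hz))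

lemma prodW_eq_foldl {A : Set α} (hAf : A.Finite) (hAne : A.Nonempty) :
    ∃ x ∈ A, ∃ t : List α, (∀ z ∈ t, z ∈ A) ∧
      prodW mul u A = List.foldl mul (u x) (t.map u) := by
  obtain ⟨x, t, ht⟩ := List.exists_cons_of_ne_nil (listOf_ne_nil hAf hAne)
  refine ⟨x, (mem_listOf hAf).1 (ht ▸ List.mem_cons_self), t,
    fun z hz => (mem_listOf hAf).1 (ht ▸ List.mem_cons_of_mem _ hz), ?_⟩
  rw [prodW, ht]
  rfl

end ProdW

end EvalPf13
namespace EvalPf13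

open Set

variable {S α : Type}

/-! ### Children of a node -/

section Node

variable [LinearOrder α] {T : Set (Set α)} {I : Set α}

lemma ch_ne (hT : IsCondTreeOn (Set.univ : Set α) T) (C : {J // IsChildOf T J I}) :
    C.1.Nonempty := hT.mem_nonempty _ C.2.1

lemma ch_cvx (hT : IsCondTreeOn (Set.univ : Set α) T) (C : {J // IsChildOf T J I}) :
    Cvx C.1 := cvx_of_mem hT C.2.1

lemma ch_sub (C : {J // IsChildOf T J I}) : C.1 ⊆ I := C.2.2.1.subset

lemma ch_cover (hT : IsCondTreeOn (Set.univ : Set α) T) (hI : I ∈ T)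
    (hnl : ¬ IsLeafOf T I) : ∀ x ∈ I, ∃ C : {J // IsChildOf T J I}, x ∈ C.1 := by
  intro x hx
  obtain ⟨C, hC, hxC⟩ := children_cover hT hI hnl x hx
  exact ⟨⟨C, hC⟩, hxC⟩

lemma ch_disj (hT : IsCondTreeOn (Set.univ : Set α) T) {C C' : {J // IsChildOf T J I}}
    (hne : C ≠ C') : ∀ x, x ∈ C.1 → x ∈ C'.1 → False := by
  intro x h1 h2
  have := child_disjoint hT C.2 C'.2 (fun h => hne (Subtype.ext h))
  have hx : x ∈ C.1 ∩ C'.1 := ⟨h1, h2⟩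
  rw [this] at hx
  exact hx

lemma ch_lt_or_gt (hT : IsCondTreeOn (Set.univ : Set α) T) {C C' : {J // IsChildOf T J I}}
    (hne : C ≠ C') : SetLT C.1 C'.1 ∨ SetLT C'.1 C.1 :=
  child_lt_or_gt hT C.2 C'.2 (fun h => hne (Subtype.ext h))

/-- if `z` lies strictly between two consecutive children, contradiction. -/
lemma children_adjacent (hT : IsCondTreeOn (Set.univ : Set α) T) (hI : I ∈ T)
    (hnl : ¬ IsLeafOf T I) (C C' : {J // IsChildOf T J I})
    (hmid : ∀ K : {J // IsChildOf T J I}, K ≠ C → K ≠ C' →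
      SetLT K.1 C.1 ∨ SetLT C'.1 K.1) :
    ¬ ∃ z, (∀ x ∈ C.1, x < z) ∧ (∀ y ∈ C'.1, z < y) := by
  rintro ⟨z, hz1, hz2⟩
  obtain ⟨x0, hx0⟩ := ch_ne hT C
  obtain ⟨y0, hy0⟩ := ch_ne hT C'
  have hzI : z ∈ I := cvx_of_mem hT hI (ch_sub C hx0) (ch_sub C' hy0)
    (hz1 x0 hx0) (hz2 y0 hy0)
  obtain ⟨K, hzK⟩ := ch_cover hT hI hnl z hzI
  have hKC : K ≠ C := fun h => lt_irrefl z (hz1 z (h ▸ hzK))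
  have hKC' : K ≠ C' := fun h => lt_irrefl z (hz2 z (h ▸ hzK))
  rcases hmid K hKC hKC' with h | h
  · exact lt_irrefl z (lt_trans (h z hzK x0 hx0) (hz1 x0 hx0))
  · exact lt_irrefl z (lt_trans (hz2 y0 hy0) (h y0 hy0 z hzK))

lemma least_transfer (hT : IsCondTreeOn (Set.univ : Set α) T) (hI : I ∈ T)
    (hnl : ¬ IsLeafOf T I) (A : {J // IsChildOf T J I})
    (hA : ∀ C : {J // IsChildOf T J I}, C ≠ A → SetLT A.1 C.1) :
    ∀ m, (IsLeast I m ↔ IsLeast A.1 m) := by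
  intro m
  constructor
  · rintro ⟨hm, hlb⟩
    obtain ⟨C, hC⟩ := ch_cover hT hI hnl m hm
    rcases eq_or_ne C A with rfl | hne
    · exact ⟨hC, fun y hy => hlb (ch_sub C hy)⟩
    · obtain ⟨x, hx⟩ := ch_ne hT A
      exact absurd (hA C hne x hx m hC) (not_lt.2 (hlb (ch_sub A hx)))
  · rintro ⟨hm, hlb⟩
    refine ⟨ch_sub A hm, fun y hy => ?_⟩
    obtain ⟨C, hC⟩ := ch_cover hT hI hnl y hy
    rcases eq_or_ne C A with rfl | hne
    · exact hlb hC
    · exact le_of_lt (hA C hne m hm y hC)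

lemma greatest_transfer (hT : IsCondTreeOn (Set.univ : Set α) T) (hI : I ∈ T)
    (hnl : ¬ IsLeafOf T I) (B : {J // IsChildOf T J I})
    (hB : ∀ C : {J // IsChildOf T J I}, C ≠ B → SetLT C.1 B.1) :
    ∀ m, (IsGreatest I m ↔ IsGreatest B.1 m) := by
  intro m
  constructor
  · rintro ⟨hm, hub⟩
    obtain ⟨C, hC⟩ := ch_cover hT hI hnl m hm
    rcases eq_or_ne C B with rfl | hne
    · exact ⟨hC, fun y hy => hub (ch_sub C hy)⟩
    · obtain ⟨x, hx⟩ := ch_ne hT B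
      exact absurd (hB C hne m hC x hx) (not_lt.2 (hub (ch_sub B hx)))
  · rintro ⟨hm, hub⟩
    refine ⟨ch_sub B hm, fun y hy => ?_⟩
    obtain ⟨C, hC⟩ := ch_cover hT hI hnl y hy
    rcases eq_or_ne C B with rfl | hne
    · exact hub hC
    · exact le_of_lt (hB C hne y hC m hm)

lemma no_greatest_of_nomax (hT : IsCondTreeOn (Set.univ : Set α) T) (hI : I ∈ T)
    (hnl : ¬ IsLeafOf T I)
    (hnomax : ∀ C : {J // IsChildOf T J I}, ∃ C' : {J // IsChildOf T J I},
      SetLT C.1 C'.1) :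
    ¬ ∃ M, IsGreatest I M := by
  rintro ⟨M, hM, hub⟩
  obtain ⟨C, hC⟩ := ch_cover hT hI hnl M hM
  obtain ⟨C', hlt⟩ := hnomax C
  obtain ⟨y, hy⟩ := ch_ne hT C'
  exact absurd (hlt M hC y hy) (not_lt.2 (hub (ch_sub C' hy)))

lemma no_least_of_nomin (hT : IsCondTreeOn (Set.univ : Set α) T) (hI : I ∈ T)
    (hnl : ¬ IsLeafOf T I)
    (hnomin : ∀ C : {J // IsChildOf T J I}, ∃ C' : {J // IsChildOf T J I},
      SetLT C'.1 C.1) :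
    ¬ ∃ m, IsLeast I m := by
  rintro ⟨m, hm, hlb⟩
  obtain ⟨C, hC⟩ := ch_cover hT hI hnl m hm
  obtain ⟨C', hlt⟩ := hnomin C
  obtain ⟨y, hy⟩ := ch_ne hT C'
  exact absurd (hlt y hy m hC) (not_lt.2 (hlb (ch_sub C' hy)))

lemma ch_iUnion (hT : IsCondTreeOn (Set.univ : Set α) T) (hI : I ∈ T)
    (hnl : ¬ IsLeafOf T I) {n : ℕ} (g : Fin (n + 1) → {J // IsChildOf T J I})
    (hsurj : ∀ C, ∃ i, g i = C) : (⋃ i, (g i).1) = I := by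
  apply Set.Subset.antisymm
  · exact Set.iUnion_subset fun i => ch_sub (g i)
  · intro x hx
    obtain ⟨C, hC⟩ := ch_cover hT hI hnl x hx
    obtain ⟨i, rfl⟩ := hsurj C
    exact Set.mem_iUnion.2 ⟨i, hC⟩

/-- case-1 composition: the value of a node with finitely many children. -/
lemma comp_case1 {mul : S → S → S} (hT : IsCondTreeOn (Set.univ : Set α) T)
    (hI : I ∈ T) (hnl : ¬ IsLeafOf T I) (ν : Set α → S)
    (join : ∀ A B : Set α, A.Nonempty → B.Nonempty → Cvx A → Cvx B → SetLT A B →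
      (¬ ∃ z, (∀ x ∈ A, x < z) ∧ (∀ y ∈ B, z < y)) → Cvx (A ∪ B) →
      mul (ν A) (ν B) = ν (A ∪ B))
    {n : ℕ} (g : Fin (n + 1) → {J // IsChildOf T J I})
    (hmono : ∀ i j, i < j → SetLT (g i).1 (g j).1) (hsurj : ∀ C, ∃ i, g i = C) :
    List.foldl mul (ν (g 0).1) (List.ofFn fun i : Fin n => ν (g i.succ).1) = ν I := by
  have hU := ch_iUnion hT hI hnl g hsurj
  have h := fold_join ν join n (fun i => (g i).1) (fun i => ch_ne hT (g i))
    (fun i => ch_cvx hT (g i)) hmono ?_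
  · rw [hU] at h
    exact h
  · rw [hU]
    intro x y z hx hy h1 h2
    exact cvx_of_mem hT hI hx hy h1 h2

/-- ordering facts for an ω-sequence of children -/
lemma omega_first {g : ℕ → {J // IsChildOf T J I}}
    (hmono : ∀ m n, m < n → SetLT (g m).1 (g n).1) (hsurj : ∀ C, ∃ n, g n = C) :
    ∀ C : {J // IsChildOf T J I}, C ≠ g 0 → SetLT (g 0).1 C.1 := by
  intro C hne
  obtain ⟨m, rfl⟩ := hsurj C
  rcases Nat.eq_zero_or_pos m with rfl | hm
  · exact absurd rfl hne
  · exact hmono 0 m hm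

lemma omega_nomax {g : ℕ → {J // IsChildOf T J I}}
    (hmono : ∀ m n, m < n → SetLT (g m).1 (g n).1) (hsurj : ∀ C, ∃ n, g n = C) :
    ∀ C : {J // IsChildOf T J I}, ∃ C' : {J // IsChildOf T J I}, SetLT C.1 C'.1 := by
  intro C
  obtain ⟨m, rfl⟩ := hsurj C
  exact ⟨g (m + 1), hmono m (m + 1) (Nat.lt_succ_self m)⟩

lemma omega_mid (hT : IsCondTreeOn (Set.univ : Set α) T)
    {g : ℕ → {J // IsChildOf T J I}}
    (hmono : ∀ m n, m < n → SetLT (g m).1 (g n).1) (hsurj : ∀ C, ∃ n, g n = C)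
    (n : ℕ) : ∀ K : {J // IsChildOf T J I}, K ≠ g n → K ≠ g (n + 1) →
      SetLT K.1 (g n).1 ∨ SetLT (g (n + 1)).1 K.1 := by
  intro K h1 h2
  obtain ⟨m, rfl⟩ := hsurj K
  rcases lt_trichotomy m n with h | rfl | h
  · exact Or.inl (hmono m n h)
  · exact absurd rfl h1
  · rcases Nat.lt_or_ge (n + 1) m with h' | h'
    · exact Or.inr (hmono (n + 1) m h')
    · have : m = n + 1 := le_antisymm h' h
      exact absurd (congrArg g this) h2

lemma omegaStar_first {g : ℕ → {J // IsChildOf T J I}}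
    (hmono : ∀ m n, m < n → SetLT (g n).1 (g m).1) (hsurj : ∀ C, ∃ n, g n = C) :
    ∀ C : {J // IsChildOf T J I}, C ≠ g 0 → SetLT C.1 (g 0).1 := by
  intro C hne
  obtain ⟨m, rfl⟩ := hsurj C
  rcases Nat.eq_zero_or_pos m with rfl | hm
  · exact absurd rfl hne
  · exact hmono 0 m hm

lemma omegaStar_nomin {g : ℕ → {J // IsChildOf T J I}}
    (hmono : ∀ m n, m < n → SetLT (g n).1 (g m).1) (hsurj : ∀ C, ∃ n, g n = C) :
    ∀ C : {J // IsChildOf T J I}, ∃ C' : {J // IsChildOf T J I}, SetLT C'.1 C.1 := by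
  intro C
  obtain ⟨m, rfl⟩ := hsurj C
  exact ⟨g (m + 1), hmono m (m + 1) (Nat.lt_succ_self m)⟩

lemma omegaStar_mid (hT : IsCondTreeOn (Set.univ : Set α) T)
    {g : ℕ → {J // IsChildOf T J I}}
    (hmono : ∀ m n, m < n → SetLT (g n).1 (g m).1) (hsurj : ∀ C, ∃ n, g n = C)
    (n : ℕ) : ∀ K : {J // IsChildOf T J I}, K ≠ g (n + 1) → K ≠ g n →
      SetLT K.1 (g (n + 1)).1 ∨ SetLT (g n).1 K.1 := by
  intro K h1 h2
  obtain ⟨m, rfl⟩ := hsurj K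
  rcases lt_trichotomy m n with h | rfl | h
  · exact Or.inr (hmono m n h)
  · exact absurd rfl h2
  · rcases Nat.lt_or_ge (n + 1) m with h' | h'
    · exact Or.inl (hmono (n + 1) m h')
    · have : m = n + 1 := le_antisymm h' h
      exact absurd (congrArg g this) h1

end Node

end EvalPf13
namespace EvalPf13

open Set

variable {S α : Type}

/-! ### dispatch helpers -/

section Dispatch

variable [LinearOrder α] {T : Set (Set α)} {I : Set α}

lemma children_finite_of_finite [Finite α] (hT : IsCondTreeOn (Set.univ : Set α) T) :
    Finite {J // IsChildOf T J I} := by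
  classical
  have hpt : ∀ C : {J // IsChildOf T J I}, ∃ x, x ∈ C.1 := fun C => ch_ne hT C
  choose pt hpt using hpt
  have hinj : Function.Injective pt := by
    intro C C' h
    by_contra hne
    exact ch_disj hT hne (pt C) (hpt C) (h ▸ hpt C')
  exact Finite.of_injective pt hinj

lemma children_nat_inj_absurd (hFin : Finite {J // IsChildOf T J I})
    {f : ℕ → {J // IsChildOf T J I}} (hne : ∀ n m, n < m → f n ≠ f m) : False := by
  have hinj : Function.Injective f := by
    intro n m h
    rcases lt_trichotomy n m with hh | hh | hh
    · exact absurd h (hne n m hh)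
    · exact hh
    · exact absurd h.symm (hne m n hh)
  have := Infinite.of_injective f hinj
  exact not_finite {J // IsChildOf T J I}

lemma setLT_chain (hT : IsCondTreeOn (Set.univ : Set α) T)
    {f : ℕ → {J // IsChildOf T J I}} (hstep : ∀ n, SetLT (f n).1 (f (n + 1)).1) :
    ∀ n m, n < m → SetLT (f n).1 (f m).1 := by
  intro n m h
  induction h with
  | refl => exact hstep n
  | step h ih => exact setLT_trans (ch_ne hT _) ih (hstep _)

lemma chain_ne (hT : IsCondTreeOn (Set.univ : Set α) T)
    {f : ℕ → {J // IsChildOf T J I}} (hmono : ∀ n m, n < m → SetLT (f n).1 (f m).1) :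
    ∀ n m, n < m → f n ≠ f m := by
  intro n m h heq
  exact setLT_irrefl (ch_ne hT (f m)) (heq ▸ hmono n m h)

lemma chain_ne' (hT : IsCondTreeOn (Set.univ : Set α) T)
    {f : ℕ → {J // IsChildOf T J I}} (hmono : ∀ n m, n < m → SetLT (f m).1 (f n).1) :
    ∀ n m, n < m → f n ≠ f m := by
  intro n m h heq
  exact setLT_irrefl (ch_ne hT (f m)) (heq ▸ hmono n m h)

/-- from any of the "infinite" cases of `Pi0HatRel` on the children, get an infinite
ascending or descending chain of children. -/
lemma eta_desc_chain {P' : Set S} {lab : {J // IsChildOf T J I} → S}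
    {D : Set {J // IsChildOf T J I}}
    (hfam : IsEtaFamilyOn (fun J K : {J // IsChildOf T J I} => SetLT J.1 K.1) lab D P') :
    ∃ f : ℕ → {J // IsChildOf T J I}, ∀ n, SetLT (f (n + 1)).1 (f n).1 := by
  obtain ⟨f, hf1, hf2⟩ := seq_of_succ (fun a c : {J // IsChildOf T J I} => SetLT c.1 a.1)
    D hfam.1 (fun x hx => hfam.2.2.2.1 x hx)
  exact ⟨f, hf2⟩

lemma eta_asc_chain {P' : Set S} {lab : {J // IsChildOf T J I} → S}
    {D : Set {J // IsChildOf T J I}}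
    (hfam : IsEtaFamilyOn (fun J K : {J // IsChildOf T J I} => SetLT J.1 K.1) lab D P') :
    ∃ f : ℕ → {J // IsChildOf T J I}, ∀ n, SetLT (f n).1 (f (n + 1)).1 := by
  obtain ⟨f, hf1, hf2⟩ := seq_of_succ (fun a c : {J // IsChildOf T J I} => SetLT a.1 c.1)
    D hfam.1 (fun x hx => hfam.2.2.1 x hx)
  exact ⟨f, hf2⟩

end Dispatch

/-! ### Global case 1 : finite words -/

section Global1

variable [LinearOrder α] [Nonempty α]
variable {mul : S → S → S} {tau taustar : S → S} {kappa : Set S → S}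
variable {u : α → S} {T : Set (Set α)}

lemma join1 [Finite α] (hax : PlusAlgAxioms mul tau taustar kappa) :
    ∀ A B : Set α, A.Nonempty → B.Nonempty → Cvx A → Cvx B → SetLT A B →
      (¬ ∃ z, (∀ x ∈ A, x < z) ∧ (∀ y ∈ B, z < y)) → Cvx (A ∪ B) →
      mul (prodW mul u A) (prodW mul u B) = prodW mul u (A ∪ B) :=
  fun A B hAne hBne _ _ hlt _ _ =>
    (prodW_union hax.1 (Set.toFinite A) (Set.toFinite B) hAne hBne hlt).symm

lemma comp1 [Finite α] (hax : PlusAlgAxioms mul tau taustar kappa)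
    (hT : IsCondTreeOn (Set.univ : Set α) T) :
    ∀ I, I ∈ T → ¬ IsLeafOf T I → ∀ v : S,
      Pi0HatRel mul tau taustar kappa
        (fun J K : {J : Set α // IsChildOf T J I} => SetLT J.1 K.1)
        (fun J : {J : Set α // IsChildOf T J I} => prodW mul u J.1) v →
      v = prodW mul u I := by
  intro I hI hnl v hrel
  have hFin := children_finite_of_finite (I := I) hT
  rcases hrel with ⟨n, g, hmono, hsurj, hv⟩ | ⟨g, hmono, hsurj, b, hb, hv⟩ |
    ⟨g, hmono, hsurj, b, hb, hv⟩ | ⟨P, hP, hcase⟩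
  · rw [hv]
    exact comp_case1 hT hI hnl _ (join1 hax) g hmono hsurj
  · exact (children_nat_inj_absurd hFin (chain_ne hT hmono)).elim
  · exact (children_nat_inj_absurd hFin (chain_ne' hT (fun n m h => hmono n m h))).elim
  · exfalso
    rcases hcase with ⟨hfam, _⟩ | ⟨x₀, hx₀, hfam, _⟩ | ⟨x₁, hx₁, hfam, _⟩ |
      ⟨x₀, x₁, hne01, hx₀, hx₁, hfam, _⟩ <;>
    · obtain ⟨f, hf⟩ := eta_asc_chain hfam
      exact children_nat_inj_absurd hFin (chain_ne hT (setLT_chain hT hf))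

lemma top1 (hax : PlusAlgAxioms mul tau taustar kappa) [Finite α]
    {n : ℕ} (g : Fin (n + 1) → α) (hmono : ∀ i j : Fin (n + 1), i < j → g i < g j)
    (hsurj : ∀ x : α, ∃ i, g i = x) :
    prodW mul u (Set.univ : Set α) =
      List.foldl mul (u (g 0)) (List.ofFn fun i : Fin n => u (g i.succ)) := by
  have hU : (⋃ i, ({g i} : Set α)) = Set.univ := by
    apply Set.eq_univ_of_forall
    intro x
    obtain ⟨i, rfl⟩ := hsurj x
    exact mem_iUnion.2 ⟨i, rfl⟩
  have h := fold_join (prodW mul u) (join1 hax) n (fun i => ({g i} : Set α))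
    (fun i => singleton_nonempty _) (fun i => cvx_singleton _)
    (fun i j hij x hx y hy => by
      rcases hx with rfl; rcases hy with rfl; exact hmono i j hij)
    (by rw [hU]; intro x y z _ _ _ _; trivial)
  rw [hU] at h
  simp only [prodW_singleton] at h
  exact h.symm

end Global1

end EvalPf13
namespace EvalPf13

open Set
open scoped Classical

variable {S α : Type}

/-! ### Global case 2 : ω-words -/

section Global2

variable [LinearOrder α] [Nonempty α]
variable {mul : S → S → S} {tau taustar : S → S} {kappa : Set S → S}
variable {u : α → S} {T : Set (Set α)}

section OmegaOrder

variable {g : ℕ → α} (hg : ∀ m n : ℕ, m < n → g m < g n) (hgs : ∀ x : α, ∃ n, g n = x)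

include hg hgs

lemma g_lt_iff (x y : α) : x < y ↔ (hgs x).choose < (hgs y).choose := by
  have hx := (hgs x).choose_spec
  have hy := (hgs y).choose_spec
  constructor
  · intro h
    rcases lt_trichotomy (hgs x).choose (hgs y).choose with hh | hh | hh
    · exact hh
    · rw [← hx, ← hy, hh] at h
      exact absurd h (lt_irrefl _)
    · have := hg _ _ hh
      rw [hx, hy] at this
      exact absurd (lt_trans h this) (lt_irrefl _)
  · intro h
    have := hg _ _ h
    rwa [hx, hy] at this

lemma no_desc2 (f : ℕ → α) (hf : ∀ n, f (n + 1) < f n) : False :=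
  nat_no_desc (fun n => (hgs (f n)).choose) (fun n => (g_lt_iff hg hgs _ _).1 (hf n))

lemma bounded_fin2 (A : Set α) (bd : α) (hbd : ∀ x ∈ A, x < bd) : A.Finite := by
  have hsub : A ⊆ g '' (Set.Iio ((hgs bd).choose)) := by
    intro x hx
    exact ⟨(hgs x).choose, (g_lt_iff hg hgs x bd).1 (hbd x hx), (hgs x).choose_spec⟩
  exact ((Set.finite_Iio _).image g).subset hsub

lemma g0_min : ∀ x : α, g 0 ≤ x := by
  intro x
  obtain ⟨n, rfl⟩ := hgs x
  rcases Nat.eq_zero_or_pos n with rfl | hn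
  · exact le_refl _
  · exact (hg 0 n hn).le

end OmegaOrder

/-- the value function in the ω case -/
noncomputable def nu2 (mul : S → S → S) (tau : S → S) (u : α → S) (g : ℕ → α) (b : S)
    [Nonempty α] : Set α → S := fun I =>
  if I.Finite then prodW mul u I
  else if g 0 ∈ I then mul (u (g 0)) (tau b) else tau b

lemma nu2_sing (mul : S → S → S) (tau : S → S) (u : α → S) (g : ℕ → α) (b : S) (x : α) :
    nu2 mul tau u g b ({x} : Set α) = u x := by
  simp only [nu2]
  rw [if_pos (finite_singleton x), prodW_singleton]

section Nu2

variable (hax : PlusAlgAxioms mul tau taustar kappa)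
variable {g : ℕ → α} (hg : ∀ m n : ℕ, m < n → g m < g n) (hgs : ∀ x : α, ∃ n, g n = x)
variable {b : S} (hb : ∀ x : α, x ≠ g 0 → u x = b)

include hax hg hgs hb

lemma prodW_absorb2 {A : Set α} (hAf : A.Finite) (hAne : A.Nonempty) :
    mul (prodW mul u A) (tau b) =
      if g 0 ∈ A then mul (u (g 0)) (tau b) else tau b := by
  by_cases h0 : g 0 ∈ A
  · rw [if_pos h0]
    by_cases hA1 : A = {g 0}
    · rw [hA1, prodW_singleton]
    · set A' : Set α := A \ {g 0} with hA'
      have hA'ne : A'.Nonempty := by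
        by_contra hcon
        rw [Set.not_nonempty_iff_eq_empty] at hcon
        apply hA1
        apply Set.Subset.antisymm
        · intro x hx
          by_contra hxx
          have hmem : x ∈ A' := ⟨hx, hxx⟩
          rw [hcon] at hmem
          exact hmem
        · intro x hx
          rcases hx with rfl
          exact h0
      have hsplit : A = {g 0} ∪ A' := by
        apply Set.Subset.antisymm
        · intro x hx
          by_cases hxx : x = g 0
          · exact Or.inl hxx
          · exact Or.inr ⟨hx, hxx⟩
        · rintro x (rfl | hx)
          · exact h0
          · exact hx.1
      have hlt : SetLT ({g 0} : Set α) A' := by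
        rintro x rfl y hy
        exact lt_of_le_of_ne (g0_min hg hgs y) (Ne.symm hy.2)
      have hA'f : A'.Finite := hAf.subset (Set.diff_subset)
      obtain ⟨k, hk⟩ := prodW_allb (u := u) hax.1 hA'f hA'ne
        (fun x hx => hb x hx.2)
      rw [hsplit, prodW_union hax.1 (finite_singleton _) hA'f (singleton_nonempty _)
        hA'ne hlt, prodW_singleton, hk, hax.1, sPow_tau hax b k]
  · rw [if_neg h0]
    obtain ⟨k, hk⟩ := prodW_allb (u := u) hax.1 hAf hAne
      (fun x hx => hb x (fun hxx => h0 (hxx ▸ hx)))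
    rw [hk, sPow_tau hax b k]

lemma join2 :
    ∀ A B : Set α, A.Nonempty → B.Nonempty → Cvx A → Cvx B → SetLT A B →
      (¬ ∃ z, (∀ x ∈ A, x < z) ∧ (∀ y ∈ B, z < y)) → Cvx (A ∪ B) →
      mul (nu2 mul tau u g b A) (nu2 mul tau u g b B) = nu2 mul tau u g b (A ∪ B) := by
  intro A B hAne hBne _ _ hlt _ _
  obtain ⟨y0, hy0⟩ := id hBne
  have hAf : A.Finite := bounded_fin2 hg hgs A y0 (fun x hx => hlt x hx y0 hy0)
  have h0B : g 0 ∉ B := by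
    intro hmem
    obtain ⟨x, hx⟩ := hAne
    exact absurd (hlt x hx _ hmem) (not_lt.2 (g0_min hg hgs x))
  simp only [nu2]
  by_cases hBf : B.Finite
  · rw [if_pos hAf, if_pos hBf, if_pos (hAf.union hBf)]
    exact (prodW_union hax.1 hAf hBf hAne hBne hlt).symm
  · have hABinf : ¬ (A ∪ B).Finite := fun h => hBf (h.subset subset_union_right)
    rw [if_pos hAf, if_neg hBf, if_neg h0B, if_neg hABinf]
    rw [prodW_absorb2 hax hg hgs hb hAf hAne]
    by_cases h0A : g 0 ∈ A
    · rw [if_pos h0A, if_pos (Set.mem_union_left B h0A)]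
    · have hnotu : g 0 ∉ A ∪ B := by
        rintro (h | h)
        · exact h0A h
        · exact h0B h
      rw [if_neg h0A, if_neg hnotu]

lemma comp2 (hT : IsCondTreeOn (Set.univ : Set α) T) :
    ∀ I, I ∈ T → ¬ IsLeafOf T I → ∀ v : S,
      Pi0HatRel mul tau taustar kappa
        (fun J K : {J : Set α // IsChildOf T J I} => SetLT J.1 K.1)
        (fun J : {J : Set α // IsChildOf T J I} => nu2 mul tau u g b J.1) v →
      v = nu2 mul tau u g b I := by
  intro I hI hnl v hrel
  have hdesc : ∀ f : ℕ → {J : Set α // IsChildOf T J I},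
      (∀ n, SetLT (f (n + 1)).1 (f n).1) → False := by
    intro f hf
    classical
    have hpt : ∀ n, ∃ x, x ∈ (f n).1 := fun n => ch_ne hT (f n)
    choose pt hpt using hpt
    exact no_desc2 hg hgs pt (fun n => hf n (pt (n + 1)) (hpt (n + 1)) (pt n) (hpt n))
  rcases hrel with ⟨n, gc, hmono, hsurj, hv⟩ | ⟨gc, hmono, hsurj, b', hb', hv⟩ |
    ⟨gc, hmono, hsurj, b', hb', hv⟩ | ⟨P, hP, hcase⟩
  · rw [hv]
    exact comp_case1 hT hI hnl _ (join2 hax hg hgs hb) gc hmono hsurj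
  · -- ω-many children
    classical
    have hCfin : ∀ n, (gc n).1.Finite := by
      intro n
      obtain ⟨y, hy⟩ := ch_ne hT (gc (n + 1))
      exact bounded_fin2 hg hgs _ y
        (fun x hx => hmono n (n + 1) (Nat.lt_succ_self n) x hx y hy)
    have hpt : ∀ n, ∃ x, x ∈ (gc n).1 := fun n => ch_ne hT (gc n)
    choose pt hpt using hpt
    have hIinf : ¬ I.Finite := by
      intro hfin
      have hinj : Function.Injective pt := by
        intro m n h
        rcases lt_trichotomy m n with hh | hh | hh
        · exact absurd (h ▸ hmono m n hh (pt m) (hpt m) (pt n) (hpt n)) (lt_irrefl _)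
        · exact hh
        · exact absurd (h ▸ hmono n m hh (pt n) (hpt n) (pt m) (hpt m)) (lt_irrefl _)
      exact Set.infinite_of_injective_forall_mem hinj
        (fun n => ch_sub (gc n) (hpt n)) hfin
    have h0C : ∀ n, 0 < n → g 0 ∉ (gc n).1 := by
      intro n hn hmem
      exact absurd (hmono 0 n hn (pt 0) (hpt 0) _ hmem)
        (not_lt.2 (g0_min hg hgs (pt 0)))
    have htb : tau b' = tau b := by
      have h1 : nu2 mul tau u g b (gc 1).1 = b' := hb' 1 Nat.one_pos
      simp only [nu2] at h1
      rw [if_pos (hCfin 1)] at h1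
      obtain ⟨k, hk⟩ := prodW_allb (u := u) hax.1 (hCfin 1) (ch_ne hT (gc 1))
        (fun x hx => hb x (fun hxx => h0C 1 Nat.one_pos (hxx ▸ hx)))
      rw [hk] at h1
      rw [← h1, hax.2.2.1 b k]
    have h0I : g 0 ∈ I → g 0 ∈ (gc 0).1 := by
      intro hmem
      obtain ⟨C, hC⟩ := ch_cover hT hI hnl _ hmem
      obtain ⟨m, rfl⟩ := hsurj C
      rcases Nat.eq_zero_or_pos m with rfl | hm
      · exact hC
      · exact absurd hC (h0C m hm)
    rw [hv, htb]
    simp only [nu2]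
    rw [if_pos (hCfin 0), prodW_absorb2 hax hg hgs hb (hCfin 0) (ch_ne hT (gc 0)),
      if_neg hIinf]
    by_cases h00 : g 0 ∈ (gc 0).1
    · rw [if_pos h00, if_pos (ch_sub (gc 0) h00)]
    · rw [if_neg h00, if_neg (fun h => h00 (h0I h))]
  · exact (hdesc gc (fun n => hmono n (n + 1) (Nat.lt_succ_self n))).elim
  · exfalso
    rcases hcase with ⟨hfam, _⟩ | ⟨x₀, hx₀, hfam, _⟩ | ⟨x₁, hx₁, hfam, _⟩ |
      ⟨x₀, x₁, hne01, hx₀, hx₁, hfam, _⟩ <;>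
    · obtain ⟨f, hf⟩ := eta_desc_chain hfam
      exact hdesc f hf

end Nu2

end Global2

end EvalPf13
namespace EvalPf13

open Set
open scoped Classical

variable {S α : Type}

/-! ### Global case 3 : ω*-words -/

section Global3

variable [LinearOrder α] [Nonempty α]
variable {mul : S → S → S} {tau taustar : S → S} {kappa : Set S → S}
variable {u : α → S} {T : Set (Set α)}

section OmegaStarOrder

variable {g : ℕ → α} (hg : ∀ m n : ℕ, m < n → g n < g m) (hgs : ∀ x : α, ∃ n, g n = x)

include hg hgs

lemma g_lt_iff3 (x y : α) : x < y ↔ (hgs y).choose < (hgs x).choose := by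
  have hx := (hgs x).choose_spec
  have hy := (hgs y).choose_spec
  constructor
  · intro h
    rcases lt_trichotomy (hgs y).choose (hgs x).choose with hh | hh | hh
    · exact hh
    · rw [← hx, ← hy, hh] at h
      exact absurd h (lt_irrefl _)
    · have := hg _ _ hh
      rw [hx, hy] at this
      exact absurd (lt_trans h this) (lt_irrefl _)
  · intro h
    have := hg _ _ h
    rwa [hx, hy] at this

lemma no_asc3 (f : ℕ → α) (hf : ∀ n, f n < f (n + 1)) : False :=
  nat_no_desc (fun n => (hgs (f n)).choose) (fun n => (g_lt_iff3 hg hgs _ _).1 (hf n))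

lemma bounded_fin3 (A : Set α) (bd : α) (hbd : ∀ x ∈ A, bd < x) : A.Finite := by
  have hsub : A ⊆ g '' (Set.Iio ((hgs bd).choose)) := by
    intro x hx
    exact ⟨(hgs x).choose, (g_lt_iff3 hg hgs bd x).1 (hbd x hx), (hgs x).choose_spec⟩
  exact ((Set.finite_Iio _).image g).subset hsub

lemma g0_max : ∀ x : α, x ≤ g 0 := by
  intro x
  obtain ⟨n, rfl⟩ := hgs x
  rcases Nat.eq_zero_or_pos n with rfl | hn
  · exact le_refl _
  · exact (hg 0 n hn).le

end OmegaStarOrder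

/-- the value function in the ω* case -/
noncomputable def nu3 (mul : S → S → S) (taustar : S → S) (u : α → S) (g : ℕ → α)
    (b : S) [Nonempty α] : Set α → S := fun I =>
  if I.Finite then prodW mul u I
  else if g 0 ∈ I then mul (taustar b) (u (g 0)) else taustar b

lemma nu3_sing (mul : S → S → S) (taustar : S → S) (u : α → S) (g : ℕ → α) (b : S)
    (x : α) : nu3 mul taustar u g b ({x} : Set α) = u x := by
  simp only [nu3]
  rw [if_pos (finite_singleton x), prodW_singleton]

section Nu3

variable (hax : PlusAlgAxioms mul tau taustar kappa)
variable {g : ℕ → α} (hg : ∀ m n : ℕ, m < n → g n < g m) (hgs : ∀ x : α, ∃ n, g n = x)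
variable {b : S} (hb : ∀ x : α, x ≠ g 0 → u x = b)

include hax hg hgs hb

lemma prodW_absorb3 {A : Set α} (hAf : A.Finite) (hAne : A.Nonempty) :
    mul (taustar b) (prodW mul u A) =
      if g 0 ∈ A then mul (taustar b) (u (g 0)) else taustar b := by
  by_cases h0 : g 0 ∈ A
  · rw [if_pos h0]
    by_cases hA1 : A = {g 0}
    · rw [hA1, prodW_singleton]
    · set A' : Set α := A \ {g 0} with hA'
      have hA'ne : A'.Nonempty := by
        by_contra hcon
        rw [Set.not_nonempty_iff_eq_empty] at hcon
        apply hA1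
        apply Set.Subset.antisymm
        · intro x hx
          by_contra hxx
          have hmem : x ∈ A' := ⟨hx, hxx⟩
          rw [hcon] at hmem
          exact hmem
        · intro x hx
          rcases hx with rfl
          exact h0
      have hsplit : A = A' ∪ {g 0} := by
        apply Set.Subset.antisymm
        · intro x hx
          by_cases hxx : x = g 0
          · exact Or.inr hxx
          · exact Or.inl ⟨hx, hxx⟩
        · rintro x (hx | rfl)
          · exact hx.1
          · exact h0
      have hlt : SetLT A' ({g 0} : Set α) := by
        rintro x hx y rfl
        exact lt_of_le_of_ne (g0_max hg hgs x) hx.2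
      have hA'f : A'.Finite := hAf.subset (Set.diff_subset)
      obtain ⟨k, hk⟩ := prodW_allb (u := u) hax.1 hA'f hA'ne
        (fun x hx => hb x hx.2)
      rw [hsplit, prodW_union hax.1 hA'f (finite_singleton _) hA'ne
        (singleton_nonempty _) hlt, prodW_singleton, hk, ← hax.1,
        ts_sPow hax b k]
  · rw [if_neg h0]
    obtain ⟨k, hk⟩ := prodW_allb (u := u) hax.1 hAf hAne
      (fun x hx => hb x (fun hxx => h0 (hxx ▸ hx)))
    rw [hk, ts_sPow hax b k]

lemma join3 :
    ∀ A B : Set α, A.Nonempty → B.Nonempty → Cvx A → Cvx B → SetLT A B →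
      (¬ ∃ z, (∀ x ∈ A, x < z) ∧ (∀ y ∈ B, z < y)) → Cvx (A ∪ B) →
      mul (nu3 mul taustar u g b A) (nu3 mul taustar u g b B) =
        nu3 mul taustar u g b (A ∪ B) := by
  intro A B hAne hBne _ _ hlt _ _
  obtain ⟨x0, hx0⟩ := id hAne
  have hBf : B.Finite := bounded_fin3 hg hgs B x0 (fun y hy => hlt x0 hx0 y hy)
  have h0A : g 0 ∉ A := by
    intro hmem
    obtain ⟨y, hy⟩ := hBne
    exact absurd (hlt _ hmem y hy) (not_lt.2 (g0_max hg hgs y))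
  simp only [nu3]
  by_cases hAf : A.Finite
  · rw [if_pos hAf, if_pos hBf, if_pos (hAf.union hBf)]
    exact (prodW_union hax.1 hAf hBf hAne hBne hlt).symm
  · have hABinf : ¬ (A ∪ B).Finite := fun h => hAf (h.subset subset_union_left)
    rw [if_neg hAf, if_neg h0A, if_pos hBf, if_neg hABinf]
    rw [prodW_absorb3 hax hg hgs hb hBf hBne]
    by_cases h0B : g 0 ∈ B
    · rw [if_pos h0B, if_pos (Set.mem_union_right A h0B)]
    · have hnotu : g 0 ∉ A ∪ B := by
        rintro (h | h)
        · exact h0A h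
        · exact h0B h
      rw [if_neg h0B, if_neg hnotu]

lemma comp3 (hT : IsCondTreeOn (Set.univ : Set α) T) :
    ∀ I, I ∈ T → ¬ IsLeafOf T I → ∀ v : S,
      Pi0HatRel mul tau taustar kappa
        (fun J K : {J : Set α // IsChildOf T J I} => SetLT J.1 K.1)
        (fun J : {J : Set α // IsChildOf T J I} => nu3 mul taustar u g b J.1) v →
      v = nu3 mul taustar u g b I := by
  intro I hI hnl v hrel
  have hasc : ∀ f : ℕ → {J : Set α // IsChildOf T J I},
      (∀ n, SetLT (f n).1 (f (n + 1)).1) → False := by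
    intro f hf
    classical
    have hpt : ∀ n, ∃ x, x ∈ (f n).1 := fun n => ch_ne hT (f n)
    choose pt hpt using hpt
    exact no_asc3 hg hgs pt (fun n => hf n (pt n) (hpt n) (pt (n + 1)) (hpt (n + 1)))
  rcases hrel with ⟨n, gc, hmono, hsurj, hv⟩ | ⟨gc, hmono, hsurj, b', hb', hv⟩ |
    ⟨gc, hmono, hsurj, b', hb', hv⟩ | ⟨P, hP, hcase⟩
  · rw [hv]
    exact comp_case1 hT hI hnl _ (join3 hax hg hgs hb) gc hmono hsurj
  · exact (hasc gc (fun n => hmono n (n + 1) (Nat.lt_succ_self n))).elim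
  · -- ω*-many children
    classical
    have hCfin : ∀ n, (gc n).1.Finite := by
      intro n
      obtain ⟨y, hy⟩ := ch_ne hT (gc (n + 1))
      exact bounded_fin3 hg hgs _ y
        (fun x hx => hmono n (n + 1) (Nat.lt_succ_self n) y hy x hx)
    have hpt : ∀ n, ∃ x, x ∈ (gc n).1 := fun n => ch_ne hT (gc n)
    choose pt hpt using hpt
    have hIinf : ¬ I.Finite := by
      intro hfin
      have hinj : Function.Injective pt := by
        intro m n h
        rcases lt_trichotomy m n with hh | hh | hh
        · exact absurd (h ▸ hmono m n hh (pt n) (hpt n) (pt m) (hpt m)) (lt_irrefl _)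
        · exact hh
        · exact absurd (h ▸ hmono n m hh (pt m) (hpt m) (pt n) (hpt n)) (lt_irrefl _)
      exact Set.infinite_of_injective_forall_mem hinj
        (fun n => ch_sub (gc n) (hpt n)) hfin
    have h0C : ∀ n, 0 < n → g 0 ∉ (gc n).1 := by
      intro n hn hmem
      exact absurd (hmono 0 n hn _ hmem (pt 0) (hpt 0))
        (not_lt.2 (g0_max hg hgs (pt 0)))
    have htb : taustar b' = taustar b := by
      have h1 : nu3 mul taustar u g b (gc 1).1 = b' := hb' 1 Nat.one_pos
      simp only [nu3] at h1
      rw [if_pos (hCfin 1)] at h1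
      obtain ⟨k, hk⟩ := prodW_allb (u := u) hax.1 (hCfin 1) (ch_ne hT (gc 1))
        (fun x hx => hb x (fun hxx => h0C 1 Nat.one_pos (hxx ▸ hx)))
      rw [hk] at h1
      rw [← h1, hax.2.2.2.2.1 b k]
    have h0I : g 0 ∈ I → g 0 ∈ (gc 0).1 := by
      intro hmem
      obtain ⟨C, hC⟩ := ch_cover hT hI hnl _ hmem
      obtain ⟨m, rfl⟩ := hsurj C
      rcases Nat.eq_zero_or_pos m with rfl | hm
      · exact hC
      · exact absurd hC (h0C m hm)
    rw [hv, htb]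
    simp only [nu3]
    rw [if_pos (hCfin 0), prodW_absorb3 hax hg hgs hb (hCfin 0) (ch_ne hT (gc 0)),
      if_neg hIinf]
    by_cases h00 : g 0 ∈ (gc 0).1
    · rw [if_pos h00, if_pos (ch_sub (gc 0) h00)]
    · rw [if_neg h00, if_neg (fun h => h00 (h0I h))]
  · exfalso
    rcases hcase with ⟨hfam, _⟩ | ⟨x₀, hx₀, hfam, _⟩ | ⟨x₁, hx₁, hfam, _⟩ |
      ⟨x₀, x₁, hne01, hx₀, hx₁, hfam, _⟩ <;>
    · obtain ⟨f, hf⟩ := eta_asc_chain hfam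
      exact hasc f hf

end Nu3

end Global3

end EvalPf13
namespace EvalPf13

open Set
open scoped Classical

variable {S α : Type}

/-! ### Global case 4 : shuffles -/

section Global4

variable [LinearOrder α] [Nonempty α]

/-- value function in the shuffle case -/
noncomputable def nu4 (mul : S → S → S) (kappa : Set S → S) (u : α → S) (P : Set S) :
    Set α → S := fun I =>
  if h : ∃ x : α, I = {x} then u h.choose
  else
    if hgr : ∃ M, IsGreatest I M then
      mul (if hl : ∃ m, IsLeast I m then mul (u hl.choose) (kappa P) else kappa P)
        (u hgr.choose)
    else
      if hl : ∃ m, IsLeast I m then mul (u hl.choose) (kappa P) else kappa P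

section Nu4Char

variable (mul : S → S → S) (kappa : Set S → S) (u : α → S) (P : Set S)

lemma nu4_sing (x : α) : nu4 mul kappa u P ({x} : Set α) = u x := by
  have h : ∃ y : α, ({x} : Set α) = {y} := ⟨x, rfl⟩
  simp only [nu4]
  rw [dif_pos h]
  have hh := h.choose_spec
  rw [Set.singleton_eq_singleton_iff] at hh
  rw [← hh]

variable {I : Set α}

lemma nu4_LG (hns : ¬ ∃ x : α, I = {x}) {m M : α} (hm : IsLeast I m)
    (hM : IsGreatest I M) :
    nu4 mul kappa u P I = mul (mul (u m) (kappa P)) (u M) := by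
  have hg' : ∃ M', IsGreatest I M' := ⟨M, hM⟩
  have hl' : ∃ m', IsLeast I m' := ⟨m, hm⟩
  simp only [nu4]
  rw [dif_neg hns, dif_pos hg', dif_pos hl',
    hl'.choose_spec.unique hm, hg'.choose_spec.unique hM]

lemma nu4_L (hns : ¬ ∃ x : α, I = {x}) {m : α} (hm : IsLeast I m)
    (hng : ¬ ∃ M, IsGreatest I M) :
    nu4 mul kappa u P I = mul (u m) (kappa P) := by
  have hl' : ∃ m', IsLeast I m' := ⟨m, hm⟩
  simp only [nu4]
  rw [dif_neg hns, dif_neg hng, dif_pos hl', hl'.choose_spec.unique hm]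

lemma nu4_G (hns : ¬ ∃ x : α, I = {x}) (hnl : ¬ ∃ m, IsLeast I m) {M : α}
    (hM : IsGreatest I M) :
    nu4 mul kappa u P I = mul (kappa P) (u M) := by
  have hg' : ∃ M', IsGreatest I M' := ⟨M, hM⟩
  simp only [nu4]
  rw [dif_neg hns, dif_pos hg', dif_neg hnl, hg'.choose_spec.unique hM]

lemma nu4_none (hns : ¬ ∃ x : α, I = {x}) (hnl : ¬ ∃ m, IsLeast I m)
    (hng : ¬ ∃ M, IsGreatest I M) : nu4 mul kappa u P I = kappa P := by
  simp only [nu4]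
  rw [dif_neg hns, dif_neg hng, dif_neg hnl]

end Nu4Char

/-! basic order facts -/

lemma two_elts {I : Set α} (hne : I.Nonempty) (hns : ¬ ∃ x : α, I = {x}) :
    ∃ p ∈ I, ∃ q ∈ I, p < q := by
  obtain ⟨p, hp⟩ := hne
  have h : ¬ ∀ y ∈ I, y = p := fun hall =>
    hns ⟨p, Set.eq_singleton_iff_unique_mem.2 ⟨hp, hall⟩⟩
  push_neg at h
  obtain ⟨q, hq, hqp⟩ := h
  rcases lt_or_gt_of_ne hqp with h' | h'
  · exact ⟨q, hq, p, hp, h'⟩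
  · exact ⟨p, hp, q, hq, h'⟩

lemma least_union {A B : Set α} (hlt : SetLT A B) (hA : A.Nonempty) (m : α) :
    IsLeast (A ∪ B) m ↔ IsLeast A m := by
  constructor
  · rintro ⟨hm, hlb⟩
    rcases hm with hm | hm
    · exact ⟨hm, fun y hy => hlb (Or.inl hy)⟩
    · obtain ⟨x, hx⟩ := hA
      exact absurd (hlt x hx m hm) (not_lt.2 (hlb (Or.inl hx)))
  · rintro ⟨hm, hlb⟩
    refine ⟨Or.inl hm, ?_⟩
    rintro y (hy | hy)
    · exact hlb hy
    · exact (hlt m hm y hy).le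

lemma greatest_union {A B : Set α} (hlt : SetLT A B) (hB : B.Nonempty) (M : α) :
    IsGreatest (A ∪ B) M ↔ IsGreatest B M := by
  constructor
  · rintro ⟨hM, hub⟩
    rcases hM with hM | hM
    · obtain ⟨y, hy⟩ := hB
      exact absurd (hlt M hM y hy) (not_lt.2 (hub (Or.inr hy)))
    · exact ⟨hM, fun y hy => hub (Or.inr hy)⟩
  · rintro ⟨hM, hub⟩
    refine ⟨Or.inr hM, ?_⟩
    rintro y (hy | hy)
    · exact (hlt y hy M hM).le
    · exact hub hy

lemma union_not_sing {A B : Set α} (hA : A.Nonempty) (hB : B.Nonempty) (hlt : SetLT A B) :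
    ¬ ∃ x : α, A ∪ B = {x} := by
  rintro ⟨x, hx⟩
  obtain ⟨a, ha⟩ := hA
  obtain ⟨b, hb⟩ := hB
  have h1 : a ∈ ({x} : Set α) := hx ▸ Or.inl ha
  have h2 : b ∈ ({x} : Set α) := hx ▸ Or.inr hb
  rcases h1 with rfl
  rcases h2 with h2
  rw [Set.mem_singleton_iff] at h2
  exact absurd (h2 ▸ hlt a ha b hb) (lt_irrefl _)

section Nu4Struct

variable {mul : S → S → S} {tau taustar : S → S} {kappa : Set S → S} {u : α → S}
variable {P : Set S} (hP : P.Nonempty) {D : Set α}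
variable (hfam : IsEtaFamilyOn (fun x y : α => x < y) u D P)
variable (hout : ∀ x, x ∉ D → (∀ y, y ≠ x → x < y) ∨ (∀ y, y ≠ x → y < x))

include hfam

lemma mem_D_letter {x : α} (hx : x ∈ D) : u x ∈ P := hfam.2.2.2.2.1 x hx

include hP hout

lemma dense4 : ∀ p q : α, p < q → ∃ z, p < z ∧ z < q := by
  intro p q hpq
  by_cases hpD : p ∈ D
  · by_cases hqD : q ∈ D
    · obtain ⟨z, hz, h1, h2, _⟩ := hfam.2.2.2.2.2.1 hP.choose hP.choose_spec p hpD q hqD hpq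
      exact ⟨z, h1, h2⟩
    · rcases hout q hqD with h | h
      · exact absurd (h p (fun he => (he ▸ hpq).false) ) (not_lt.2 hpq.le)
      · obtain ⟨z, hzD, hz⟩ := hfam.2.2.1 p hpD
        exact ⟨z, hz, h z (fun he => hqD (he ▸ hzD))⟩
  · rcases hout p hpD with h | h
    · by_cases hqD : q ∈ D
      · obtain ⟨z, hzD, hz⟩ := hfam.2.2.2.1 q hqD
        exact ⟨z, h z (fun he => hpD (he ▸ hzD)), hz⟩
      · rcases hout q hqD with h' | h'
        · exact absurd (h' p (fun he => (he ▸ hpq).false)) (not_lt.2 hpq.le)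
        · obtain ⟨z, hzD⟩ := hfam.1
          exact ⟨z, h z (fun he => hpD (he ▸ hzD)), h' z (fun he => hqD (he ▸ hzD))⟩
    · exact absurd (h q (fun he => (he ▸ hpq).false)) (not_lt.2 hpq.le)

lemma boundary_D {x : α} (hx1 : ∃ y, y < x) (hx2 : ∃ y, x < y) : x ∈ D := by
  by_contra h
  rcases hout x h with h' | h'
  · obtain ⟨y, hy⟩ := hx1
    exact absurd (h' y (fun he => (he ▸ hy).false)) (not_lt.2 hy.le)
  · obtain ⟨y, hy⟩ := hx2
    exact absurd (h' y (fun he => (he ▸ hy).false)) (not_lt.2 hy.le)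

lemma adj_not_both {A B : Set α} {M l : α} (hlt : SetLT A B)
    (hadj : ¬ ∃ z, (∀ x ∈ A, x < z) ∧ (∀ y ∈ B, z < y))
    (hM : IsGreatest A M) (hl : IsLeast B l) : False := by
  obtain ⟨z, hz1, hz2⟩ := dense4 hP hfam hout M l (hlt M hM.1 l hl.1)
  exact hadj ⟨z, fun x hx => lt_of_le_of_lt (hM.2 hx) hz1,
    fun y hy => lt_of_lt_of_le hz2 (hl.2 hy)⟩

lemma least_letter {C : Set α} {m : α} (hm : IsLeast C m) (hne : C.Nonempty)
    (hns : ¬ ∃ x : α, C = {x}) (hbelow : ∃ y, y < m) : u m ∈ P := by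
  obtain ⟨p, hp, q, hq, hpq⟩ := two_elts hne hns
  exact mem_D_letter hfam (boundary_D hP hfam hout hbelow
    ⟨q, lt_of_le_of_lt (hm.2 hp) hpq⟩)

lemma greatest_letter {C : Set α} {M : α} (hM : IsGreatest C M) (hne : C.Nonempty)
    (hns : ¬ ∃ x : α, C = {x}) (habove : ∃ y, M < y) : u M ∈ P := by
  obtain ⟨p, hp, q, hq, hpq⟩ := two_elts hne hns
  exact mem_D_letter hfam (boundary_D hP hfam hout
    ⟨p, lt_of_lt_of_le hpq (hM.2 hq)⟩ habove)

end Nu4Struct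

end Global4

end EvalPf13
namespace EvalPf13

open Set
open scoped Classical

variable {S α : Type}

section Join4

variable [LinearOrder α] [Nonempty α]
variable {mul : S → S → S} {tau taustar : S → S} {kappa : Set S → S} {u : α → S}
variable {P : Set S} {D : Set α}

lemma join4 (hax : PlusAlgAxioms mul tau taustar kappa) (hP : P.Nonempty)
    (hfam : IsEtaFamilyOn (fun x y : α => x < y) u D P)
    (hout : ∀ x, x ∉ D → (∀ y, y ≠ x → x < y) ∨ (∀ y, y ≠ x → y < x)) :
    ∀ A B : Set α, A.Nonempty → B.Nonempty → Cvx A → Cvx B → SetLT A B →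
      (¬ ∃ z, (∀ x ∈ A, x < z) ∧ (∀ y ∈ B, z < y)) → Cvx (A ∪ B) →
      mul (nu4 mul kappa u P A) (nu4 mul kappa u P B) = nu4 mul kappa u P (A ∪ B) := by
  intro A B hAne hBne _ _ hlt hadj _
  have hnsU : ¬ ∃ x : α, A ∪ B = {x} := union_not_sing hAne hBne hlt
  have hLU : ∀ {m}, IsLeast A m → IsLeast (A ∪ B) m :=
    fun {m} hm => (least_union hlt hAne m).2 hm
  have hLUn : (¬ ∃ m, IsLeast A m) → ¬ ∃ m, IsLeast (A ∪ B) m := by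
    rintro h ⟨m, hm⟩
    exact h ⟨m, (least_union hlt hAne m).1 hm⟩
  have hGU : ∀ {M}, IsGreatest B M → IsGreatest (A ∪ B) M :=
    fun {M} hM => (greatest_union hlt hBne M).2 hM
  have hGUn : (¬ ∃ M, IsGreatest B M) → ¬ ∃ M, IsGreatest (A ∪ B) M := by
    rintro h ⟨M, hM⟩
    exact h ⟨M, (greatest_union hlt hBne M).1 hM⟩
  by_cases hsA : ∃ x : α, A = {x}
  · obtain ⟨p, rfl⟩ := hsA
    have hpg : IsGreatest ({p} : Set α) p := ⟨rfl, by rintro y rfl; exact le_refl _⟩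
    have hpl : IsLeast ({p} : Set α) p := ⟨rfl, by rintro y rfl; exact le_refl _⟩
    by_cases hsB : ∃ x : α, B = {x}
    · obtain ⟨q, rfl⟩ := hsB
      have hql : IsLeast ({q} : Set α) q := ⟨rfl, by rintro y rfl; exact le_refl _⟩
      exact (adj_not_both hP hfam hout hlt hadj hpg hql).elim
    · have hBnol : ¬ ∃ l, IsLeast B l := fun hl =>
        adj_not_both hP hfam hout hlt hadj hpg hl.choose_spec
      have hlU : IsLeast ({p} ∪ B) p := hLU hpl
      rw [nu4_sing]
      by_cases hGB : ∃ M, IsGreatest B M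
      · obtain ⟨M, hM⟩ := hGB
        rw [nu4_G mul kappa u P hsB hBnol hM, nu4_LG mul kappa u P hnsU hlU (hGU hM),
          hax.1]
      · rw [nu4_none mul kappa u P hsB hBnol hGB, nu4_L mul kappa u P hnsU hlU
          (hGUn hGB)]
  · by_cases hsB : ∃ x : α, B = {x}
    · obtain ⟨q, rfl⟩ := hsB
      have hql : IsLeast ({q} : Set α) q := ⟨rfl, by rintro y rfl; exact le_refl _⟩
      have hqg : IsGreatest ({q} : Set α) q := ⟨rfl, by rintro y rfl; exact le_refl _⟩
      have hAnog : ¬ ∃ M, IsGreatest A M := fun hM =>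
        adj_not_both hP hfam hout hlt hadj hM.choose_spec hql
      have hgU : IsGreatest (A ∪ {q}) q := hGU hqg
      rw [nu4_sing]
      by_cases hlA : ∃ m, IsLeast A m
      · obtain ⟨m, hm⟩ := hlA
        rw [nu4_L mul kappa u P hsA hm hAnog,
          nu4_LG mul kappa u P hnsU (hLU hm) hgU]
      · rw [nu4_none mul kappa u P hsA hlA hAnog,
          nu4_G mul kappa u P hnsU (hLUn hlA) hgU]
    · -- both non-singleton
      have hexcl : ¬ ((∃ M, IsGreatest A M) ∧ (∃ l, IsLeast B l)) := by
        rintro ⟨⟨M, hM⟩, ⟨l, hl⟩⟩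
        exact adj_not_both hP hfam hout hlt hadj hM hl
      by_cases hGA : ∃ M, IsGreatest A M
      · obtain ⟨MA, hMA⟩ := hGA
        have hlBn : ¬ ∃ l, IsLeast B l := fun hl => hexcl ⟨⟨MA, hMA⟩, hl⟩
        have hMAP : u MA ∈ P := greatest_letter hP hfam hout hMA hAne hsA
          ⟨hBne.choose, hlt _ hMA.1 _ hBne.choose_spec⟩
        by_cases hGB : ∃ M, IsGreatest B M
        · obtain ⟨MB, hMB⟩ := hGB
          rw [nu4_G mul kappa u P hsB hlBn hMB]
          by_cases hlA : ∃ m, IsLeast A m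
          · obtain ⟨m, hm⟩ := hlA
            rw [nu4_LG mul kappa u P hsA hm hMA,
              nu4_LG mul kappa u P hnsU (hLU hm) (hGU hMB)]
            simp only [hax.1]
            rw [algKcK hax P hP hMAP]
          · rw [nu4_G mul kappa u P hsA hlA hMA,
              nu4_G mul kappa u P hnsU (hLUn hlA) (hGU hMB)]
            simp only [hax.1]
            rw [algKcK hax P hP hMAP]
        · rw [nu4_none mul kappa u P hsB hlBn hGB]
          by_cases hlA : ∃ m, IsLeast A m
          · obtain ⟨m, hm⟩ := hlA
            rw [nu4_LG mul kappa u P hsA hm hMA,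
              nu4_L mul kappa u P hnsU (hLU hm) (hGUn hGB)]
            simp only [hax.1]
            rw [k_ck hax P hP hMAP]
          · rw [nu4_G mul kappa u P hsA hlA hMA,
              nu4_none mul kappa u P hnsU (hLUn hlA) (hGUn hGB)]
            simp only [hax.1]
            rw [k_ck hax P hP hMAP]
      · by_cases hlB : ∃ l, IsLeast B l
        · obtain ⟨lB, hlB'⟩ := hlB
          have hlBP : u lB ∈ P := least_letter hP hfam hout hlB' hBne hsB
            ⟨hAne.choose, hlt _ hAne.choose_spec _ hlB'.1⟩
          by_cases hGB : ∃ M, IsGreatest B M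
          · obtain ⟨MB, hMB⟩ := hGB
            rw [nu4_LG mul kappa u P hsB hlB' hMB]
            by_cases hlA : ∃ m, IsLeast A m
            · obtain ⟨m, hm⟩ := hlA
              rw [nu4_L mul kappa u P hsA hm hGA,
                nu4_LG mul kappa u P hnsU (hLU hm) (hGU hMB)]
              simp only [hax.1]
              rw [algKcK hax P hP hlBP]
            · rw [nu4_none mul kappa u P hsA hlA hGA,
                nu4_G mul kappa u P hnsU (hLUn hlA) (hGU hMB)]
              simp only [hax.1]
              rw [algKcK hax P hP hlBP]
          · rw [nu4_L mul kappa u P hsB hlB' hGB]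
            by_cases hlA : ∃ m, IsLeast A m
            · obtain ⟨m, hm⟩ := hlA
              rw [nu4_L mul kappa u P hsA hm hGA,
                nu4_L mul kappa u P hnsU (hLU hm) (hGUn hGB)]
              simp only [hax.1]
              rw [k_ck hax P hP hlBP]
            · rw [nu4_none mul kappa u P hsA hlA hGA,
                nu4_none mul kappa u P hnsU (hLUn hlA) (hGUn hGB)]
              rw [k_ck hax P hP hlBP]
        · by_cases hGB : ∃ M, IsGreatest B M
          · obtain ⟨MB, hMB⟩ := hGB
            rw [nu4_G mul kappa u P hsB hlB hMB]
            by_cases hlA : ∃ m, IsLeast A m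
            · obtain ⟨m, hm⟩ := hlA
              rw [nu4_L mul kappa u P hsA hm hGA,
                nu4_LG mul kappa u P hnsU (hLU hm) (hGU hMB)]
              simp only [hax.1]
              rw [algKK hax P hP]
            · rw [nu4_none mul kappa u P hsA hlA hGA,
                nu4_G mul kappa u P hnsU (hLUn hlA) (hGU hMB)]
              rw [algKK hax P hP]
          · rw [nu4_none mul kappa u P hsB hlB hGB]
            by_cases hlA : ∃ m, IsLeast A m
            · obtain ⟨m, hm⟩ := hlA
              rw [nu4_L mul kappa u P hsA hm hGA,
                nu4_L mul kappa u P hnsU (hLU hm) (hGUn hGB)]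
              simp only [hax.1]
              rw [k_kk hax P hP]
            · rw [nu4_none mul kappa u P hsA hlA hGA,
                nu4_none mul kappa u P hnsU (hLUn hlA) (hGUn hGB)]
              rw [k_kk hax P hP]

end Join4

end EvalPf13
namespace EvalPf13

open Set
open scoped Classical

variable {S α : Type}

section Red4

variable [LinearOrder α] [Nonempty α]
variable {mul : S → S → S} {tau taustar : S → S} {kappa : Set S → S} {u : α → S}
variable {P : Set S} {D : Set α} {T : Set (Set α)} {I : Set α}

lemma not_sing_of_two {I : Set α} {p q : α} (hp : p ∈ I) (hq : q ∈ I) (hpq : p < q) :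
    ¬ ∃ x : α, I = {x} := by
  rintro ⟨x, rfl⟩
  rcases hp with rfl
  rcases hq with hq
  rw [Set.mem_singleton_iff] at hq
  exact absurd (hq ▸ hpq) (lt_irrefl _)

lemma sing_least (x : α) : IsLeast ({x} : Set α) x :=
  ⟨rfl, by rintro y rfl; exact le_refl _⟩

lemma sing_greatest (x : α) : IsGreatest ({x} : Set α) x :=
  ⟨rfl, by rintro y rfl; exact le_refl _⟩

lemma absorbR (hax : PlusAlgAxioms mul tau taustar kappa) (hP : P.Nonempty) {w : S}
    (hw : w = kappa P ∨ ∃ c ∈ P, w = mul c (kappa P)) :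
    (∀ Y, mul (mul Y (kappa P)) w = mul Y (kappa P)) ∧ mul (kappa P) w = kappa P := by
  rcases hw with rfl | ⟨c, hc, rfl⟩
  · exact ⟨fun Y => by rw [hax.1, k_kk hax P hP], k_kk hax P hP⟩
  · exact ⟨fun Y => by rw [hax.1, k_ck hax P hP hc], k_ck hax P hP hc⟩

lemma absorbL (hax : PlusAlgAxioms mul tau taustar kappa) (hP : P.Nonempty) {w : S}
    (hw : w = kappa P ∨ ∃ c ∈ P, w = mul (kappa P) c) :
    (∀ Z, mul w (mul (kappa P) Z) = mul (kappa P) Z) ∧ mul w (kappa P) = kappa P := by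
  rcases hw with rfl | ⟨c, hc, rfl⟩
  · exact ⟨fun Z => algKK hax P hP Z, k_kk hax P hP⟩
  · constructor
    · intro Z
      rw [hax.1, algKcK hax P hP hc]
    · rw [hax.1, k_ck hax P hP hc]

section WithFam

variable (hax : PlusAlgAxioms mul tau taustar kappa) (hP : P.Nonempty)
variable (hfam : IsEtaFamilyOn (fun x y : α => x < y) u D P)
variable (hout : ∀ x, x ∉ D → (∀ y, y ≠ x → x < y) ∨ (∀ y, y ≠ x → y < x))
variable (hT : IsCondTreeOn (Set.univ : Set α) T) (hI : I ∈ T) (hnl : ¬ IsLeafOf T I)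

include hax hP hfam hout hT hI hnl

/-- reduction for a first child `A`: `ν(A)·κP` is `[u m]·κP` according to `I`'s least. -/
lemma redL' (A : {J // IsChildOf T J I})
    (hA : ∀ C : {J // IsChildOf T J I}, C ≠ A → SetLT A.1 C.1)
    (hother : ∃ C : {J // IsChildOf T J I}, C ≠ A) :
    (∃ m, IsLeast I m ∧
        mul (nu4 mul kappa u P A.1) (kappa P) = mul (u m) (kappa P)) ∨
      ((¬ ∃ m, IsLeast I m) ∧ mul (nu4 mul kappa u P A.1) (kappa P) = kappa P) := by
  have hLiff := least_transfer hT hI hnl A hA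
  obtain ⟨Co, hCo⟩ := hother
  obtain ⟨yo, hyo⟩ := ch_ne hT Co
  have habove : ∀ x ∈ A.1, x < yo := fun x hx => hA Co hCo x hx yo hyo
  by_cases hsA : ∃ q : α, A.1 = {q}
  · obtain ⟨q, hq⟩ := hsA
    refine Or.inl ⟨q, (hLiff q).2 (by rw [hq]; exact sing_least q), ?_⟩
    rw [hq, nu4_sing]
  · by_cases hGA : ∃ M, IsGreatest A.1 M
    · obtain ⟨MA, hMA⟩ := hGA
      have hMAP : u MA ∈ P := greatest_letter hP hfam hout hMA (ch_ne hT A) hsA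
        ⟨yo, habove MA hMA.1⟩
      by_cases hlA : ∃ m, IsLeast A.1 m
      · obtain ⟨m, hm⟩ := hlA
        refine Or.inl ⟨m, (hLiff m).2 hm, ?_⟩
        rw [nu4_LG mul kappa u P hsA hm hMA]
        simp only [hax.1]
        rw [k_ck hax P hP hMAP]
      · refine Or.inr ⟨fun ⟨m, hm⟩ => hlA ⟨m, (hLiff m).1 hm⟩, ?_⟩
        rw [nu4_G mul kappa u P hsA hlA hMA, hax.1, k_ck hax P hP hMAP]
    · by_cases hlA : ∃ m, IsLeast A.1 m
      · obtain ⟨m, hm⟩ := hlA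
        refine Or.inl ⟨m, (hLiff m).2 hm, ?_⟩
        rw [nu4_L mul kappa u P hsA hm hGA, hax.1, k_kk hax P hP]
      · refine Or.inr ⟨fun ⟨m, hm⟩ => hlA ⟨m, (hLiff m).1 hm⟩, ?_⟩
        rw [nu4_none mul kappa u P hsA hlA hGA, k_kk hax P hP]

/-- reduction for a last child `B`: `κP·ν(B)` is `κP·[u M]` according to `I`'s greatest. -/
lemma redR' (B : {J // IsChildOf T J I})
    (hB : ∀ C : {J // IsChildOf T J I}, C ≠ B → SetLT C.1 B.1)
    (hother : ∃ C : {J // IsChildOf T J I}, C ≠ B) :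
    (∃ M, IsGreatest I M ∧
        (∀ Y, mul (mul Y (kappa P)) (nu4 mul kappa u P B.1) =
          mul (mul Y (kappa P)) (u M)) ∧
        mul (kappa P) (nu4 mul kappa u P B.1) = mul (kappa P) (u M)) ∨
      ((¬ ∃ M, IsGreatest I M) ∧
        (∀ Y, mul (mul Y (kappa P)) (nu4 mul kappa u P B.1) = mul Y (kappa P)) ∧
        mul (kappa P) (nu4 mul kappa u P B.1) = kappa P) := by
  have hGiff := greatest_transfer hT hI hnl B hB
  obtain ⟨Co, hCo⟩ := hother
  obtain ⟨yo, hyo⟩ := ch_ne hT Co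
  have hbelow : ∀ x ∈ B.1, yo < x := fun x hx => hB Co hCo yo hyo x hx
  by_cases hsB : ∃ q : α, B.1 = {q}
  · obtain ⟨q, hq⟩ := hsB
    refine Or.inl ⟨q, (hGiff q).2 (by rw [hq]; exact sing_greatest q), ?_, ?_⟩
    · intro Y
      rw [hq, nu4_sing]
    · rw [hq, nu4_sing]
  · by_cases hlB : ∃ m, IsLeast B.1 m
    · obtain ⟨lB, hlB'⟩ := hlB
      have hlBP : u lB ∈ P := least_letter hP hfam hout hlB' (ch_ne hT B) hsB
        ⟨yo, hbelow lB hlB'.1⟩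
      by_cases hGB : ∃ M, IsGreatest B.1 M
      · obtain ⟨MB, hMB⟩ := hGB
        refine Or.inl ⟨MB, (hGiff MB).2 hMB, ?_, ?_⟩
        · intro Y
          rw [nu4_LG mul kappa u P hsB hlB' hMB]
          simp only [hax.1]
          rw [algKcK hax P hP hlBP]
        · rw [nu4_LG mul kappa u P hsB hlB' hMB]
          simp only [hax.1]
          rw [algKcK hax P hP hlBP]
      · refine Or.inr ⟨fun ⟨M, hM⟩ => hGB ⟨M, (hGiff M).1 hM⟩, ?_, ?_⟩
        · intro Y
          rw [nu4_L mul kappa u P hsB hlB' hGB]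
          simp only [hax.1]
          rw [k_ck hax P hP hlBP]
        · rw [nu4_L mul kappa u P hsB hlB' hGB, k_ck hax P hP hlBP]
    · by_cases hGB : ∃ M, IsGreatest B.1 M
      · obtain ⟨MB, hMB⟩ := hGB
        refine Or.inl ⟨MB, (hGiff MB).2 hMB, ?_, ?_⟩
        · intro Y
          rw [nu4_G mul kappa u P hsB hlB hMB]
          simp only [hax.1]
          rw [algKK hax P hP]
        · rw [nu4_G mul kappa u P hsB hlB hMB, algKK hax P hP]
      · refine Or.inr ⟨fun ⟨M, hM⟩ => hGB ⟨M, (hGiff M).1 hM⟩, ?_, ?_⟩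
        · intro Y
          rw [nu4_none mul kappa u P hsB hlB hGB, hax.1, k_kk hax P hP]
        · rw [nu4_none mul kappa u P hsB hlB hGB, k_kk hax P hP]

/-- the κ of the set of children values equals κP. -/
lemma shuffle_core {P' : Set S} {D' : Set {J // IsChildOf T J I}}
    (hfam' : IsEtaFamilyOn
      (fun J K : {J : Set α // IsChildOf T J I} => SetLT J.1 K.1)
      (fun J : {J : Set α // IsChildOf T J I} => nu4 mul kappa u P J.1) D' P')
    (hout' : ∀ C : {J // IsChildOf T J I}, C ∉ D' →
      (∀ J, J ≠ C → SetLT C.1 J.1) ∨ (∀ J, J ≠ C → SetLT J.1 C.1)) :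
    kappa P' = kappa P := by
  -- every child in D' has children below and above it within D'
  have hbel : ∀ C ∈ D', ∃ y : α, ∀ x ∈ C.1, y < x := by
    intro C hC
    obtain ⟨C'', hC'', hlt⟩ := hfam'.2.2.2.1 C hC
    obtain ⟨y, hy⟩ := ch_ne hT C''
    exact ⟨y, fun x hx => hlt y hy x hx⟩
  have hab : ∀ C ∈ D', ∃ y : α, ∀ x ∈ C.1, x < y := by
    intro C hC
    obtain ⟨C'', hC'', hlt⟩ := hfam'.2.2.1 C hC
    obtain ⟨y, hy⟩ := ch_ne hT C''
    exact ⟨y, fun x hx => hlt x hx y hy⟩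
  -- each child value is a letter of P or of κP-form
  have hval : ∀ C ∈ D', (¬ ∃ q : α, C.1 = {q}) →
      nu4 mul kappa u P C.1 ∈ Kforms mul kappa P := by
    intro C hC hsC
    obtain ⟨yb, hyb⟩ := hbel C hC
    obtain ⟨ya, hya⟩ := hab C hC
    by_cases hlC : ∃ m, IsLeast C.1 m
    · obtain ⟨m, hm⟩ := hlC
      have hmP : u m ∈ P := least_letter hP hfam hout hm (ch_ne hT C) hsC
        ⟨yb, hyb m hm.1⟩
      by_cases hGC : ∃ M, IsGreatest C.1 M
      · obtain ⟨M, hM⟩ := hGC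
        have hMP : u M ∈ P := greatest_letter hP hfam hout hM (ch_ne hT C) hsC
          ⟨ya, hya M hM.1⟩
        rw [nu4_LG mul kappa u P hsC hm hM]
        exact Or.inr (Or.inr (Or.inr ⟨u m, hmP, u M, hMP, rfl⟩))
      · rw [nu4_L mul kappa u P hsC hm hGC]
        exact Or.inr (Or.inl ⟨u m, hmP, rfl⟩)
    · by_cases hGC : ∃ M, IsGreatest C.1 M
      · obtain ⟨M, hM⟩ := hGC
        have hMP : u M ∈ P := greatest_letter hP hfam hout hM (ch_ne hT C) hsC
          ⟨ya, hya M hM.1⟩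
        rw [nu4_G mul kappa u P hsC hlC hM]
        exact Or.inr (Or.inr (Or.inl ⟨u M, hMP, rfl⟩))
      · rw [nu4_none mul kappa u P hsC hlC hGC]
        exact Or.inl rfl
  have hvalP : ∀ C ∈ D', (∃ q : α, C.1 = {q}) → nu4 mul kappa u P C.1 ∈ P := by
    rintro C hC ⟨q, hq⟩
    obtain ⟨yb, hyb⟩ := hbel C hC
    obtain ⟨ya, hya⟩ := hab C hC
    have hqD : q ∈ D := boundary_D hP hfam hout ⟨yb, hyb q (by rw [hq]; rfl)⟩
      ⟨ya, hya q (by rw [hq]; rfl)⟩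
    rw [hq, nu4_sing]
    exact mem_D_letter hfam hqD
  have hcover : ∀ x ∈ P', x ∈ P ∨ x ∈ Kforms mul kappa P := by
    intro x hx
    obtain ⟨C, hC, hlabC⟩ := hfam'.2.2.2.2.2.2 x hx
    rw [← hlabC]
    by_cases hsC : ∃ q : α, C.1 = {q}
    · exact Or.inl (hvalP C hC hsC)
    · exact Or.inr (hval C hC hsC)
  by_cases hPP : (P' ∩ Kforms mul kappa P).Nonempty
  · have hsplit : P' = (P' ∩ P) ∪ (P' ∩ Kforms mul kappa P) := by
      ext x
      constructor
      · intro hx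
        rcases hcover x hx with h | h
        · exact Or.inl ⟨hx, h⟩
        · exact Or.inr ⟨hx, h⟩
      · rintro (⟨h, _⟩ | ⟨h, _⟩) <;> exact h
    rw [hsplit]
    exact k_ext hax P hP inter_subset_right hPP inter_subset_right
  · -- all children in D' are singletons
    have hallsing : ∀ C ∈ D', ∃ q : α, C.1 = {q} := by
      intro C hC
      by_contra hn
      exact hPP ⟨nu4 mul kappa u P C.1, hfam'.2.2.2.2.1 C hC, hval C hC hn⟩
    have hP'P : P' ⊆ P := by
      intro x hx
      rcases hcover x hx with h | h
      · exact h
      · exact absurd ⟨hx, h⟩ (fun hh => hPP ⟨x, hh⟩)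
    have hPP' : P ⊆ P' := by
      intro a ha
      obtain ⟨C1, hC1⟩ := hfam'.1
      obtain ⟨C2, hC2, hlt21⟩ := hfam'.2.2.2.1 C1 hC1
      obtain ⟨q1, hq1⟩ := hallsing C1 hC1
      obtain ⟨q2, hq2⟩ := hallsing C2 hC2
      have hq2m : q2 ∈ C2.1 := by rw [hq2]; rfl
      have hq1m : q1 ∈ C1.1 := by rw [hq1]; rfl
      have hq21 : q2 < q1 := hlt21 q2 hq2m q1 hq1m
      obtain ⟨y3, hy3⟩ := hbel C2 hC2
      obtain ⟨y0, hy0⟩ := hab C1 hC1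
      have hq2D : q2 ∈ D := boundary_D hP hfam hout ⟨y3, hy3 q2 hq2m⟩ ⟨q1, hq21⟩
      have hq1D : q1 ∈ D := boundary_D hP hfam hout ⟨q2, hq21⟩ ⟨y0, hy0 q1 hq1m⟩
      obtain ⟨z, hzD, hz1, hz2, hzlab⟩ :=
        hfam.2.2.2.2.2.1 a ha q2 hq2D q1 hq1D hq21
      have hzI : z ∈ I := cvx_of_mem hT hI (ch_sub C2 hq2m) (ch_sub C1 hq1m) hz1 hz2
      obtain ⟨Cz, hzCz⟩ := ch_cover hT hI hnl z hzI
      have hCz2 : Cz ≠ C2 := by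
        intro h
        rw [h, hq2] at hzCz
        rw [Set.mem_singleton_iff] at hzCz
        exact absurd (hzCz ▸ hz1) (lt_irrefl _)
      have hCz1 : Cz ≠ C1 := by
        intro h
        rw [h, hq1] at hzCz
        rw [Set.mem_singleton_iff] at hzCz
        exact absurd (hzCz ▸ hz2) (lt_irrefl _)
      have hCzD' : Cz ∈ D' := by
        by_contra hn
        rcases hout' Cz hn with h | h
        · exact absurd (h C2 (Ne.symm hCz2) z hzCz q2 hq2m) (not_lt.2 hz1.le)
        · exact absurd (h C1 (Ne.symm hCz1) q1 hq1m z hzCz) (not_lt.2 hz2.le)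
      obtain ⟨w, hw⟩ := hallsing Cz hCzD'
      have hzw : z = w := by
        rw [hw] at hzCz
        exact hzCz
      have hlab : nu4 mul kappa u P Cz.1 ∈ P' := hfam'.2.2.2.2.1 Cz hCzD'
      rw [hw, nu4_sing] at hlab
      rwa [← hzw, hzlab] at hlab
    rw [Set.Subset.antisymm hP'P hPP']

end WithFam

end Red4

end EvalPf13
namespace EvalPf13

open Set
open scoped Classical

variable {S α : Type}

section Comp4

variable [LinearOrder α] [Nonempty α]
variable {mul : S → S → S} {tau taustar : S → S} {kappa : Set S → S} {u : α → S}
variable {P : Set S} {D : Set α} {T : Set (Set α)}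

lemma comp4 (hax : PlusAlgAxioms mul tau taustar kappa) (hP : P.Nonempty)
    (hfam : IsEtaFamilyOn (fun x y : α => x < y) u D P)
    (hout : ∀ x, x ∉ D → (∀ y, y ≠ x → x < y) ∨ (∀ y, y ≠ x → y < x))
    (hT : IsCondTreeOn (Set.univ : Set α) T) :
    ∀ I, I ∈ T → ¬ IsLeafOf T I → ∀ v : S,
      Pi0HatRel mul tau taustar kappa
        (fun J K : {J : Set α // IsChildOf T J I} => SetLT J.1 K.1)
        (fun J : {J : Set α // IsChildOf T J I} => nu4 mul kappa u P J.1) v →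
      v = nu4 mul kappa u P I := by
  intro I hI hnl v hrel
  rcases hrel with ⟨n, gc, hmono, hsurj, hv⟩ | ⟨gc, hmono, hsurj, b', hb', hv⟩ |
    ⟨gc, hmono, hsurj, b', hb', hv⟩ | ⟨P', hP'ne, hcase⟩
  · rw [hv]
    exact comp_case1 hT hI hnl _ (join4 hax hP hfam hout) gc hmono hsurj
  · -- ω-sequence of children
    have hadj01 := children_adjacent hT hI hnl (gc 0) (gc 1) (omega_mid hT hmono hsurj 0)
    have hadj12 := children_adjacent hT hI hnl (gc 1) (gc 2) (omega_mid hT hmono hsurj 1)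
    have hfirst := omega_first hmono hsurj
    have hInog : ¬ ∃ M, IsGreatest I M :=
      no_greatest_of_nomax hT hI hnl (omega_nomax hmono hsurj)
    obtain ⟨p0, hp0⟩ := ch_ne hT (gc 0)
    obtain ⟨p1, hp1⟩ := ch_ne hT (gc 1)
    have hnsI : ¬ ∃ x : α, I = {x} := not_sing_of_two (ch_sub _ hp0) (ch_sub _ hp1)
      (hmono 0 1 Nat.one_pos p0 hp0 p1 hp1)
    have hne10 : gc 1 ≠ gc 0 := by
      intro h
      have h2 := hmono 0 1 Nat.one_pos
      rw [h] at h2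
      exact setLT_irrefl (ch_ne hT (gc 0)) h2
    have hb1 : nu4 mul kappa u P (gc 1).1 = b' := hb' 1 Nat.one_pos
    have hb2 : nu4 mul kappa u P (gc 2).1 = b' := hb' 2 (by omega)
    by_cases hG0 : ∃ M, IsGreatest (gc 0).1 M
    · have hnl1 : ¬ ∃ m, IsLeast (gc 1).1 m := fun ⟨l, hl⟩ =>
        adj_not_both hP hfam hout (hmono 0 1 Nat.one_pos) hadj01 hG0.choose_spec hl
      have hns1 : ¬ ∃ q : α, (gc 1).1 = {q} := fun ⟨q, hq⟩ =>
        hnl1 ⟨q, by rw [hq]; exact sing_least q⟩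
      have hwκ : tau b' = kappa P := by
        by_cases hG1 : ∃ M, IsGreatest (gc 1).1 M
        · obtain ⟨M1, hM1⟩ := hG1
          obtain ⟨p2, hp2⟩ := ch_ne hT (gc 2)
          have hM1P : u M1 ∈ P := greatest_letter hP hfam hout hM1 (ch_ne hT (gc 1))
            hns1 ⟨p2, hmono 1 2 (by omega) M1 hM1.1 p2 hp2⟩
          rw [← hb1, nu4_G mul kappa u P hns1 hnl1 hM1, k_tauc hax P hP hM1P]
        · rw [← hb1, nu4_none mul kappa u P hns1 hnl1 hG1, k_tau hax P hP]
      rw [hv, hwκ]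
      rcases redL' hax hP hfam hout hT hI hnl (gc 0) hfirst ⟨gc 1, hne10⟩ with
        ⟨m, hmI, heq⟩ | ⟨hnoI, heq⟩
      · rw [heq, nu4_L mul kappa u P hnsI hmI hInog]
      · rw [heq, nu4_none mul kappa u P hnsI hnoI hInog]
    · have hns0 : ¬ ∃ q : α, (gc 0).1 = {q} := fun ⟨q, hq⟩ =>
        hG0 ⟨q, by rw [hq]; exact sing_greatest q⟩
      have hw : tau b' = kappa P ∨ ∃ c ∈ P, tau b' = mul c (kappa P) := by
        by_cases hG1 : ∃ M, IsGreatest (gc 1).1 M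
        · have hnl2 : ¬ ∃ m, IsLeast (gc 2).1 m := fun ⟨l, hl⟩ =>
            adj_not_both hP hfam hout (hmono 1 2 (by omega)) hadj12
              hG1.choose_spec hl
          have hns2 : ¬ ∃ q : α, (gc 2).1 = {q} := fun ⟨q, hq⟩ =>
            hnl2 ⟨q, by rw [hq]; exact sing_least q⟩
          left
          by_cases hG2 : ∃ M, IsGreatest (gc 2).1 M
          · obtain ⟨M2, hM2⟩ := hG2
            obtain ⟨p3, hp3⟩ := ch_ne hT (gc 3)
            have hM2P : u M2 ∈ P := greatest_letter hP hfam hout hM2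
              (ch_ne hT (gc 2)) hns2 ⟨p3, hmono 2 3 (by omega) M2 hM2.1 p3 hp3⟩
            rw [← hb2, nu4_G mul kappa u P hns2 hnl2 hM2, k_tauc hax P hP hM2P]
          · rw [← hb2, nu4_none mul kappa u P hns2 hnl2 hG2, k_tau hax P hP]
        · have hns1 : ¬ ∃ q : α, (gc 1).1 = {q} := fun ⟨q, hq⟩ =>
            hG1 ⟨q, by rw [hq]; exact sing_greatest q⟩
          by_cases hl1 : ∃ m, IsLeast (gc 1).1 m
          · obtain ⟨l1, hl1'⟩ := hl1
            have hl1P : u l1 ∈ P := least_letter hP hfam hout hl1' (ch_ne hT (gc 1))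
              hns1 ⟨p0, hmono 0 1 Nat.one_pos p0 hp0 l1 hl1'.1⟩
            exact Or.inr ⟨u l1, hl1P, by
              rw [← hb1, nu4_L mul kappa u P hns1 hl1' hG1, tau_cK hax P hP hl1P]⟩
          · left
            rw [← hb1, nu4_none mul kappa u P hns1 hl1 hG1, k_tau hax P hP]
      have habs := absorbR hax hP hw
      rw [hv]
      show mul (nu4 mul kappa u P (gc 0).1) (tau b') = nu4 mul kappa u P I
      by_cases hl0 : ∃ m, IsLeast (gc 0).1 m
      · obtain ⟨m, hm⟩ := hl0
        rw [nu4_L mul kappa u P hns0 hm hG0, habs.1 (u m),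
          nu4_L mul kappa u P hnsI
            ((least_transfer hT hI hnl (gc 0) hfirst m).2 hm) hInog]
      · rw [nu4_none mul kappa u P hns0 hl0 hG0, habs.2,
          nu4_none mul kappa u P hnsI
            (fun ⟨m, hm⟩ => hl0 ⟨m, (least_transfer hT hI hnl (gc 0) hfirst m).1 hm⟩)
            hInog]
  · -- ω*-sequence of children
    have hadj01 := children_adjacent hT hI hnl (gc 1) (gc 0)
      (omegaStar_mid hT hmono hsurj 0)
    have hadj12 := children_adjacent hT hI hnl (gc 2) (gc 1)
      (omegaStar_mid hT hmono hsurj 1)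
    have hlast := omegaStar_first hmono hsurj
    have hInol : ¬ ∃ m, IsLeast I m :=
      no_least_of_nomin hT hI hnl (omegaStar_nomin hmono hsurj)
    obtain ⟨p0, hp0⟩ := ch_ne hT (gc 0)
    obtain ⟨p1, hp1⟩ := ch_ne hT (gc 1)
    have hnsI : ¬ ∃ x : α, I = {x} := not_sing_of_two (ch_sub _ hp1) (ch_sub _ hp0)
      (hmono 0 1 Nat.one_pos p1 hp1 p0 hp0)
    have hne10 : gc 1 ≠ gc 0 := by
      intro h
      have h2 := hmono 0 1 Nat.one_pos
      rw [h] at h2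
      exact setLT_irrefl (ch_ne hT (gc 0)) h2
    have hb1 : nu4 mul kappa u P (gc 1).1 = b' := hb' 1 Nat.one_pos
    have hb2 : nu4 mul kappa u P (gc 2).1 = b' := hb' 2 (by omega)
    by_cases hl0 : ∃ m, IsLeast (gc 0).1 m
    · have hng1 : ¬ ∃ M, IsGreatest (gc 1).1 M := fun ⟨M, hM⟩ =>
        adj_not_both hP hfam hout (hmono 0 1 Nat.one_pos) hadj01 hM hl0.choose_spec
      have hns1 : ¬ ∃ q : α, (gc 1).1 = {q} := fun ⟨q, hq⟩ =>
        hng1 ⟨q, by rw [hq]; exact sing_greatest q⟩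
      have hwκ : taustar b' = kappa P := by
        by_cases hl1 : ∃ m, IsLeast (gc 1).1 m
        · obtain ⟨l1, hl1'⟩ := hl1
          obtain ⟨p2, hp2⟩ := ch_ne hT (gc 2)
          have hl1P : u l1 ∈ P := least_letter hP hfam hout hl1' (ch_ne hT (gc 1))
            hns1 ⟨p2, hmono 1 2 (by omega) p2 hp2 l1 hl1'.1⟩
          rw [← hb1, nu4_L mul kappa u P hns1 hl1' hng1, k_tsc hax P hP hl1P]
        · rw [← hb1, nu4_none mul kappa u P hns1 hl1 hng1, k_ts hax P hP]
      rw [hv, hwκ]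
      rcases redR' hax hP hfam hout hT hI hnl (gc 0) hlast ⟨gc 1, hne10⟩ with
        ⟨M, hMI, _, heq⟩ | ⟨hnoI, _, heq⟩
      · rw [heq, nu4_G mul kappa u P hnsI hInol hMI]
      · rw [heq, nu4_none mul kappa u P hnsI hInol hnoI]
    · have hns0 : ¬ ∃ q : α, (gc 0).1 = {q} := fun ⟨q, hq⟩ =>
        hl0 ⟨q, by rw [hq]; exact sing_least q⟩
      have hw : taustar b' = kappa P ∨ ∃ c ∈ P, taustar b' = mul (kappa P) c := by
        by_cases hl1 : ∃ m, IsLeast (gc 1).1 m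
        · have hng2 : ¬ ∃ M, IsGreatest (gc 2).1 M := fun ⟨M, hM⟩ =>
            adj_not_both hP hfam hout (hmono 1 2 (by omega)) hadj12 hM
              hl1.choose_spec
          have hns2 : ¬ ∃ q : α, (gc 2).1 = {q} := fun ⟨q, hq⟩ =>
            hng2 ⟨q, by rw [hq]; exact sing_greatest q⟩
          left
          by_cases hl2 : ∃ m, IsLeast (gc 2).1 m
          · obtain ⟨l2, hl2'⟩ := hl2
            obtain ⟨p3, hp3⟩ := ch_ne hT (gc 3)
            have hl2P : u l2 ∈ P := least_letter hP hfam hout hl2' (ch_ne hT (gc 2))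
              hns2 ⟨p3, hmono 2 3 (by omega) p3 hp3 l2 hl2'.1⟩
            rw [← hb2, nu4_L mul kappa u P hns2 hl2' hng2, k_tsc hax P hP hl2P]
          · rw [← hb2, nu4_none mul kappa u P hns2 hl2 hng2, k_ts hax P hP]
        · have hns1 : ¬ ∃ q : α, (gc 1).1 = {q} := fun ⟨q, hq⟩ =>
            hl1 ⟨q, by rw [hq]; exact sing_least q⟩
          by_cases hG1 : ∃ M, IsGreatest (gc 1).1 M
          · obtain ⟨M1, hM1⟩ := hG1
            have hM1P : u M1 ∈ P := greatest_letter hP hfam hout hM1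
              (ch_ne hT (gc 1)) hns1 ⟨p0, hmono 0 1 Nat.one_pos M1 hM1.1 p0 hp0⟩
            exact Or.inr ⟨u M1, hM1P, by
              rw [← hb1, nu4_G mul kappa u P hns1 hl1 hM1, ts_Kc hax P hP hM1P]⟩
          · left
            rw [← hb1, nu4_none mul kappa u P hns1 hl1 hG1, k_ts hax P hP]
      have habs := absorbL hax hP hw
      rw [hv]
      show mul (taustar b') (nu4 mul kappa u P (gc 0).1) = nu4 mul kappa u P I
      by_cases hG0 : ∃ M, IsGreatest (gc 0).1 M
      · obtain ⟨M, hM⟩ := hG0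
        rw [nu4_G mul kappa u P hns0 hl0 hM, habs.1 (u M),
          nu4_G mul kappa u P hnsI hInol
            ((greatest_transfer hT hI hnl (gc 0) hlast M).2 hM)]
      · rw [nu4_none mul kappa u P hns0 hl0 hG0, habs.2,
          nu4_none mul kappa u P hnsI hInol
            (fun ⟨M, hM⟩ => hG0 ⟨M, (greatest_transfer hT hI hnl (gc 0) hlast M).1 hM⟩)]
  · -- shuffle of children
    rcases hcase with ⟨hfam', hveq⟩ | ⟨A, hA, hfam', hveq⟩ | ⟨B, hB, hfam', hveq⟩ |
      ⟨A, B, hAB, hA, hB, hfam', hveq⟩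
    · -- no end children
      have hout' : ∀ C : {J // IsChildOf T J I}, C ∉ (Set.univ : Set _) →
          (∀ J, J ≠ C → SetLT C.1 J.1) ∨ (∀ J, J ≠ C → SetLT J.1 C.1) :=
        fun C hC => absurd (Set.mem_univ C) hC
      have hKP := shuffle_core hax hP hfam hout hT hI hnl hfam' hout'
      have hInol : ¬ ∃ m, IsLeast I m := no_least_of_nomin hT hI hnl (fun C => by
        obtain ⟨C', _, hlt⟩ := hfam'.2.2.2.1 C (Set.mem_univ C)
        exact ⟨C', hlt⟩)
      have hInog : ¬ ∃ M, IsGreatest I M := no_greatest_of_nomax hT hI hnl (fun C => by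
        obtain ⟨C', _, hlt⟩ := hfam'.2.2.1 C (Set.mem_univ C)
        exact ⟨C', hlt⟩)
      obtain ⟨C1, _⟩ := hfam'.1
      obtain ⟨C2, _, hlt21⟩ := hfam'.2.2.2.1 C1 (Set.mem_univ C1)
      obtain ⟨q1, hq1⟩ := ch_ne hT C1
      obtain ⟨q2, hq2⟩ := ch_ne hT C2
      have hnsI : ¬ ∃ x : α, I = {x} := not_sing_of_two (ch_sub _ hq2) (ch_sub _ hq1)
        (hlt21 q2 hq2 q1 hq1)
      rw [hveq, hKP, nu4_none mul kappa u P hnsI hInol hInog]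
    · -- left end child A
      have hout' : ∀ C : {J // IsChildOf T J I}, C ∉ {y | y ≠ A} →
          (∀ J, J ≠ C → SetLT C.1 J.1) ∨ (∀ J, J ≠ C → SetLT J.1 C.1) := by
        intro C hC
        have hCA : C = A := of_not_not hC
        subst hCA
        exact Or.inl (fun J hJ => hA J hJ)
      have hKP := shuffle_core hax hP hfam hout hT hI hnl hfam' hout'
      obtain ⟨C1, hC1D⟩ := hfam'.1
      have hInog : ¬ ∃ M, IsGreatest I M := no_greatest_of_nomax hT hI hnl (fun C => by
        by_cases hCA : C = A
        · subst hCA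
          exact ⟨C1, hA C1 hC1D⟩
        · obtain ⟨C', _, hlt⟩ := hfam'.2.2.1 C hCA
          exact ⟨C', hlt⟩)
      obtain ⟨pA, hpA⟩ := ch_ne hT A
      obtain ⟨q1, hq1⟩ := ch_ne hT C1
      have hnsI : ¬ ∃ x : α, I = {x} := not_sing_of_two (ch_sub _ hpA) (ch_sub _ hq1)
        (hA C1 hC1D pA hpA q1 hq1)
      rw [hveq, hKP]
      rcases redL' hax hP hfam hout hT hI hnl A hA ⟨C1, hC1D⟩ with
        ⟨m, hmI, heq⟩ | ⟨hnoI, heq⟩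
      · rw [heq, nu4_L mul kappa u P hnsI hmI hInog]
      · rw [heq, nu4_none mul kappa u P hnsI hnoI hInog]
    · -- right end child B
      have hout' : ∀ C : {J // IsChildOf T J I}, C ∉ {y | y ≠ B} →
          (∀ J, J ≠ C → SetLT C.1 J.1) ∨ (∀ J, J ≠ C → SetLT J.1 C.1) := by
        intro C hC
        have hCB : C = B := of_not_not hC
        subst hCB
        exact Or.inr (fun J hJ => hB J hJ)
      have hKP := shuffle_core hax hP hfam hout hT hI hnl hfam' hout'
      obtain ⟨C1, hC1D⟩ := hfam'.1
      have hInol : ¬ ∃ m, IsLeast I m := no_least_of_nomin hT hI hnl (fun C => by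
        by_cases hCB : C = B
        · subst hCB
          exact ⟨C1, hB C1 hC1D⟩
        · obtain ⟨C', _, hlt⟩ := hfam'.2.2.2.1 C hCB
          exact ⟨C', hlt⟩)
      obtain ⟨pB, hpB⟩ := ch_ne hT B
      obtain ⟨q1, hq1⟩ := ch_ne hT C1
      have hnsI : ¬ ∃ x : α, I = {x} := not_sing_of_two (ch_sub _ hq1) (ch_sub _ hpB)
        (hB C1 hC1D q1 hq1 pB hpB)
      rw [hveq, hKP]
      rcases redR' hax hP hfam hout hT hI hnl B hB ⟨C1, hC1D⟩ with
        ⟨M, hMI, _, heq⟩ | ⟨hnoI, _, heq⟩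
      · rw [heq, nu4_G mul kappa u P hnsI hInol hMI]
      · rw [heq, nu4_none mul kappa u P hnsI hInol hnoI]
    · -- both end children
      have hout' : ∀ C : {J // IsChildOf T J I}, C ∉ {y | y ≠ A ∧ y ≠ B} →
          (∀ J, J ≠ C → SetLT C.1 J.1) ∨ (∀ J, J ≠ C → SetLT J.1 C.1) := by
        intro C hC
        by_cases hCA : C = A
        · subst hCA
          exact Or.inl (fun J hJ => hA J hJ)
        · have hCB : C = B := of_not_not (fun h => hC ⟨hCA, h⟩)
          subst hCB
          exact Or.inr (fun J hJ => hB J hJ)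
      have hKP := shuffle_core hax hP hfam hout hT hI hnl hfam' hout'
      obtain ⟨pA, hpA⟩ := ch_ne hT A
      obtain ⟨pB, hpB⟩ := ch_ne hT B
      have hnsI : ¬ ∃ x : α, I = {x} := not_sing_of_two (ch_sub _ hpA) (ch_sub _ hpB)
        (hA B (Ne.symm hAB) pA hpA pB hpB)
      rw [hveq, hKP]
      rcases redL' hax hP hfam hout hT hI hnl A hA ⟨B, Ne.symm hAB⟩ with
        ⟨m, hmI, heqL⟩ | ⟨hnoI, heqL⟩ <;>
      rcases redR' hax hP hfam hout hT hI hnl B hB ⟨A, hAB⟩ with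
        ⟨M, hMI, heqRY, heqRκ⟩ | ⟨hnoM, heqRY, heqRκ⟩
      · rw [heqL, heqRY (u m), nu4_LG mul kappa u P hnsI hmI hMI]
      · rw [heqL, heqRY (u m), nu4_L mul kappa u P hnsI hmI hnoM]
      · rw [heqL, heqRκ, nu4_G mul kappa u P hnsI hnoI hMI]
      · rw [heqL, heqRκ, nu4_none mul kappa u P hnsI hnoI hnoM]

end Comp4

end EvalPf13
/-- let `(S, ·, τ, τ*, κ)` be a finite ⊕-algebra and let `u` be a
nonempty countable word over `S` such that `π₀^(u)` is defined (with value
`a`).  Then every evaluation tree `(T, γ)` with respect to `π₀^` over `u`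
satisfies `γ(α) = π₀^(u)`. -/
theorem evaluation_tree_value_eq_pi0hat {S α : Type} [Finite S] [LinearOrder α]
    [Countable α] [Nonempty α] (mul : S → S → S) (tau taustar : S → S)
    (kappa : Set S → S) (hax : PlusAlgAxioms mul tau taustar kappa)
    (u : α → S) (a : S)
    (ha : Pi0HatRel mul tau taustar kappa (fun x y : α => x < y) u a)
    (T : Set (Set α)) (γ : Set α → S)
    (h : IsEvalTreeHat mul tau taustar kappa u Set.univ T γ) :
    γ Set.univ = a := by
  classical
  open EvalPf13 in
  have hT := h.tree
  rcases ha with ⟨n, g, hmono, hsurj, hva⟩ | ⟨g, hmono, hsurj, b, hb, hva⟩ |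
    ⟨g, hmono, hsurj, b, hb, hva⟩ | ⟨P, hPne, hcase⟩
  · -- finite word
    haveI hfinα : Finite α := Finite.of_surjective g (fun x => hsurj x)
    have key := eval_eq h (prodW mul u) (fun x => prodW_singleton mul u x)
      (comp1 hax hT)
    rw [key _ hT.root_mem, top1 hax g hmono hsurj]
    exact hva.symm
  · -- ω-word
    have hb' : ∀ x : α, x ≠ g 0 → u x = b := by
      intro x hx
      obtain ⟨m, rfl⟩ := hsurj x
      have hm : m ≠ 0 := fun hh => hx (by rw [hh])
      exact hb m (Nat.pos_of_ne_zero hm)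
    have key := eval_eq h (nu2 mul tau u g b) (nu2_sing mul tau u g b)
      (comp2 hax hmono hsurj hb' hT)
    rw [key _ hT.root_mem]
    have hinj : Function.Injective g := by
      intro m n hmn
      by_contra hne
      rcases lt_trichotomy m n with hlt | hlt | hlt
      · exact absurd (hmn ▸ hmono m n hlt) (lt_irrefl _)
      · exact hne hlt
      · exact absurd (hmn ▸ hmono n m hlt) (lt_irrefl _)
    haveI : Infinite α := Infinite.of_injective g hinj
    have huniv : ¬ (Set.univ : Set α).Finite := Set.infinite_univ
    simp only [nu2]
    rw [if_neg huniv, if_pos (Set.mem_univ (g 0))]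
    exact hva.symm
  · -- ω*-word
    have hb' : ∀ x : α, x ≠ g 0 → u x = b := by
      intro x hx
      obtain ⟨m, rfl⟩ := hsurj x
      have hm : m ≠ 0 := fun hh => hx (by rw [hh])
      exact hb m (Nat.pos_of_ne_zero hm)
    have key := eval_eq h (nu3 mul taustar u g b) (nu3_sing mul taustar u g b)
      (comp3 hax hmono hsurj hb' hT)
    rw [key _ hT.root_mem]
    have hinj : Function.Injective g := by
      intro m n hmn
      by_contra hne
      rcases lt_trichotomy m n with hlt | hlt | hlt
      · exact absurd (hmn ▸ hmono m n hlt) (lt_irrefl _)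
      · exact hne hlt
      · exact absurd (hmn ▸ hmono n m hlt) (lt_irrefl _)
    haveI : Infinite α := Infinite.of_injective g hinj
    have huniv : ¬ (Set.univ : Set α).Finite := Set.infinite_univ
    simp only [nu3]
    rw [if_neg huniv, if_pos (Set.mem_univ (g 0))]
    exact hva.symm
  · -- shuffle
    rcases hcase with ⟨hfamU, hva⟩ | ⟨x₀, hx₀, hfam0, hva⟩ | ⟨x₁, hx₁, hfam1, hva⟩ |
      ⟨x₀, x₁, hne01, hx₀, hx₁, hfamB, hva⟩
    · -- no endpoints
      have hout : ∀ x : α, x ∉ (Set.univ : Set α) →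
          (∀ y, y ≠ x → x < y) ∨ (∀ y, y ≠ x → y < x) :=
        fun x hx => absurd (Set.mem_univ x) hx
      have key := eval_eq h (nu4 mul kappa u P) (nu4_sing mul kappa u P)
        (comp4 hax hPne hfamU hout hT)
      rw [key _ hT.root_mem]
      have hnol : ¬ ∃ m, IsLeast (Set.univ : Set α) m := by
        rintro ⟨m, hm⟩
        obtain ⟨y, _, hy⟩ := hfamU.2.2.2.1 m (Set.mem_univ m)
        exact absurd hy (not_lt.2 (hm.2 (Set.mem_univ y)))
      have hnog : ¬ ∃ M, IsGreatest (Set.univ : Set α) M := by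
        rintro ⟨M, hM⟩
        obtain ⟨y, _, hy⟩ := hfamU.2.2.1 M (Set.mem_univ M)
        exact absurd hy (not_lt.2 (hM.2 (Set.mem_univ y)))
      have hns : ¬ ∃ x : α, (Set.univ : Set α) = {x} := by
        obtain ⟨x, _⟩ := hfamU.1
        obtain ⟨y, _, hxy⟩ := hfamU.2.2.1 x (Set.mem_univ x)
        exact not_sing_of_two (Set.mem_univ x) (Set.mem_univ y) hxy
      rw [nu4_none mul kappa u P hns hnol hnog]
      exact hva.symm
    · -- left endpoint x₀
      have hout : ∀ x : α, x ∉ {y : α | y ≠ x₀} →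
          (∀ y, y ≠ x → x < y) ∨ (∀ y, y ≠ x → y < x) := by
        intro x hx
        have hxx : x = x₀ := of_not_not hx
        subst hxx
        exact Or.inl hx₀
      have key := eval_eq h (nu4 mul kappa u P) (nu4_sing mul kappa u P)
        (comp4 hax hPne hfam0 hout hT)
      rw [key _ hT.root_mem]
      have hleast : IsLeast (Set.univ : Set α) x₀ := by
        refine ⟨Set.mem_univ x₀, fun y _ => ?_⟩
        rcases eq_or_ne y x₀ with rfl | hne
        · exact le_refl _
        · exact (hx₀ y hne).le
      have hnog : ¬ ∃ M, IsGreatest (Set.univ : Set α) M := by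
        rintro ⟨M, hM⟩
        rcases eq_or_ne M x₀ with rfl | hne
        · obtain ⟨y, hy⟩ := hfam0.1
          exact absurd (hx₀ y hy) (not_lt.2 (hM.2 (Set.mem_univ y)))
        · obtain ⟨z, _, hz⟩ := hfam0.2.2.1 M hne
          exact absurd hz (not_lt.2 (hM.2 (Set.mem_univ z)))
      have hns : ¬ ∃ x : α, (Set.univ : Set α) = {x} := by
        obtain ⟨y, hy⟩ := hfam0.1
        exact not_sing_of_two (Set.mem_univ x₀) (Set.mem_univ y) (hx₀ y hy)
      rw [nu4_L mul kappa u P hns hleast hnog]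
      exact hva.symm
    · -- right endpoint x₁
      have hout : ∀ x : α, x ∉ {y : α | y ≠ x₁} →
          (∀ y, y ≠ x → x < y) ∨ (∀ y, y ≠ x → y < x) := by
        intro x hx
        have hxx : x = x₁ := of_not_not hx
        subst hxx
        exact Or.inr hx₁
      have key := eval_eq h (nu4 mul kappa u P) (nu4_sing mul kappa u P)
        (comp4 hax hPne hfam1 hout hT)
      rw [key _ hT.root_mem]
      have hgreat : IsGreatest (Set.univ : Set α) x₁ := by
        refine ⟨Set.mem_univ x₁, fun y _ => ?_⟩
        rcases eq_or_ne y x₁ with rfl | hne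
        · exact le_refl _
        · exact (hx₁ y hne).le
      have hnol : ¬ ∃ m, IsLeast (Set.univ : Set α) m := by
        rintro ⟨m, hm⟩
        rcases eq_or_ne m x₁ with rfl | hne
        · obtain ⟨y, hy⟩ := hfam1.1
          exact absurd (hx₁ y hy) (not_lt.2 (hm.2 (Set.mem_univ y)))
        · obtain ⟨z, _, hz⟩ := hfam1.2.2.2.1 m hne
          exact absurd hz (not_lt.2 (hm.2 (Set.mem_univ z)))
      have hns : ¬ ∃ x : α, (Set.univ : Set α) = {x} := by
        obtain ⟨y, hy⟩ := hfam1.1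
        exact not_sing_of_two (Set.mem_univ y) (Set.mem_univ x₁) (hx₁ y hy)
      rw [nu4_G mul kappa u P hns hnol hgreat]
      exact hva.symm
    · -- both endpoints
      have hout : ∀ x : α, x ∉ {y : α | y ≠ x₀ ∧ y ≠ x₁} →
          (∀ y, y ≠ x → x < y) ∨ (∀ y, y ≠ x → y < x) := by
        intro x hx
        by_cases hxx : x = x₀
        · subst hxx
          exact Or.inl hx₀
        · have hxx1 : x = x₁ := of_not_not (fun hh => hx ⟨hxx, hh⟩)
          subst hxx1
          exact Or.inr hx₁
      have key := eval_eq h (nu4 mul kappa u P) (nu4_sing mul kappa u P)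
        (comp4 hax hPne hfamB hout hT)
      rw [key _ hT.root_mem]
      have hleast : IsLeast (Set.univ : Set α) x₀ := by
        refine ⟨Set.mem_univ x₀, fun y _ => ?_⟩
        rcases eq_or_ne y x₀ with rfl | hne
        · exact le_refl _
        · exact (hx₀ y hne).le
      have hgreat : IsGreatest (Set.univ : Set α) x₁ := by
        refine ⟨Set.mem_univ x₁, fun y _ => ?_⟩
        rcases eq_or_ne y x₁ with rfl | hne
        · exact le_refl _
        · exact (hx₁ y hne).le
      have hns : ¬ ∃ x : α, (Set.univ : Set α) = {x} :=
        not_sing_of_two (Set.mem_univ x₀) (Set.mem_univ x₁) (hx₀ x₁ (Ne.symm hne01))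
      rw [nu4_LG mul kappa u P hns hleast hgreat]
      exact hva.symm
end
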